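/- arXiv:1209.4991 — 8 statements merged into one kernel-verified Lean document; each statement's English description precedes it below -/
import Mathlib

section
/- Let P be a permutation of a finite type whose cycle decomposition consists of m ≥ 1 nontrivial disjoint cycles with n > 2 total entries (support cardinality n), exactly r of which are transpositions. Then there exists a list of pairwise distinct transpositions, none of which belongs to the set of cycle factors of P, of length n − m + r + ε_r whose product equals P, where ε_r = 0 if r is even and ε_r = 1 if r is odd. -/
open Equiv Equiv.Perm Finset

set_option linter.unusedSectionVars false

lemma swap_ne_of_moves {α : Type*} [DecidableEq α] {a b c d : α}
    (hab : a ≠ b) (hac : a ≠ c) (had : a ≠ d) :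
    swap a b ≠ swap c d := by
  intro h
  have h2 : swap a b a = swap c d a := by rw [h]
  rw [swap_apply_left, swap_apply_of_ne_of_ne hac had] at h2
  exact hab h2.symm

set_option maxHeartbeats 1000000 in
lemma g7 {α : Type*} [DecidableEq α] (a b c d e f : α)
    (hab : a ≠ b) (hac : a ≠ c) (had : a ≠ d) (hae : a ≠ e) (haf : a ≠ f)
    (hbc : b ≠ c) (hbd : b ≠ d) (hbe : b ≠ e) (hbf : b ≠ f)
    (hcd : c ≠ d) (hce : c ≠ e) (hcf : c ≠ f) (hde : d ≠ e) (hdf : d ≠ f) (hef : e ≠ f) :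
    ([swap a c, swap b e, swap b d, swap a d, swap a f, swap a e, swap b c] :
        List (Equiv.Perm α)).prod = swap a b * (swap c d * swap e f) ∧
    ([swap a c, swap b e, swap b d, swap a d, swap a f, swap a e, swap b c] :
        List (Equiv.Perm α)).Nodup := by
  constructor
  · simp only [List.prod_cons, List.prod_nil, mul_one, ← mul_assoc]
    ext x
    simp only [Perm.mul_apply]
    by_cases h1 : x = a <;> by_cases h2 : x = b <;> by_cases h3 : x = c <;>
      by_cases h4 : x = d <;> by_cases h5 : x = e <;> by_cases h6 : x = f <;>
      simp_all [swap_apply_of_ne_of_ne, swap_apply_left, swap_apply_right, Ne.symm]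
  · simp only [List.nodup_cons, List.mem_cons, List.not_mem_nil, or_false, not_or,
      List.nodup_nil, and_true]
    refine ⟨⟨?_,?_,?_,?_,?_,?_⟩,⟨?_,?_,?_,?_,?_⟩,⟨?_,?_,?_,?_⟩,⟨?_,?_,?_⟩,⟨?_,?_⟩,?_,not_false⟩
    · exact swap_ne_of_moves hac hab hae
    · exact swap_ne_of_moves hac hab had
    · rw [swap_comm a c]; exact swap_ne_of_moves hac.symm hac.symm hcd
    · rw [swap_comm a c]; exact swap_ne_of_moves hac.symm hac.symm hcf
    · rw [swap_comm a c]; exact swap_ne_of_moves hac.symm hac.symm hce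
    · exact swap_ne_of_moves hac hab hac
    · rw [swap_comm b e]; exact swap_ne_of_moves hbe.symm hbe.symm hde.symm
    · exact swap_ne_of_moves hbe hab.symm hbd
    · exact swap_ne_of_moves hbe hab.symm hbf
    · exact swap_ne_of_moves hbe hab.symm hbe
    · rw [swap_comm b e]; exact swap_ne_of_moves hbe.symm hbe.symm hce.symm
    · exact swap_ne_of_moves hbd hab.symm hbd
    · exact swap_ne_of_moves hbd hab.symm hbf
    · exact swap_ne_of_moves hbd hab.symm hbe
    · rw [swap_comm b d]; exact swap_ne_of_moves hbd.symm hbd.symm hcd.symm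
    · rw [swap_comm a d]; exact swap_ne_of_moves had.symm had.symm hdf
    · rw [swap_comm a d]; exact swap_ne_of_moves had.symm had.symm hde
    · exact swap_ne_of_moves had hab hac
    · rw [swap_comm a f]; exact swap_ne_of_moves haf.symm haf.symm hef.symm
    · exact swap_ne_of_moves haf hab hac
    · exact swap_ne_of_moves hae hab hac

section

variable {α : Type*} [Fintype α] [DecidableEq α]

lemma mem_foldr_support {L : List (Equiv.Perm α)} {x : α} :
    x ∈ L.foldr (fun σ s => σ.support ∪ s) ∅ ↔ ∃ σ ∈ L, x ∈ σ.support := by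
  induction L with
  | nil => simp
  | cons h t ih => simp [ih]

lemma g4 (a b c d : α) (hab : a ≠ b) (hcd : c ≠ d) (hac : a ≠ c) (had : a ≠ d)
    (hbc : b ≠ c) (hbd : b ≠ d) :
    ([swap a c, swap b d, swap a d, swap b c] : List (Equiv.Perm α)).prod
      = swap a b * swap c d := by
  simp only [List.prod_cons, List.prod_nil, mul_one, ← mul_assoc]
  ext x
  simp only [Perm.mul_apply]
  by_cases h1 : x = a <;> by_cases h2 : x = b <;> by_cases h3 : x = c <;> by_cases h4 : x = d <;>
    simp_all [swap_apply_of_ne_of_ne, swap_apply_left, swap_apply_right, Ne.symm]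

lemma g4_nodup (a b c d : α) (hab : a ≠ b) (hcd : c ≠ d) (hac : a ≠ c) (had : a ≠ d)
    (hbc : b ≠ c) (hbd : b ≠ d) :
    ([swap a c, swap b d, swap a d, swap b c] : List (Equiv.Perm α)).Nodup := by
  simp only [List.nodup_cons, List.mem_cons, List.not_mem_nil, or_false, not_or,
    List.nodup_nil, and_true]
  refine ⟨⟨?_, ?_, ?_⟩, ⟨?_, ?_⟩, ?_, not_false⟩
  · exact swap_ne_of_moves hac hab had
  · rw [swap_comm a c]; exact swap_ne_of_moves hac.symm hac.symm hcd
  · exact swap_ne_of_moves hac hab hac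
  · exact swap_ne_of_moves hbd hab.symm hbd
  · rw [swap_comm b d]; exact swap_ne_of_moves hbd.symm hbd.symm hcd.symm
  · exact swap_ne_of_moves had hab hac

lemma cycle_edge_list : ∀ (k : ℕ) (c : Equiv.Perm α), c.IsCycle → c.support.card = k →
    ∃ (x y : α) (l : List (Equiv.Perm α)),
      x ∈ c.support ∧ y ∈ c.support ∧ x ≠ y ∧
      (∀ τ ∈ swap x y :: l, τ.IsSwap) ∧
      (∀ τ ∈ swap x y :: l, τ.support ⊆ c.support) ∧
      (swap x y :: l).Nodup ∧
      (swap x y :: l).prod = c ∧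
      (swap x y :: l).length + 1 = c.support.card := by
  intro k
  induction k using Nat.strong_induction_on with
  | _ k ih =>
    intro c hc hk
    obtain ⟨x, hx, -⟩ := id hc
    have hxs : x ∈ c.support := mem_support.2 hx
    have hcxs : c x ∈ c.support := by
      rw [mem_support]; exact fun h => hx (c.injective h)
    by_cases h2 : c (c x) = x
    · have hcs : c = swap x (c x) := hc.eq_swap_of_apply_apply_eq_self hx h2
      have hcsupp : c.support = {x, c x} := by
        conv_lhs => rw [hcs]
        exact support_swap (Ne.symm hx)
      refine ⟨x, c x, [], hxs, hcxs, Ne.symm hx, ?_, ?_, ?_, ?_, ?_⟩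
      · rintro τ hτ; simp only [List.mem_singleton] at hτ; subst hτ
        exact ⟨x, c x, Ne.symm hx, rfl⟩
      · rintro τ hτ; simp only [List.mem_singleton] at hτ; subst hτ
        rw [support_swap (Ne.symm hx), hcsupp]
      · simp
      · rw [List.prod_singleton]; exact hcs.symm
      · rw [hcsupp, card_pair (Ne.symm hx)]; rfl
    · have hc' := hc.swap_mul hx h2
      have hsupp : (swap x (c x) * c).support = c.support \ {x} :=
        support_swap_mul_eq c x h2
      have hcard : (swap x (c x) * c).support.card = k - 1 := by
        rw [hsupp, card_sdiff_of_subset (by simpa using hxs)]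
        simp [hk]
      have hk2 : 2 ≤ k := hk ▸ hc.two_le_card_support
      obtain ⟨x', y', l', hx', hy', hxy', hsw', hss', hnd', hpr', hlen'⟩ :=
        ih (k - 1) (by omega) _ hc' hcard
      have hxnot : x ∉ (swap x (c x) * c).support := by rw [hsupp]; simp
      refine ⟨x, c x, swap x' y' :: l', hxs, hcxs, Ne.symm hx, ?_, ?_, ?_, ?_, ?_⟩
      · rintro τ hτ
        rcases List.mem_cons.1 hτ with h | h
        · subst h; exact ⟨x, c x, Ne.symm hx, rfl⟩
        · exact hsw' τ h
      · rintro τ hτ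
        rcases List.mem_cons.1 hτ with h | h
        · subst h
          rw [support_swap (Ne.symm hx)]
          intro z hz; simp at hz; rcases hz with h | h <;> subst h <;> assumption
        · exact (hss' τ h).trans (by rw [hsupp]; exact sdiff_subset)
      · refine List.nodup_cons.2 ⟨?_, hnd'⟩
        intro hmem
        have hsub := hss' _ hmem
        have hxin : x ∈ (swap x (c x)).support := by
          rw [support_swap (Ne.symm hx)]; simp
        exact hxnot (hsub hxin)
      · calc (swap x (c x) :: swap x' y' :: l').prod
            = swap x (c x) * (swap x' y' :: l').prod := by rw [List.prod_cons]
          _ = swap x (c x) * (swap x (c x) * c) := by rw [hpr']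
          _ = c := by rw [← mul_assoc, swap_mul_self, one_mul]
      · have h3 := hlen'
        simp only [List.length_cons] at h3 ⊢
        rw [hcard] at h3
        omega

lemma cycle_edge_list' (c : Equiv.Perm α) (hc : c.IsCycle) :
    ∃ l : List (Equiv.Perm α),
      (∀ τ ∈ l, τ.IsSwap) ∧ (∀ τ ∈ l, τ.support ⊆ c.support) ∧
      l.Nodup ∧ l.prod = c ∧ l.length + 1 = c.support.card := by
  obtain ⟨x, y, l, _, _, _, h1, h2, h3, h4, h5⟩ := cycle_edge_list c.support.card c hc rfl
  exact ⟨swap x y :: l, h1, h2, h3, h4, h5⟩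

lemma cycles_edge_join : ∀ (L : List (Equiv.Perm α)), (∀ σ ∈ L, σ.IsCycle) →
    L.Pairwise Equiv.Perm.Disjoint →
    ∃ l : List (Equiv.Perm α),
      (∀ τ ∈ l, τ.IsSwap) ∧ l.Nodup ∧
      (∀ τ ∈ l, ∃ σ ∈ L, τ.support ⊆ σ.support) ∧
      l.prod = L.prod ∧
      l.length + L.length = (L.map (fun σ => σ.support.card)).sum := by
  intro L
  induction L with
  | nil => exact fun _ _ => ⟨[], by simp, by simp, by simp, by simp, by simp⟩
  | cons c L' ih =>
    intro hcyc hdisj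
    obtain ⟨l', hsw', hnd', hsub', hpr', hlen'⟩ :=
      ih (fun σ h => hcyc σ (by simp [h])) (List.pairwise_cons.mp hdisj).2
    obtain ⟨lc, hswc, hsubc, hndc, hprc, hlenc⟩ := cycle_edge_list' c (hcyc c (by simp))
    have hdisj' : ∀ σ ∈ L', c.Disjoint σ := (List.pairwise_cons.mp hdisj).1
    refine ⟨lc ++ l', ?_, ?_, ?_, ?_, ?_⟩
    · intro τ hτ
      rcases List.mem_append.mp hτ with h | h
      exacts [hswc τ h, hsw' τ h]
    · rw [List.nodup_append]
      refine ⟨hndc, hnd', ?_⟩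
      intro τ hτ τ' hτ' hne; subst hne
      obtain ⟨u, v, huv, rfl⟩ := hswc τ hτ
      have hu : u ∈ (swap u v).support := by rw [support_swap huv]; simp
      have hu1 : u ∈ c.support := hsubc _ hτ hu
      obtain ⟨σ, hσ, hsubσ⟩ := hsub' _ hτ'
      exact Finset.disjoint_left.mp (hdisj' σ hσ).disjoint_support hu1 (hsubσ hu)
    · intro τ hτ
      rcases List.mem_append.mp hτ with h | h
      · exact ⟨c, by simp, hsubc τ h⟩
      · obtain ⟨σ, hσ, h2⟩ := hsub' τ h
        exact ⟨σ, by simp [hσ], h2⟩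
    · rw [List.prod_append, hprc, hpr', List.prod_cons]
    · simp only [List.length_append, List.length_cons, List.map_cons, List.sum_cons]
      omega

lemma pairs_list : ∀ (N : ℕ) (L : List (Equiv.Perm α)), L.length ≤ N →
    (∀ σ ∈ L, σ.IsSwap) → L.Pairwise Equiv.Perm.Disjoint → Even L.length →
    ∃ l : List (Equiv.Perm α),
      (∀ τ ∈ l, τ.IsSwap) ∧ l.Nodup ∧
      (∀ τ ∈ l, τ.support ⊆ L.foldr (fun σ s => σ.support ∪ s) ∅) ∧
      (∀ τ ∈ l, ∀ σ ∈ L, ¬ τ.support ⊆ σ.support) ∧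
      l.prod = L.prod ∧ l.length = 2 * L.length := by
  intro N
  induction N with
  | zero =>
    intro L hL _ _ _
    have : L = [] := List.length_eq_zero_iff.mp (Nat.le_zero.mp hL)
    subst this
    exact ⟨[], by simp, by simp, by simp, by simp, by simp, by simp⟩
  | succ N ih =>
    intro L hL hsw hdisj heven
    match L with
    | [] => exact ⟨[], by simp, by simp, by simp, by simp, by simp, by simp⟩
    | [σ] => simp [Nat.even_add_one] at heven
    | σ1 :: σ2 :: L' =>
      obtain ⟨a, b, hab, h1⟩ := hsw σ1 (by simp)
      obtain ⟨c, d, hcd, h2⟩ := hsw σ2 (by simp)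
      have hd12 : σ1.Disjoint σ2 := (List.pairwise_cons.mp hdisj).1 σ2 (by simp)
      have hs1 : σ1.support = {a, b} := by rw [h1]; exact support_swap hab
      have hs2 : σ2.support = {c, d} := by rw [h2]; exact support_swap hcd
      have hdsupp : _root_.Disjoint σ1.support σ2.support :=
        Equiv.Perm.Disjoint.disjoint_support hd12
      have hmem : ∀ x ∈ σ1.support, ∀ y ∈ σ2.support, x ≠ y := by
        intro x hx y hy he; subst he
        exact (Finset.disjoint_left.mp hdsupp hx) hy
      have ha1 : a ∈ σ1.support := by rw [hs1]; simp
      have hb1 : b ∈ σ1.support := by rw [hs1]; simp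
      have hc2 : c ∈ σ2.support := by rw [hs2]; simp
      have hd2 : d ∈ σ2.support := by rw [hs2]; simp
      have hac := hmem a ha1 c hc2
      have had := hmem a ha1 d hd2
      have hbc := hmem b hb1 c hc2
      have hbd := hmem b hb1 d hd2
      have hdisj' : L'.Pairwise Equiv.Perm.Disjoint :=
        (List.pairwise_cons.mp (List.pairwise_cons.mp hdisj).2).2
      have heven' : Even L'.length := by
        simpa [Nat.even_add_one, not_not] using heven
      obtain ⟨l', hsw', hnd', hsub', hnsub', hpr', hlen'⟩ :=
        ih L' (by simp at hL; omega) (fun σ hσ => hsw σ (by simp [hσ])) hdisj' heven'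
      have hdL' : ∀ σ ∈ L', σ1.Disjoint σ ∧ σ2.Disjoint σ := by
        intro σ hσ
        exact ⟨(List.pairwise_cons.mp hdisj).1 σ (by simp [hσ]),
          (List.pairwise_cons.mp (List.pairwise_cons.mp hdisj).2).1 σ hσ⟩
      have hl'avoid : ∀ τ ∈ l', ∀ z ∈ τ.support, z ∉ σ1.support ∧ z ∉ σ2.support := by
        intro τ hτ z hz
        obtain ⟨σ, hσ, hzσ⟩ := mem_foldr_support.mp (hsub' τ hτ hz)
        obtain ⟨hd1, hd2'⟩ := hdL' σ hσ
        exact ⟨fun h => Finset.disjoint_left.mp hd1.disjoint_support h hzσ,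
          fun h => Finset.disjoint_left.mp hd2'.disjoint_support h hzσ⟩
      have hcross : ∀ u v : α, u ∈ σ1.support → v ∈ σ2.support →
          ∀ σ ∈ σ1 :: σ2 :: L', ¬ (swap u v).support ⊆ σ.support := by
        intro u v hu hv σ hσ hsub
        have huv : u ≠ v := hmem u hu v hv
        have hus : u ∈ (swap u v).support := by rw [support_swap huv]; simp
        have hvs : v ∈ (swap u v).support := by rw [support_swap huv]; simp
        rcases List.mem_cons.mp hσ with rfl | hσ
        · exact Finset.disjoint_left.mp hdsupp (hsub hvs) hv
        rcases List.mem_cons.mp hσ with rfl | hσ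
        · exact Finset.disjoint_left.mp hdsupp hu (hsub hus)
        · exact Finset.disjoint_left.mp (hdL' σ hσ).1.disjoint_support hu (hsub hus)
      have hcsub : ∀ u v : α, u ∈ σ1.support → v ∈ σ2.support →
          (swap u v).support ⊆
            (σ1 :: σ2 :: L').foldr (fun σ s => σ.support ∪ s) ∅ := by
        intro u v hu hv z hz
        rw [support_swap (hmem u hu v hv)] at hz
        simp only [Finset.mem_insert, Finset.mem_singleton] at hz
        rw [mem_foldr_support]
        rcases hz with rfl | rfl
        · exact ⟨σ1, by simp, hu⟩
        · exact ⟨σ2, by simp, hv⟩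
      refine ⟨[swap a c, swap b d, swap a d, swap b c] ++ l', ?_, ?_, ?_, ?_, ?_, ?_⟩
      · intro τ hτ
        rcases List.mem_append.mp hτ with h | h
        · simp only [List.mem_cons, List.not_mem_nil, or_false] at h
          rcases h with rfl | rfl | rfl | rfl
          exacts [⟨a, c, hac, rfl⟩, ⟨b, d, hbd, rfl⟩, ⟨a, d, had, rfl⟩, ⟨b, c, hbc, rfl⟩]
        · exact hsw' τ h
      · rw [List.nodup_append]
        refine ⟨g4_nodup a b c d hab hcd hac had hbc hbd, hnd', ?_⟩
        intro τ hτ τ' hτ' hne; subst hne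
        simp only [List.mem_cons, List.not_mem_nil, or_false] at hτ
        have key : ∀ u v : α, u ∈ σ1.support → v ∈ σ2.support → swap u v ∉ l' := by
          intro u v hu hv hmem'
          have huv : u ≠ v := hmem u hu v hv
          have hus : u ∈ (swap u v).support := by rw [support_swap huv]; simp
          exact (hl'avoid _ hmem' u hus).1 hu
        rcases hτ with rfl | rfl | rfl | rfl
        exacts [key a c ha1 hc2 hτ', key b d hb1 hd2 hτ',
          key a d ha1 hd2 hτ', key b c hb1 hc2 hτ']
      · intro τ hτ
        rcases List.mem_append.mp hτ with h | h
        · simp only [List.mem_cons, List.not_mem_nil, or_false] at h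
          rcases h with rfl | rfl | rfl | rfl
          exacts [hcsub a c ha1 hc2, hcsub b d hb1 hd2, hcsub a d ha1 hd2, hcsub b c hb1 hc2]
        · intro z hz
          rw [mem_foldr_support]
          obtain ⟨σ, hσ, hzσ⟩ := mem_foldr_support.mp (hsub' τ h hz)
          exact ⟨σ, by simp [hσ], hzσ⟩
      · intro τ hτ σ hσ
        rcases List.mem_append.mp hτ with h | h
        · simp only [List.mem_cons, List.not_mem_nil, or_false] at h
          rcases h with rfl | rfl | rfl | rfl
          exacts [hcross a c ha1 hc2 σ hσ, hcross b d hb1 hd2 σ hσ,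
            hcross a d ha1 hd2 σ hσ, hcross b c hb1 hc2 σ hσ]
        · rcases List.mem_cons.mp hσ with rfl | hσ'
          · obtain ⟨u, v, huv, rfl⟩ := hsw' τ h
            have hus : u ∈ (swap u v).support := by rw [support_swap huv]; simp
            intro hsub
            exact (hl'avoid _ h u hus).1 (hsub hus)
          rcases List.mem_cons.mp hσ' with rfl | hσ''
          · obtain ⟨u, v, huv, rfl⟩ := hsw' τ h
            have hus : u ∈ (swap u v).support := by rw [support_swap huv]; simp
            intro hsub
            exact (hl'avoid _ h u hus).2 (hsub hus)
          · exact hnsub' τ h σ hσ''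
      · rw [List.prod_append, g4 a b c d hab hcd hac had hbc hbd, hpr',
          List.prod_cons, List.prod_cons, h1, h2, mul_assoc]
      · simp only [List.length_append, List.length_cons, List.length_nil, hlen']
        omega

end

/-- A permutation `P` with `m ≥ 1` nontrivial disjoint cycles, `n > 2` total entries,
and exactly `r` transposition cycle factors, equals the product of some list of
`n - m + r + ε_r` pairwise distinct transpositions, none a cycle factor of `P`. -/
theorem exists_transposition_list {α : Type*} [Fintype α] [DecidableEq α]
    [DecidablePred (Equiv.Perm.IsSwap : Equiv.Perm α → Prop)]
    (P : Equiv.Perm α) (n m r : ℕ)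
    (hm : P.cycleFactorsFinset.card = m) (hm1 : 1 ≤ m)
    (hn : P.support.card = n) (hn2 : 2 < n)
    (hr : (P.cycleFactorsFinset.filter (fun c => c.IsSwap)).card = r) :
    ∃ l : List (Equiv.Perm α),
      (∀ τ ∈ l, τ.IsSwap) ∧ l.Nodup ∧
      (∀ τ ∈ l, τ ∉ P.cycleFactorsFinset) ∧
      l.prod = P ∧
      l.length = n - m + r + (if Even r then 0 else 1) := by
  have hkey := (Equiv.Perm.cycleFactorsFinset_eq_list_toFinset
    (P.cycleFactorsFinset.nodup_toList)).mp (P.cycleFactorsFinset.toList_toFinset).symm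
  obtain ⟨hcycL0, hdisjL0, hprodL0⟩ := hkey
  set F := P.cycleFactorsFinset with hF
  -- pairwise disjointness of factors
  have hFd : (F : Set (Equiv.Perm α)).Pairwise Equiv.Perm.Disjoint :=
    Equiv.Perm.cycleFactorsFinset_pairwise_disjoint P
  have hcycF : ∀ σ ∈ F, σ.IsCycle := fun σ h =>
    (Equiv.Perm.mem_cycleFactorsFinset_iff.mp h).1
  set Lts := (F.filter (fun c => c.IsSwap)).toList with hLts
  set Lls := (F.filter (fun c => ¬ c.IsSwap)).toList with hLls
  have hmemts : ∀ σ, σ ∈ Lts ↔ σ ∈ F ∧ σ.IsSwap := by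
    intro σ; rw [hLts, Finset.mem_toList, Finset.mem_filter]
  have hmemls : ∀ σ, σ ∈ Lls ↔ σ ∈ F ∧ ¬ σ.IsSwap := by
    intro σ; rw [hLls, Finset.mem_toList, Finset.mem_filter]
  -- the permutation between F.toList and Lls ++ Lts
  have hperm : F.toList.Perm (Lls ++ Lts) := by
    rw [← Multiset.coe_eq_coe, ← Multiset.coe_add, hLls, hLts,
      Finset.coe_toList, Finset.coe_toList, Finset.coe_toList, Finset.filter_val,
      Finset.filter_val, add_comm, Multiset.filter_add_not]
  have hcommL0 : F.toList.Pairwise Commute :=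
    hdisjL0.imp (fun h => h.commute)
  have hprod2 : Lls.prod * Lts.prod = P := by
    rw [← List.prod_append, ← hperm.prod_eq' hcommL0, hprodL0]
  have hpairw : (Lls ++ Lts).Pairwise Equiv.Perm.Disjoint :=
    (List.Perm.pairwise_iff (fun {σ1 σ2} h => Equiv.Perm.Disjoint.symm h) hperm).mp hdisjL0
  rw [List.pairwise_append] at hpairw
  obtain ⟨hpls, hpts, hcrossd⟩ := hpairw
  -- counts
  have hlen_ts : Lts.length = r := by rw [hLts, Finset.length_toList, hr]
  have hlen_ls : r + Lls.length = m := by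
    rw [hLls, Finset.length_toList, ← hm, ← hr]
    exact Finset.card_filter_add_card_filter_not _
  -- sums of support cards
  have hsum : ∑ σ ∈ F, σ.support.card = n := by
    rw [← hn, ← Equiv.Perm.sum_cycleType P]
    rfl
  have hsum_ts : ∑ σ ∈ F.filter (fun c => c.IsSwap), σ.support.card = 2 * r := by
    rw [Finset.sum_congr rfl (fun σ hσ =>
      Equiv.Perm.card_support_eq_two.mpr (Finset.mem_filter.mp hσ).2)]
    rw [Finset.sum_const, hr, smul_eq_mul, mul_comm]
  have hA : (Lls.map (fun σ => σ.support.card)).sum + 2 * r = n := by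
    rw [hLls, Finset.sum_map_toList, ← hsum, ← hsum_ts]
    rw [← Finset.sum_filter_add_sum_filter_not F (fun c => c.IsSwap) (fun σ => σ.support.card)]
    omega
  -- helper: a swap crossing two distinct factors is not a factor
  have hfac : ∀ u v : α, ∀ f ∈ F, ∀ g ∈ F, f ≠ g → u ∈ f.support → v ∈ g.support →
      swap u v ∉ F := by
    intro u v f hfm g hgm hfg hu hv hmem
    have hdfg := (hFd (Finset.mem_coe.mpr hfm) (Finset.mem_coe.mpr hgm) hfg).disjoint_support
    have huv : u ≠ v := by
      intro h; subst h; exact Finset.disjoint_left.mp hdfg hu hv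
    have hus : u ∈ (swap u v).support := by rw [support_swap huv]; simp
    have hvs : v ∈ (swap u v).support := by rw [support_swap huv]; simp
    by_cases hef : swap u v = f
    · subst hef
      exact Finset.disjoint_left.mp hdfg (hvs) hv
    · exact Finset.disjoint_left.mp ((hFd (Finset.mem_coe.mpr hmem) (Finset.mem_coe.mpr hfm) hef).disjoint_support) hus hu
  have hne_supp : ∀ σ σ' : Equiv.Perm α, σ.Disjoint σ' →
      ∀ u ∈ σ.support, ∀ v ∈ σ'.support, u ≠ v := by
    intro σ σ' hd u hu v hv he; subst he
    exact Finset.disjoint_left.mp hd.disjoint_support hu hv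
  have hedge_notfac : ∀ (τ σ : Equiv.Perm α), τ.IsSwap → σ ∈ F → ¬σ.IsSwap →
      τ.support ⊆ σ.support → τ ∉ F := by
    intro τ σ hsw hσF hσns hsub hmem
    have hτσ : τ ≠ σ := fun h => hσns (h ▸ hsw)
    obtain ⟨u, v, huv, rfl⟩ := hsw
    have hus : u ∈ (swap u v).support := by rw [support_swap huv]; simp
    exact Finset.disjoint_left.mp
      ((hFd (Finset.mem_coe.mpr hmem) (Finset.mem_coe.mpr hσF) hτσ).disjoint_support)
      hus (hsub hus)
  by_cases hre : Even r
  · -- even case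
    obtain ⟨lls, hsw1, hnd1, hsub1, hpr1, hlen1⟩ :=
      cycles_edge_join Lls (fun σ h => hcycF σ ((hmemls σ).mp h).1) hpls
    obtain ⟨lts, hsw2, hnd2, hsub2, hnsub2, hpr2, hlen2⟩ :=
      pairs_list Lts.length Lts le_rfl (fun σ h => ((hmemts σ).mp h).2) hpts
        (hlen_ts ▸ hre)
    refine ⟨lls ++ lts, ?_, ?_, ?_, ?_, ?_⟩
    · intro τ hτ
      rcases List.mem_append.mp hτ with h | h
      exacts [hsw1 τ h, hsw2 τ h]
    · rw [List.nodup_append]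
      refine ⟨hnd1, hnd2, ?_⟩
      intro τ hτ τ' hτ' hne; subst hne
      obtain ⟨u, v, huv, rfl⟩ := hsw1 τ hτ
      have hus : u ∈ (swap u v).support := by rw [support_swap huv]; simp
      obtain ⟨σ, hσ, hsubσ⟩ := hsub1 _ hτ
      obtain ⟨σ', hσ', hzσ'⟩ := mem_foldr_support.mp (hsub2 _ hτ' hus)
      have h1 := (hmemls σ).mp hσ
      have h2 := (hmemts σ').mp hσ'
      have hσσ' : σ ≠ σ' := fun h => h1.2 (h ▸ h2.2)
      exact Finset.disjoint_left.mp
        ((hFd (Finset.mem_coe.mpr h1.1) (Finset.mem_coe.mpr h2.1) hσσ').disjoint_support)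
        (hsubσ hus) hzσ'
    · intro τ hτ
      rcases List.mem_append.mp hτ with h | h
      · obtain ⟨σ, hσ, hsubσ⟩ := hsub1 _ h
        have h1 := (hmemls σ).mp hσ
        exact hedge_notfac τ σ (hsw1 τ h) h1.1 h1.2 hsubσ
      · intro hmem
        have hswτ := hsw2 τ h
        have hτts : τ ∈ Lts := (hmemts τ).mpr ⟨hmem, hswτ⟩
        exact hnsub2 τ h τ hτts (subset_refl _)
    · rw [List.prod_append, hpr1, hpr2, hprod2]
    · rw [if_pos hre, List.length_append, hlen2, hlen_ts]
      omega
  · -- odd case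
    have hr0 : r ≠ 0 := fun h => hre (h ▸ Even.zero)
    obtain ⟨σ1, Lts1, hsplit⟩ : ∃ σ1 Lts1, Lts = σ1 :: Lts1 := by
      cases h : Lts with
      | nil => exfalso; rw [h] at hlen_ts; simp at hlen_ts; exact hr0 hlen_ts.symm
      | cons x t => exact ⟨x, t, rfl⟩
    have hσ1ts : σ1 ∈ Lts := by rw [hsplit]; simp
    obtain ⟨hσ1F, hσ1sw⟩ := (hmemts σ1).mp hσ1ts
    obtain ⟨a, b, hab, hσ1ab⟩ := hσ1sw
    have hσ1supp : σ1.support = {a, b} := by rw [hσ1ab]; exact support_swap hab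
    have ha1 : a ∈ σ1.support := by rw [hσ1supp]; simp
    have hb1 : b ∈ σ1.support := by rw [hσ1supp]; simp
    have hpts1 : List.Pairwise Equiv.Perm.Disjoint (σ1 :: Lts1) := hsplit ▸ hpts
    have hd1Lts1 : ∀ σ ∈ Lts1, σ1.Disjoint σ := (List.pairwise_cons.mp hpts1).1
    have hpLts1 : Lts1.Pairwise Equiv.Perm.Disjoint := (List.pairwise_cons.mp hpts1).2
    have hLts1len : Lts1.length + 1 = r := by
      rw [← hlen_ts, hsplit]; simp
    have hLts1even : Even Lts1.length := by
      rcases Nat.even_or_odd Lts1.length with h | h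
      · exact h
      · exfalso; apply hre; rw [← hLts1len]; exact Odd.add_one h
    obtain ⟨lts1, hsw2, hnd2, hsub2, hnsub2, hpr2, hlen2⟩ :=
      pairs_list Lts1.length Lts1 le_rfl
        (fun σ h => ((hmemts σ).mp (by rw [hsplit]; simp [h])).2) hpLts1 hLts1even
    -- members of lts1 avoid σ1.support and any long factor's support
    have hlts1avoid : ∀ τ ∈ lts1, ∀ z ∈ τ.support, ∃ σ' ∈ Lts1, z ∈ σ'.support :=
      fun τ h z hz => mem_foldr_support.mp (hsub2 τ h hz)
    have hlts1notfac : ∀ τ ∈ lts1, τ ∉ F := by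
      intro τ hτ hmem
      have hswτ := hsw2 τ hτ
      have hτts : τ ∈ Lts := (hmemts τ).mpr ⟨hmem, hswτ⟩
      rw [hsplit] at hτts
      rcases List.mem_cons.mp hτts with rfl | h
      · obtain ⟨σ', hσ', hzσ'⟩ := hlts1avoid τ hτ a ha1
        exact hne_supp τ σ' (hd1Lts1 σ' hσ') a ha1 a hzσ' rfl
      · exact hnsub2 τ hτ τ h (subset_refl _)
    cases hcls : Lls with
    | cons c0 Lls1 =>
      -- CASE B: steal an edge from the long cycle c0
      have hc0ls : c0 ∈ Lls := by rw [hcls]; simp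
      obtain ⟨hc0F, hc0ns⟩ := (hmemls c0).mp hc0ls
      have hc0cyc := hcycF c0 hc0F
      obtain ⟨x, y, lc, hxc, hyc, hxy, hswc, hsubc, hndc, hprc, hlenc⟩ :=
        cycle_edge_list c0.support.card c0 hc0cyc rfl
      have hdc0σ1 : c0.Disjoint σ1 := hcrossd c0 hc0ls σ1 hσ1ts
      have hax : a ≠ x := hne_supp σ1 c0 hdc0σ1.symm a ha1 x hxc
      have hay : a ≠ y := hne_supp σ1 c0 hdc0σ1.symm a ha1 y hyc
      have hbx : b ≠ x := hne_supp σ1 c0 hdc0σ1.symm b hb1 x hxc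
      have hby : b ≠ y := hne_supp σ1 c0 hdc0σ1.symm b hb1 y hyc
      have hpls1 : Lls1.Pairwise Equiv.Perm.Disjoint := by
        rw [hcls] at hpls; exact (List.pairwise_cons.mp hpls).2
      have hdc0Lls1 : ∀ σ ∈ Lls1, c0.Disjoint σ := by
        rw [hcls] at hpls; exact (List.pairwise_cons.mp hpls).1
      have hmemLls1 : ∀ σ ∈ Lls1, σ ∈ Lls := by intro σ h; rw [hcls]; simp [h]
      obtain ⟨lls1, hsw1, hnd1, hsub1, hpr1, hlen1⟩ :=
        cycles_edge_join Lls1 (fun σ h => hcycF σ ((hmemls σ).mp (hmemLls1 σ h)).1) hpls1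
      -- the steal gadget
      set steal4 : List (Equiv.Perm α) := [swap a x, swap b y, swap a y, swap b x]
        with hsteal4
      have hsteal_mem : ∀ τ ∈ steal4, ∃ u v : α, τ = swap u v ∧ u ≠ v ∧
          u ∈ σ1.support ∧ v ∈ c0.support := by
        intro τ hτ
        rw [hsteal4] at hτ
        simp only [List.mem_cons, List.not_mem_nil, or_false] at hτ
        rcases hτ with rfl | rfl | rfl | rfl
        exacts [⟨a, x, rfl, hax, ha1, hxc⟩, ⟨b, y, rfl, hby, hb1, hyc⟩,
          ⟨a, y, rfl, hay, ha1, hyc⟩, ⟨b, x, rfl, hbx, hb1, hxc⟩]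
      -- avoidance facts
      have havoid1 : ∀ τ ∈ lc, ∀ z ∈ τ.support, z ∈ c0.support ∧ z ∉ σ1.support := by
        intro τ hτ z hz
        have h1 : z ∈ c0.support := hsubc τ (List.mem_cons_of_mem _ hτ) hz
        exact ⟨h1, fun h2 => hne_supp c0 σ1 hdc0σ1 z h1 z h2 rfl⟩
      have havoid2 : ∀ τ ∈ lls1, ∀ z ∈ τ.support,
          z ∉ σ1.support ∧ z ∉ c0.support := by
        intro τ hτ z hz
        obtain ⟨σ, hσ, hsubσ⟩ := hsub1 τ hτ
        have hzσ := hsubσ hz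
        refine ⟨fun h2 => ?_, fun h2 => ?_⟩
        · exact hne_supp σ σ1 (hcrossd σ (hmemLls1 σ hσ) σ1 hσ1ts) z hzσ z h2 rfl
        · exact hne_supp σ c0 (hdc0Lls1 σ hσ).symm z hzσ z h2 rfl
      have havoid3 : ∀ τ ∈ lts1, ∀ z ∈ τ.support,
          z ∉ σ1.support ∧ z ∉ c0.support ∧ (∀ σ ∈ Lls1, z ∉ σ.support) := by
        intro τ hτ z hz
        obtain ⟨σ', hσ', hzσ'⟩ := hlts1avoid τ hτ z hz
        have hσ'ts : σ' ∈ Lts := by rw [hsplit]; simp [hσ']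
        refine ⟨fun h2 => ?_, fun h2 => ?_, fun σ hσ h2 => ?_⟩
        · exact hne_supp σ' σ1 (hd1Lts1 σ' hσ').symm z hzσ' z h2 rfl
        · exact hne_supp σ' c0 (hcrossd c0 hc0ls σ' hσ'ts).symm z hzσ' z h2 rfl
        · exact hne_supp σ' σ (hcrossd σ (hmemLls1 σ hσ) σ' hσ'ts).symm z hzσ' z h2 rfl
      refine ⟨steal4 ++ (lc ++ (lls1 ++ lts1)), ?_, ?_, ?_, ?_, ?_⟩
      · intro τ hτ
        rcases List.mem_append.mp hτ with h | h
        · obtain ⟨u, v, rfl, huv, _, _⟩ := hsteal_mem τ h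
          exact ⟨u, v, huv, rfl⟩
        rcases List.mem_append.mp h with h | h
        · exact hswc τ (List.mem_cons_of_mem _ h)
        rcases List.mem_append.mp h with h | h
        exacts [hsw1 τ h, hsw2 τ h]
      · -- Nodup
        rw [List.nodup_append]
        refine ⟨g4_nodup a b x y hab hxy hax hay hbx hby, ?_, ?_⟩
        · rw [List.nodup_append]
          refine ⟨List.Nodup.of_cons hndc, ?_, ?_⟩
          · rw [List.nodup_append]
            refine ⟨hnd1, hnd2, ?_⟩
            intro τ hτ τ' hτ' hne; subst hne
            obtain ⟨u, v, huv, rfl⟩ := hsw1 τ hτ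
            have hus : u ∈ (swap u v).support := by rw [support_swap huv]; simp
            obtain ⟨σ, hσ, hsubσ⟩ := hsub1 _ hτ
            exact (havoid3 _ hτ' u hus).2.2 σ hσ (hsubσ hus)
          · intro τ hτ τ' hτ' hne; subst hne
            obtain ⟨u, v, huv, rfl⟩ := hswc τ (List.mem_cons_of_mem _ hτ)
            have hus : u ∈ (swap u v).support := by rw [support_swap huv]; simp
            have huc0 := (havoid1 _ hτ u hus).1
            rcases List.mem_append.mp hτ' with h | h
            · exact (havoid2 _ h u hus).2 huc0
            · exact (havoid3 _ h u hus).2.1 huc0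
        · intro τ hτ τ' hτ' hne; subst hne
          obtain ⟨u, v, rfl, huv, hu1, hvc⟩ := hsteal_mem τ hτ
          have hus : u ∈ (swap u v).support := by rw [support_swap huv]; simp
          rcases List.mem_append.mp hτ' with h | h
          · exact (havoid1 _ h u hus).2 hu1
          rcases List.mem_append.mp h with h | h
          · exact (havoid2 _ h u hus).1 hu1
          · exact (havoid3 _ h u hus).1 hu1
      · -- not a factor
        intro τ hτ
        rcases List.mem_append.mp hτ with h | h
        · obtain ⟨u, v, rfl, huv, hu1, hvc⟩ := hsteal_mem τ h
          have hσ1c0 : σ1 ≠ c0 := by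
            intro he
            exact hc0ns (he ▸ ⟨a, b, hab, hσ1ab⟩)
          exact hfac u v σ1 hσ1F c0 hc0F hσ1c0 hu1 hvc
        rcases List.mem_append.mp h with h | h
        · exact hedge_notfac τ c0 (hswc τ (List.mem_cons_of_mem _ h)) hc0F hc0ns
            (hsubc τ (List.mem_cons_of_mem _ h))
        rcases List.mem_append.mp h with h | h
        · obtain ⟨σ, hσ, hsubσ⟩ := hsub1 _ h
          have h1 := (hmemls σ).mp (hmemLls1 σ hσ)
          exact hedge_notfac τ σ (hsw1 τ h) h1.1 h1.2 hsubσ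
        · exact hlts1notfac τ h
      · -- product
        have hq : swap x y * lc.prod = c0 := by
          rw [← List.prod_cons]; exact hprc
        have hcomm1 : Commute σ1 c0 := hdc0σ1.symm.commute
        have hcomm2 : Commute σ1 Lls1.prod := by
          apply Commute.list_prod_right
          intro σ hσ
          exact ((hcrossd σ (hmemLls1 σ hσ) σ1 hσ1ts).symm).commute
        have hsteal_prod : steal4.prod = swap a b * swap x y := by
          rw [hsteal4]
          exact g4 a b x y hab hxy hax hay hbx hby
        rw [List.prod_append, List.prod_append, List.prod_append, hsteal_prod,
          hpr1, hpr2, ← hprod2, hcls, hsplit, List.prod_cons, List.prod_cons]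
        rw [← hσ1ab]
        calc σ1 * swap x y * (lc.prod * (Lls1.prod * Lts1.prod))
            = σ1 * (swap x y * lc.prod) * (Lls1.prod * Lts1.prod) := by
              rw [mul_assoc, mul_assoc, mul_assoc]
          _ = σ1 * c0 * (Lls1.prod * Lts1.prod) := by rw [hq]
          _ = c0 * σ1 * (Lls1.prod * Lts1.prod) := by rw [hcomm1.eq]
          _ = c0 * (σ1 * Lls1.prod) * Lts1.prod := by
              rw [mul_assoc, mul_assoc, mul_assoc]
          _ = c0 * (Lls1.prod * σ1) * Lts1.prod := by rw [hcomm2.eq]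
          _ = c0 * Lls1.prod * (σ1 * Lts1.prod) := by
              rw [mul_assoc, mul_assoc, mul_assoc]
      · -- length
        rw [if_neg hre]
        have h1 : lc.length + 2 = c0.support.card := by
          simpa using hlenc
        have h2 : (Lls.map (fun σ => σ.support.card)).sum
            = c0.support.card + (Lls1.map (fun σ => σ.support.card)).sum := by
          rw [hcls]; simp
        have h3 : Lls.length = Lls1.length + 1 := by rw [hcls]; simp
        simp only [List.length_append, hsteal4, List.length_cons, List.length_nil]
        rw [h2] at hA
        omega
    | nil =>
      -- CASE C: all cycle factors are transpositions, r = m odd ≥ 3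
      have hLls0 : Lls.length = 0 := by rw [hcls]; rfl
      have hA0 : (Lls.map (fun σ => σ.support.card)).sum = 0 := by rw [hcls]; rfl
      have hn2r : 2 * r = n := by omega
      have hr3 : 3 ≤ r := by
        rcases Nat.even_or_odd r with h | h
        · exact absurd h hre
        · obtain ⟨k, hk⟩ := h; omega
      obtain ⟨σ2, σ3, Lts3, hsplit1⟩ : ∃ σ2 σ3 Lts3, Lts1 = σ2 :: σ3 :: Lts3 := by
        cases h1 : Lts1 with
        | nil => exfalso; rw [h1] at hLts1len; simp at hLts1len; omega
        | cons σ2 t2 =>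
          cases h2 : t2 with
          | nil => exfalso; rw [h1, h2] at hLts1len; simp at hLts1len; omega
          | cons σ3 t3 => exact ⟨σ2, σ3, t3, rfl⟩
      have hσ2ts : σ2 ∈ Lts := by rw [hsplit, hsplit1]; simp
      have hσ3ts : σ3 ∈ Lts := by rw [hsplit, hsplit1]; simp
      obtain ⟨hσ2F, hσ2sw⟩ := (hmemts σ2).mp hσ2ts
      obtain ⟨hσ3F, hσ3sw⟩ := (hmemts σ3).mp hσ3ts
      obtain ⟨c, d, hcd, hσ2cd⟩ := hσ2sw
      obtain ⟨e, f, hef, hσ3ef⟩ := hσ3sw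
      have hσ2supp : σ2.support = {c, d} := by rw [hσ2cd]; exact support_swap hcd
      have hσ3supp : σ3.support = {e, f} := by rw [hσ3ef]; exact support_swap hef
      have hc2 : c ∈ σ2.support := by rw [hσ2supp]; simp
      have hd2 : d ∈ σ2.support := by rw [hσ2supp]; simp
      have he3 : e ∈ σ3.support := by rw [hσ3supp]; simp
      have hf3 : f ∈ σ3.support := by rw [hσ3supp]; simp
      -- disjointness
      have hd12 : σ1.Disjoint σ2 := hd1Lts1 σ2 (by rw [hsplit1]; simp)
      have hd13 : σ1.Disjoint σ3 := hd1Lts1 σ3 (by rw [hsplit1]; simp)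
      have hpts1' : List.Pairwise Equiv.Perm.Disjoint (σ2 :: σ3 :: Lts3) :=
        hsplit1 ▸ hpLts1
      have hd23 : σ2.Disjoint σ3 := (List.pairwise_cons.mp hpts1').1 σ3 (by simp)
      have hd2L : ∀ σ ∈ Lts3, σ2.Disjoint σ :=
        fun σ h => (List.pairwise_cons.mp hpts1').1 σ (by simp [h])
      have hd3L : ∀ σ ∈ Lts3, σ3.Disjoint σ :=
        (List.pairwise_cons.mp (List.pairwise_cons.mp hpts1').2).1
      have hd1L : ∀ σ ∈ Lts3, σ1.Disjoint σ :=
        fun σ h => hd1Lts1 σ (by rw [hsplit1]; simp [h])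
      have hpts3 : Lts3.Pairwise Equiv.Perm.Disjoint :=
        (List.pairwise_cons.mp (List.pairwise_cons.mp hpts1').2).2
      -- the 15 inequalities
      have hac : a ≠ c := hne_supp σ1 σ2 hd12 a ha1 c hc2
      have had : a ≠ d := hne_supp σ1 σ2 hd12 a ha1 d hd2
      have hae : a ≠ e := hne_supp σ1 σ3 hd13 a ha1 e he3
      have haf : a ≠ f := hne_supp σ1 σ3 hd13 a ha1 f hf3
      have hbc : b ≠ c := hne_supp σ1 σ2 hd12 b hb1 c hc2
      have hbd : b ≠ d := hne_supp σ1 σ2 hd12 b hb1 d hd2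
      have hbe : b ≠ e := hne_supp σ1 σ3 hd13 b hb1 e he3
      have hbf : b ≠ f := hne_supp σ1 σ3 hd13 b hb1 f hf3
      have hce : c ≠ e := hne_supp σ2 σ3 hd23 c hc2 e he3
      have hcf : c ≠ f := hne_supp σ2 σ3 hd23 c hc2 f hf3
      have hde : d ≠ e := hne_supp σ2 σ3 hd23 d hd2 e he3
      have hdf : d ≠ f := hne_supp σ2 σ3 hd23 d hd2 f hf3
      obtain ⟨hg7prod, hg7nodup⟩ := g7 a b c d e f hab hac had hae haf hbc hbd hbe hbf
        hcd hce hcf hde hdf hef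
      set l7 : List (Equiv.Perm α) :=
        [swap a c, swap b e, swap b d, swap a d, swap a f, swap a e, swap b c] with hl7
      have hl7mem : ∀ τ ∈ l7, ∃ u v : α, τ = swap u v ∧ u ≠ v ∧ u ∈ σ1.support ∧
          ((v ∈ σ2.support ∧ σ2 ∈ F ∧ σ1 ≠ σ2) ∨ (v ∈ σ3.support ∧ σ3 ∈ F ∧ σ1 ≠ σ3)) := by
        have hne12 : σ1 ≠ σ2 := fun h => hne_supp σ1 σ2 hd12 a ha1 a (h ▸ ha1) rfl
        have hne13 : σ1 ≠ σ3 := fun h => hne_supp σ1 σ3 hd13 a ha1 a (h ▸ ha1) rfl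
        intro τ hτ
        rw [hl7] at hτ
        simp only [List.mem_cons, List.not_mem_nil, or_false] at hτ
        rcases hτ with rfl | rfl | rfl | rfl | rfl | rfl | rfl
        exacts [⟨a, c, rfl, hac, ha1, Or.inl ⟨hc2, hσ2F, hne12⟩⟩,
          ⟨b, e, rfl, hbe, hb1, Or.inr ⟨he3, hσ3F, hne13⟩⟩,
          ⟨b, d, rfl, hbd, hb1, Or.inl ⟨hd2, hσ2F, hne12⟩⟩,
          ⟨a, d, rfl, had, ha1, Or.inl ⟨hd2, hσ2F, hne12⟩⟩,
          ⟨a, f, rfl, haf, ha1, Or.inr ⟨hf3, hσ3F, hne13⟩⟩,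
          ⟨a, e, rfl, hae, ha1, Or.inr ⟨he3, hσ3F, hne13⟩⟩,
          ⟨b, c, rfl, hbc, hb1, Or.inl ⟨hc2, hσ2F, hne12⟩⟩]
      have hLts3even : Even Lts3.length := by
        rcases Nat.even_or_odd r with h | h
        · exact absurd h hre
        · obtain ⟨k, hk⟩ := h
          have : Lts1.length = Lts3.length + 2 := by rw [hsplit1]; simp
          exact ⟨k - 1, by omega⟩
      obtain ⟨lts3, hsw3, hnd3, hsub3, hnsub3, hpr3, hlen3⟩ :=
        pairs_list Lts3.length Lts3 le_rfl
          (fun σ h => ((hmemts σ).mp (by rw [hsplit, hsplit1]; simp [h])).2) hpts3 hLts3even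
      have havoid : ∀ τ ∈ lts3, ∀ z ∈ τ.support,
          z ∉ σ1.support ∧ z ∉ σ2.support ∧ z ∉ σ3.support := by
        intro τ hτ z hz
        obtain ⟨σ', hσ', hzσ'⟩ := mem_foldr_support.mp (hsub3 τ hτ hz)
        refine ⟨fun h2 => ?_, fun h2 => ?_, fun h2 => ?_⟩
        · exact hne_supp σ' σ1 (hd1L σ' hσ').symm z hzσ' z h2 rfl
        · exact hne_supp σ' σ2 (hd2L σ' hσ').symm z hzσ' z h2 rfl
        · exact hne_supp σ' σ3 (hd3L σ' hσ').symm z hzσ' z h2 rfl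
      refine ⟨l7 ++ lts3, ?_, ?_, ?_, ?_, ?_⟩
      · intro τ hτ
        rcases List.mem_append.mp hτ with h | h
        · obtain ⟨u, v, rfl, huv, _, _⟩ := hl7mem τ h
          exact ⟨u, v, huv, rfl⟩
        · exact hsw3 τ h
      · rw [List.nodup_append]
        refine ⟨hg7nodup, hnd3, ?_⟩
        intro τ hτ τ' hτ' hne; subst hne
        obtain ⟨u, v, rfl, huv, hu1, _⟩ := hl7mem τ hτ
        have hus : u ∈ (swap u v).support := by rw [support_swap huv]; simp
        exact (havoid _ hτ' u hus).1 hu1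
      · intro τ hτ
        rcases List.mem_append.mp hτ with h | h
        · obtain ⟨u, v, rfl, huv, hu1, hcase⟩ := hl7mem τ h
          rcases hcase with ⟨hv, hgF, hne⟩ | ⟨hv, hgF, hne⟩
          · exact hfac u v σ1 hσ1F σ2 hgF hne hu1 hv
          · exact hfac u v σ1 hσ1F σ3 hgF hne hu1 hv
        · intro hmem
          have hswτ := hsw3 τ h
          have hτts : τ ∈ Lts := (hmemts τ).mpr ⟨hmem, hswτ⟩
          rw [hsplit, hsplit1] at hτts
          obtain ⟨u, v, huv, hτuv⟩ := hswτ
          rcases List.mem_cons.mp hτts with rfl | hτts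
          · exact (havoid _ h a (by rw [hτuv] at ha1 ⊢; exact ha1)).1 ha1
          rcases List.mem_cons.mp hτts with rfl | hτts
          · exact (havoid _ h c (by rw [hτuv] at hc2 ⊢; exact hc2)).2.1 hc2
          rcases List.mem_cons.mp hτts with rfl | hτts
          · exact (havoid _ h e (by rw [hτuv] at he3 ⊢; exact he3)).2.2 he3
          · exact hnsub3 τ h τ hτts (subset_refl _)
      · rw [List.prod_append, hg7prod, hpr3, ← hprod2, hcls, hsplit, hsplit1]
        simp only [List.prod_nil, List.prod_cons, one_mul]
        rw [hσ1ab, hσ2cd, hσ3ef, ← mul_assoc, ← mul_assoc, mul_assoc]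
      · rw [if_neg hre]
        have h4 : Lts1.length = Lts3.length + 2 := by rw [hsplit1]; simp
        simp only [List.length_append, hl7, List.length_cons, List.length_nil, hlen3]
        omega
end

section
/- A transposition cannot be written as the product of a list of fewer than 5 pairwise distinct transpositions none of which equals that transposition. Equivalently, if a list of u pairwise distinct transpositions, none equal to the transposition (1 2), has product equal to (1 2), then u ≥ 5. -/
open Equiv

private theorem swap_eq_swap_iff' {α : Type*} [DecidableEq α] {a b c d : α} (hab : a ≠ b) :
    swap a b = swap c d ↔ (a = c ∧ b = d) ∨ (a = d ∧ b = c) := by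
  constructor
  · intro h
    have h1 : swap c d a = b := by rw [← h, swap_apply_left]
    rcases eq_or_ne a c with rfl | hac
    · simp [swap_apply_left] at h1; subst h1; left; exact ⟨rfl, rfl⟩
    · rcases eq_or_ne a d with rfl | had
      · simp [swap_apply_right] at h1; subst h1; right; exact ⟨rfl, rfl⟩
      · rw [swap_apply_of_ne_of_ne hac had] at h1; exact absurd h1 hab
  · rintro (⟨rfl, rfl⟩ | ⟨rfl, rfl⟩) <;> simp [swap_comm]

private theorem three_moved {α : Type*} [DecidableEq α] {x y z1 z2 z3 : α}
    (h12 : z1 ≠ z2) (h13 : z1 ≠ z3) (h23 : z2 ≠ z3)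
    (m1 : swap x y z1 ≠ z1) (m2 : swap x y z2 ≠ z2) (m3 : swap x y z3 ≠ z3) : False := by
  rcases (swap_apply_ne_self_iff.mp m1).2 with rfl | rfl <;>
    rcases (swap_apply_ne_self_iff.mp m2).2 with rfl | rfl <;>
      rcases (swap_apply_ne_self_iff.mp m3).2 with rfl | rfl <;> simp_all

private theorem swap_of_apply {α : Type*} [DecidableEq α] {x y z w : α}
    (hzw : z ≠ w) (h : swap x y z = w) : swap x y = swap z w := by
  have hm : swap x y z ≠ z := by rw [h]; exact fun hh => hzw hh.symm
  rcases (swap_apply_ne_self_iff.mp hm).2 with rfl | rfl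
  · rw [swap_apply_left] at h; subst h; rfl
  · rw [swap_apply_right] at h; subst h; exact swap_comm _ _

/-- shared-point case: `t1 * t2 * (b c) = (a b)` with `c ∉ {a,b}` is impossible. -/
private theorem aux1 {α : Type*} [DecidableEq α] (a b c x1 y1 p q : α)
    (hab : a ≠ b) (hca : c ≠ a) (hcb : c ≠ b)
    (h1 : x1 ≠ y1) (hpq : p ≠ q)
    (hn2 : swap p q ≠ swap a b)
    (hd13 : swap x1 y1 ≠ swap b c) (hd23 : swap p q ≠ swap b c)
    (h : swap x1 y1 * swap p q * swap b c = swap a b) : False := by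
  have hE : swap x1 y1 = swap a b * swap b c * swap p q := by
    rw [← h]; simp [mul_assoc, Equiv.swap_mul_self_mul, Equiv.swap_mul_self, mul_one]
  have hKz : ∀ z, swap x1 y1 z = swap a b (swap b c (swap p q z)) := by
    intro z; rw [hE]; simp [Equiv.Perm.mul_apply]
  have base : ∀ z, z ≠ p → z ≠ q → (z = a ∨ z = b ∨ z = c) → swap x1 y1 z ≠ z := by
    intro z hzp hzq hz
    rw [hKz, swap_apply_of_ne_of_ne hzp hzq]
    rcases hz with rfl | rfl | rfl
    · rw [swap_apply_of_ne_of_ne hab (Ne.symm hca), swap_apply_left]; exact Ne.symm hab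
    · rw [swap_apply_left, swap_apply_of_ne_of_ne hca hcb]; exact hcb
    · rw [swap_apply_right, swap_apply_right]; exact Ne.symm hca
  by_cases hp : p = a ∨ p = b ∨ p = c
  · by_cases hq : q = a ∨ q = b ∨ q = c
    · rcases hp with rfl | rfl | rfl <;> rcases hq with rfl | rfl | rfl <;>
        first
          | exact hpq rfl
          | exact hn2 rfl
          | exact hn2 (swap_comm _ _)
          | exact hd23 rfl
          | exact hd23 (swap_comm _ _)
          | exact hd13 (swap_of_apply (Ne.symm hcb) (by
              rw [hKz]
              simp [swap_apply_def, hab, hca, hcb, Ne.symm hab, Ne.symm hca, Ne.symm hcb]))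
    · push_neg at hq; obtain ⟨hqa, hqb, hqc⟩ := hq
      have mq : swap x1 y1 q ≠ q := by
        rw [hKz, swap_apply_right]
        rcases hp with rfl | rfl | rfl
        · rw [swap_apply_of_ne_of_ne hab (Ne.symm hca), swap_apply_left]; exact Ne.symm hqb
        · rw [swap_apply_left, swap_apply_of_ne_of_ne hca hcb]; exact Ne.symm hqc
        · rw [swap_apply_right, swap_apply_right]; exact Ne.symm hqa
      rcases hp with rfl | rfl | rfl
      · exact three_moved (Ne.symm hcb) (Ne.symm hqb) (Ne.symm hqc)
          (base b (Ne.symm hab) (Ne.symm hqb) (Or.inr (Or.inl rfl)))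
          (base c hca (Ne.symm hqc) (Or.inr (Or.inr rfl))) mq
      · exact three_moved (Ne.symm hca) (Ne.symm hqa) (Ne.symm hqc)
          (base a hab (Ne.symm hqa) (Or.inl rfl))
          (base c hcb (Ne.symm hqc) (Or.inr (Or.inr rfl))) mq
      · exact three_moved hab (Ne.symm hqa) (Ne.symm hqb)
          (base a (Ne.symm hca) (Ne.symm hqa) (Or.inl rfl))
          (base b (Ne.symm hcb) (Ne.symm hqb) (Or.inr (Or.inl rfl))) mq
  · push_neg at hp; obtain ⟨hpa, hpb, hpc⟩ := hp
    by_cases hq : q = a ∨ q = b ∨ q = c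
    · have mp : swap x1 y1 p ≠ p := by
        rw [hKz, swap_apply_left]
        rcases hq with rfl | rfl | rfl
        · rw [swap_apply_of_ne_of_ne hab (Ne.symm hca), swap_apply_left]; exact Ne.symm hpb
        · rw [swap_apply_left, swap_apply_of_ne_of_ne hca hcb]; exact Ne.symm hpc
        · rw [swap_apply_right, swap_apply_right]; exact Ne.symm hpa
      rcases hq with rfl | rfl | rfl
      · exact three_moved (Ne.symm hcb) (Ne.symm hpb) (Ne.symm hpc)
          (base b (Ne.symm hpb) (Ne.symm hab) (Or.inr (Or.inl rfl)))
          (base c (Ne.symm hpc) hca (Or.inr (Or.inr rfl))) mp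
      · exact three_moved (Ne.symm hca) (Ne.symm hpa) (Ne.symm hpc)
          (base a (Ne.symm hpa) hab (Or.inl rfl))
          (base c (Ne.symm hpc) hcb (Or.inr (Or.inr rfl))) mp
      · exact three_moved hab (Ne.symm hpa) (Ne.symm hpb)
          (base a (Ne.symm hpa) (Ne.symm hca) (Or.inl rfl))
          (base b (Ne.symm hpb) (Ne.symm hcb) (Or.inr (Or.inl rfl))) mp
    · push_neg at hq; obtain ⟨hqa, hqb, hqc⟩ := hq
      exact three_moved hab (Ne.symm hca) (Ne.symm hcb)
        (base a (Ne.symm hpa) (Ne.symm hqa) (Or.inl rfl))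
        (base b (Ne.symm hpb) (Ne.symm hqb) (Or.inr (Or.inl rfl)))
        (base c (Ne.symm hpc) (Ne.symm hqc) (Or.inr (Or.inr rfl)))

/-- disjoint case: `t1 * t2 * (c d) = (a b)` with `{c,d} ∩ {a,b} = ∅` is impossible. -/
private theorem aux0 {α : Type*} [DecidableEq α] (a b c d x1 y1 p q : α)
    (hab : a ≠ b) (hca : c ≠ a) (hcb : c ≠ b) (hda : d ≠ a) (hdb : d ≠ b) (hcd : c ≠ d)
    (hpq : p ≠ q)
    (hn2 : swap p q ≠ swap a b) (hd23 : swap p q ≠ swap c d)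
    (h : swap x1 y1 * swap p q * swap c d = swap a b) : False := by
  have hE : swap x1 y1 = swap a b * swap c d * swap p q := by
    rw [← h]; simp [mul_assoc, Equiv.swap_mul_self_mul, Equiv.swap_mul_self, mul_one]
  have hKz : ∀ z, swap x1 y1 z = swap a b (swap c d (swap p q z)) := by
    intro z; rw [hE]; simp [Equiv.Perm.mul_apply]
  have base : ∀ z, z ≠ p → z ≠ q → (z = a ∨ z = b ∨ z = c ∨ z = d) → swap x1 y1 z ≠ z := by
    intro z hzp hzq hz
    rw [hKz, swap_apply_of_ne_of_ne hzp hzq]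
    rcases hz with rfl | rfl | rfl | rfl
    · rw [swap_apply_of_ne_of_ne (Ne.symm hca) (Ne.symm hda), swap_apply_left]
      exact Ne.symm hab
    · rw [swap_apply_of_ne_of_ne (Ne.symm hcb) (Ne.symm hdb), swap_apply_right]; exact hab
    · rw [swap_apply_left, swap_apply_of_ne_of_ne hda hdb]; exact Ne.symm hcd
    · rw [swap_apply_right, swap_apply_of_ne_of_ne hca hcb]; exact hcd
  by_cases hp : p = a ∨ p = b ∨ p = c ∨ p = d
  · by_cases hq : q = a ∨ q = b ∨ q = c ∨ q = d
    · rcases hp with rfl | rfl | rfl | rfl <;> rcases hq with rfl | rfl | rfl | rfl <;>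
        first
          | exact hpq rfl
          | exact hn2 rfl
          | exact hn2 (swap_comm _ _)
          | exact hd23 rfl
          | exact hd23 (swap_comm _ _)
          | exact three_moved hab (Ne.symm hca) (Ne.symm hcb)
              (by rw [hKz]; simp [swap_apply_def, hab, hca, hcb, hda, hdb, hcd,
                Ne.symm hab, Ne.symm hca, Ne.symm hcb, Ne.symm hda, Ne.symm hdb, Ne.symm hcd])
              (by rw [hKz]; simp [swap_apply_def, hab, hca, hcb, hda, hdb, hcd,
                Ne.symm hab, Ne.symm hca, Ne.symm hcb, Ne.symm hda, Ne.symm hdb, Ne.symm hcd])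
              (by rw [hKz]; simp [swap_apply_def, hab, hca, hcb, hda, hdb, hcd,
                Ne.symm hab, Ne.symm hca, Ne.symm hcb, Ne.symm hda, Ne.symm hdb, Ne.symm hcd])
    · push_neg at hq; obtain ⟨hqa, hqb, hqc, hqd⟩ := hq
      rcases hp with rfl | rfl | rfl | rfl
      · exact three_moved (Ne.symm hcb) (Ne.symm hdb) hcd
          (base b (Ne.symm hab) (Ne.symm hqb) (Or.inr (Or.inl rfl)))
          (base c hca (Ne.symm hqc) (Or.inr (Or.inr (Or.inl rfl))))
          (base d hda (Ne.symm hqd) (Or.inr (Or.inr (Or.inr rfl))))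
      · exact three_moved (Ne.symm hca) (Ne.symm hda) hcd
          (base a hab (Ne.symm hqa) (Or.inl rfl))
          (base c hcb (Ne.symm hqc) (Or.inr (Or.inr (Or.inl rfl))))
          (base d hdb (Ne.symm hqd) (Or.inr (Or.inr (Or.inr rfl))))
      · exact three_moved hab (Ne.symm hda) (Ne.symm hdb)
          (base a (Ne.symm hca) (Ne.symm hqa) (Or.inl rfl))
          (base b (Ne.symm hcb) (Ne.symm hqb) (Or.inr (Or.inl rfl)))
          (base d (Ne.symm hcd) (Ne.symm hqd) (Or.inr (Or.inr (Or.inr rfl))))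
      · exact three_moved hab (Ne.symm hca) (Ne.symm hcb)
          (base a (Ne.symm hda) (Ne.symm hqa) (Or.inl rfl))
          (base b (Ne.symm hdb) (Ne.symm hqb) (Or.inr (Or.inl rfl)))
          (base c hcd (Ne.symm hqc) (Or.inr (Or.inr (Or.inl rfl))))
  · push_neg at hp; obtain ⟨hpa, hpb, hpc, hpd⟩ := hp
    by_cases hq : q = a ∨ q = b ∨ q = c ∨ q = d
    · rcases hq with rfl | rfl | rfl | rfl
      · exact three_moved (Ne.symm hcb) (Ne.symm hdb) hcd
          (base b (Ne.symm hpb) (Ne.symm hab) (Or.inr (Or.inl rfl)))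
          (base c (Ne.symm hpc) hca (Or.inr (Or.inr (Or.inl rfl))))
          (base d (Ne.symm hpd) hda (Or.inr (Or.inr (Or.inr rfl))))
      · exact three_moved (Ne.symm hca) (Ne.symm hda) hcd
          (base a (Ne.symm hpa) hab (Or.inl rfl))
          (base c (Ne.symm hpc) hcb (Or.inr (Or.inr (Or.inl rfl))))
          (base d (Ne.symm hpd) hdb (Or.inr (Or.inr (Or.inr rfl))))
      · exact three_moved hab (Ne.symm hda) (Ne.symm hdb)
          (base a (Ne.symm hpa) (Ne.symm hca) (Or.inl rfl))
          (base b (Ne.symm hpb) (Ne.symm hcb) (Or.inr (Or.inl rfl)))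
          (base d (Ne.symm hpd) (Ne.symm hcd) (Or.inr (Or.inr (Or.inr rfl))))
      · exact three_moved hab (Ne.symm hca) (Ne.symm hcb)
          (base a (Ne.symm hpa) (Ne.symm hda) (Or.inl rfl))
          (base b (Ne.symm hpb) (Ne.symm hdb) (Or.inr (Or.inl rfl)))
          (base c (Ne.symm hpc) hcd (Or.inr (Or.inr (Or.inl rfl))))
    · push_neg at hq; obtain ⟨hqa, hqb, hqc, hqd⟩ := hq
      exact three_moved hab (Ne.symm hca) (Ne.symm hcb)
        (base a (Ne.symm hpa) (Ne.symm hqa) (Or.inl rfl))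
        (base b (Ne.symm hpb) (Ne.symm hqb) (Or.inr (Or.inl rfl)))
        (base c (Ne.symm hpc) (Ne.symm hqc) (Or.inr (Or.inr (Or.inl rfl))))

private theorem key3 {α : Type*} [DecidableEq α] (a b x1 y1 x2 y2 x3 y3 : α)
    (hab : a ≠ b) (h1 : x1 ≠ y1) (h2 : x2 ≠ y2) (h3 : x3 ≠ y3)
    (hn2 : swap x2 y2 ≠ swap a b) (hn3 : swap x3 y3 ≠ swap a b)
    (hd13 : swap x1 y1 ≠ swap x3 y3) (hd23 : swap x2 y2 ≠ swap x3 y3)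
    (h : swap x1 y1 * swap x2 y2 * swap x3 y3 = swap a b) : False := by
  by_cases hx3a : x3 = a
  · rw [hx3a] at h3 hn3 hd13 hd23 h
    by_cases hy3b : y3 = b
    · rw [hy3b] at hn3; exact hn3 rfl
    · refine aux1 b a y3 x1 y1 x2 y2 (Ne.symm hab) hy3b (Ne.symm h3) h1 h2 ?_ hd13 hd23 ?_
      · rw [swap_comm b a]; exact hn2
      · rw [swap_comm b a]; exact h
  · by_cases hx3b : x3 = b
    · rw [hx3b] at h3 hn3 hd13 hd23 h
      by_cases hy3a : y3 = a
      · rw [hy3a] at hn3; exact hn3 (swap_comm _ _)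
      · exact aux1 a b y3 x1 y1 x2 y2 hab hy3a (Ne.symm h3) h1 h2 hn2 hd13 hd23 h
    · by_cases hy3a : y3 = a
      · rw [hy3a] at h3 hn3 hd13 hd23 h
        rw [swap_comm x3 a] at h hd13 hd23
        refine aux1 b a x3 x1 y1 x2 y2 (Ne.symm hab) hx3b hx3a h1 h2 ?_ hd13 hd23 ?_
        · rw [swap_comm b a]; exact hn2
        · rw [swap_comm b a]; exact h
      · by_cases hy3b : y3 = b
        · rw [hy3b] at h3 hn3 hd13 hd23 h
          rw [swap_comm x3 b] at h hd13 hd23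
          exact aux1 a b x3 x1 y1 x2 y2 hab hx3a hx3b h1 h2 hn2 hd13 hd23 h
        · exact aux0 a b x3 y3 x1 y1 x2 y2 hab hx3a hx3b hy3a hy3b h3 h2 hn2 hd23 h

/-- A transposition `(1 2)` cannot be written as the product of a list of fewer
than 5 pairwise distinct transpositions none of which equals `(1 2)`. -/
theorem five_le_of_prod_eq_swap {α : Type*} [Fintype α] [DecidableEq α]
    (a b : α) (hab : a ≠ b)
    (l : List (Equiv.Perm α)) (u : ℕ)
    (hsw : ∀ τ ∈ l, τ.IsSwap) (hnd : l.Nodup)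
    (hne : ∀ τ ∈ l, τ ≠ Equiv.swap a b)
    (hprod : l.prod = Equiv.swap a b) (hu : l.length = u) :
    5 ≤ u := by
  subst hu
  -- parity : the length is odd
  have hs := Equiv.Perm.sign_prod_list_swap hsw
  rw [hprod, Equiv.Perm.sign_swap hab] at hs
  have hodd : Odd l.length := by
    rcases Nat.even_or_odd l.length with he | ho
    · rw [he.neg_one_pow] at hs; exact absurd hs (by decide)
    · exact ho
  have hne1 : l.length ≠ 1 := by
    intro hlen
    obtain ⟨t, rfl⟩ := List.length_eq_one_iff.mp hlen
    simp only [List.prod_cons, List.prod_nil, mul_one] at hprod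
    exact hne t (by simp) hprod
  have hne3 : l.length ≠ 3 := by
    intro hlen
    obtain ⟨t1, t2, t3, rfl⟩ := List.length_eq_three.mp hlen
    obtain ⟨x1, y1, hxy1, rfl⟩ := hsw t1 (by simp)
    obtain ⟨x2, y2, hxy2, rfl⟩ := hsw t2 (by simp)
    obtain ⟨x3, y3, hxy3, rfl⟩ := hsw t3 (by simp)
    simp only [List.prod_cons, List.prod_nil, mul_one, ← mul_assoc] at hprod
    simp only [List.nodup_cons, List.mem_cons, List.mem_singleton, List.not_mem_nil,
      not_or] at hnd
    exact key3 a b x1 y1 x2 y2 x3 y3 hab hxy1 hxy2 hxy3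
      (hne _ (by simp)) (hne _ (by simp)) hnd.1.2.1 hnd.2.1.1 hprod
  obtain ⟨k, hk⟩ := hodd
  omega
end

section
/- No product of a list of 4 pairwise distinct transpositions of a finite type equals the identity permutation. -/
open Equiv Equiv.Perm Finset

private lemma swap_eq_of_apply' {α : Type*} [DecidableEq α] {f : Equiv.Perm α}
    (hf : f.IsSwap) {x : α} (hx : f x ≠ x) : f = Equiv.swap x (f x) := by
  obtain ⟨p, q, hpq, rfl⟩ := hf
  rcases eq_or_ne x p with rfl | hxp
  · simp
  rcases eq_or_ne x q with rfl | hxq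
  · rw [Equiv.swap_apply_right, Equiv.swap_comm]
  · simp [Equiv.swap_apply_of_ne_of_ne hxp hxq] at hx

private lemma swap_eq_of_support_eq' {α : Type*} [Fintype α] [DecidableEq α]
    {f g : Equiv.Perm α} (hf : f.IsSwap) (hg : g.IsSwap)
    (h : f.support = g.support) : f = g := by
  obtain ⟨p, q, hpq, rfl⟩ := hf
  have hps : p ∈ g.support := by
    rw [← h, Equiv.Perm.support_swap hpq]; simp
  have hgp : g p ≠ p := Equiv.Perm.mem_support.1 hps
  have hgps : g p ∈ g.support := Equiv.Perm.apply_mem_support.2 hps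
  have hgq : g p = q := by
    rw [← h, Equiv.Perm.support_swap hpq] at hgps
    rcases Finset.mem_insert.1 hgps with h1 | h1
    · exact absurd h1 hgp
    · exact Finset.mem_singleton.1 h1
  have := swap_eq_of_apply' hg hgp
  rw [hgq] at this
  exact this.symm

private lemma isSwap_inv_eq' {α : Type*} [DecidableEq α] {f : Equiv.Perm α}
    (hf : f.IsSwap) : f⁻¹ = f := by
  obtain ⟨p, q, hpq, rfl⟩ := hf
  exact Equiv.swap_inv p q

private lemma support_left_subset' {α : Type*} [Fintype α] [DecidableEq α]
    {c d : Equiv.Perm α} (hc : c.IsSwap) (hd : d.IsSwap) (hcd : c ≠ d) :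
    c.support ⊆ (c * d).support := by
  intro x hx
  rw [Equiv.Perm.mem_support] at hx ⊢
  intro hfix
  -- hfix : c (d x) = x
  rw [Equiv.Perm.mul_apply] at hfix
  have hdx : d x = c x := by
    have h' : d x = c⁻¹ x := Equiv.Perm.eq_inv_iff_eq.2 hfix
    rwa [isSwap_inv_eq' hc] at h'
  have hdx' : d x ≠ x := by rw [hdx]; exact hx
  have h1 : c = Equiv.swap x (c x) := swap_eq_of_apply' hc hx
  have h2 : d = Equiv.swap x (c x) := by rw [← hdx]; exact swap_eq_of_apply' hd hdx'
  exact hcd (h1.trans h2.symm)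

private lemma support_right_subset' {α : Type*} [Fintype α] [DecidableEq α]
    {c d : Equiv.Perm α} (hc : c.IsSwap) (hd : d.IsSwap) (hcd : c ≠ d) :
    d.support ⊆ (c * d).support := by
  intro x hx
  rw [Equiv.Perm.mem_support] at hx ⊢
  intro hfix
  rw [Equiv.Perm.mul_apply] at hfix
  have hcdx : c (d x) ≠ d x := by rw [hfix]; exact Ne.symm hx
  have h1 : c = Equiv.swap (d x) x := by
    have := swap_eq_of_apply' hc hcdx
    rwa [hfix] at this
  have h2 : d = Equiv.swap (d x) x := by
    have := swap_eq_of_apply' hd hx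
    rwa [Equiv.swap_comm] at this
  exact hcd (h1.trans h2.symm)

private lemma key' {α : Type*} [Fintype α] [DecidableEq α] {a b c d : Equiv.Perm α}
    (ha : a.IsSwap) (hb : b.IsSwap) (hc : c.IsSwap) (hd : d.IsSwap)
    (hab : a ≠ b) (hcd : c ≠ d) (hac : a ≠ c) (had : a ≠ d) (hbc : b ≠ c) (hbd : b ≠ d)
    (h : a * b = c * d) : False := by
  have hca : a.support.card = 2 := Equiv.Perm.card_support_eq_two.2 ha
  have hcb : b.support.card = 2 := Equiv.Perm.card_support_eq_two.2 hb
  have hcc : c.support.card = 2 := Equiv.Perm.card_support_eq_two.2 hc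
  have hcd2 : d.support.card = 2 := Equiv.Perm.card_support_eq_two.2 hd
  have hsa : a.support ⊆ (a * b).support := support_left_subset' ha hb hab
  have hsb : b.support ⊆ (a * b).support := support_right_subset' ha hb hab
  have hsc : c.support ⊆ (a * b).support := by rw [h]; exact support_left_subset' hc hd hcd
  have hsd : d.support ⊆ (a * b).support := by rw [h]; exact support_right_subset' hc hd hcd
  set S := (a * b).support with hS
  have hsub : S ⊆ a.support ∪ b.support := Equiv.Perm.support_mul_le a b
  have hsub' : S ⊆ c.support ∪ d.support := by rw [hS, h]; exact Equiv.Perm.support_mul_le c d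
  have hS4 : S.card ≤ 4 := by
    calc S.card ≤ (a.support ∪ b.support).card := Finset.card_le_card hsub
    _ ≤ a.support.card + b.support.card := Finset.card_union_le _ _
    _ = 4 := by rw [hca, hcb]
  have hS2 : 2 ≤ S.card := by
    have hne : a * b ≠ 1 := by
      intro h1
      have h2 : a = b⁻¹ := eq_inv_of_mul_eq_one_left h1
      rw [isSwap_inv_eq' hb] at h2
      exact hab h2
    exact Equiv.Perm.one_lt_card_support_of_ne_one hne
  have htri : S.card = 2 ∨ S.card = 3 ∨ S.card = 4 := by omega
  rcases htri with h2 | h3 | h4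
  · -- card 2 : a and b have the same support
    have ea : a.support = S := Finset.eq_of_subset_of_card_le hsa (by rw [hca, h2])
    have eb : b.support = S := Finset.eq_of_subset_of_card_le hsb (by rw [hcb, h2])
    exact hab (swap_eq_of_support_eq' ha hb (ea.trans eb.symm))
  · -- card 3 : pigeonhole among 2-subsets of a 3-set
    have nab : a.support ≠ b.support := fun e => hab (swap_eq_of_support_eq' ha hb e)
    have nac : a.support ≠ c.support := fun e => hac (swap_eq_of_support_eq' ha hc e)
    have nad : a.support ≠ d.support := fun e => had (swap_eq_of_support_eq' ha hd e)
    have nbc : b.support ≠ c.support := fun e => hbc (swap_eq_of_support_eq' hb hc e)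
    have nbd : b.support ≠ d.support := fun e => hbd (swap_eq_of_support_eq' hb hd e)
    have ncd : c.support ≠ d.support := fun e => hcd (swap_eq_of_support_eq' hc hd e)
    set T : Finset (Finset α) := {a.support, b.support, c.support, d.support} with hT
    have hTsub : T ⊆ S.powersetCard 2 := by
      intro s hs
      rw [Finset.mem_powersetCard]
      simp only [hT, Finset.mem_insert, Finset.mem_singleton] at hs
      rcases hs with rfl | rfl | rfl | rfl
      · exact ⟨hsa, hca⟩
      · exact ⟨hsb, hcb⟩
      · exact ⟨hsc, hcc⟩
      · exact ⟨hsd, hcd2⟩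
    have hTcard : T.card = 4 := by
      rw [hT]
      rw [Finset.card_insert_of_notMem (by simp [nab, nac, nad]),
        Finset.card_insert_of_notMem (by simp [nbc, nbd]),
        Finset.card_insert_of_notMem (by simp [ncd]),
        Finset.card_singleton]
    have hle := Finset.card_le_card hTsub
    rw [hTcard, Finset.card_powersetCard, h3] at hle
    norm_num at hle
  · -- card 4 : disjoint supports
    have hUab : a.support ∪ b.support = S :=
      Finset.Subset.antisymm (Finset.union_subset hsa hsb) hsub
    have hUcd : c.support ∪ d.support = S :=
      Finset.Subset.antisymm (Finset.union_subset hsc hsd) hsub'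
    have hdab : Disjoint a.support b.support := by
      have hcu := Finset.card_union_add_card_inter a.support b.support
      rw [hUab, h4, hca, hcb] at hcu
      have : (a.support ∩ b.support).card = 0 := by omega
      rw [Finset.card_eq_zero] at this
      exact Finset.disjoint_iff_inter_eq_empty.2 this
    have hdcd : Disjoint c.support d.support := by
      have hcu := Finset.card_union_add_card_inter c.support d.support
      rw [hUcd, h4, hcc, hcd2] at hcu
      have : (c.support ∩ d.support).card = 0 := by omega
      rw [Finset.card_eq_zero] at this
      exact Finset.disjoint_iff_inter_eq_empty.2 this
    obtain ⟨x, hx⟩ : c.support.Nonempty := Finset.card_pos.1 (by rw [hcc]; norm_num)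
    have hxd : x ∉ d.support := Finset.disjoint_left.1 hdcd hx
    have hcx : c x ≠ x := Equiv.Perm.mem_support.1 hx
    have hdx : d x = x := Equiv.Perm.notMem_support.1 hxd
    have heq : (a * b) x = c x := by rw [h, Equiv.Perm.mul_apply, hdx]
    have hxS : x ∈ S := hsc hx
    rcases Finset.mem_union.1 (hsub hxS) with hxa | hxb
    · have hxb : x ∉ b.support := Finset.disjoint_left.1 hdab hxa
      have hbx : b x = x := Equiv.Perm.notMem_support.1 hxb
      have hax : a x = c x := by rw [← heq, Equiv.Perm.mul_apply, hbx]
      have hax' : a x ≠ x := Equiv.Perm.mem_support.1 hxa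
      have e1 : a = Equiv.swap x (a x) := swap_eq_of_apply' ha hax'
      have e2 : c = Equiv.swap x (c x) := swap_eq_of_apply' hc hcx
      rw [hax] at e1
      exact hac (e1.trans e2.symm)
    · have hbx : b x ≠ x := Equiv.Perm.mem_support.1 hxb
      have hbxm : b x ∈ b.support := Equiv.Perm.apply_mem_support.2 hxb
      have hbxa : b x ∉ a.support := Finset.disjoint_right.1 hdab hbxm
      have habx : a (b x) = b x := Equiv.Perm.notMem_support.1 hbxa
      have hbxc : b x = c x := by rw [← heq, Equiv.Perm.mul_apply, habx]
      have e1 : b = Equiv.swap x (b x) := swap_eq_of_apply' hb hbx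
      have e2 : c = Equiv.swap x (c x) := swap_eq_of_apply' hc hcx
      rw [hbxc] at e1
      exact hbc (e1.trans e2.symm)

/-- No product of a list of 4 pairwise distinct transpositions of a finite type
equals the identity permutation. -/
theorem prod_four_distinct_swaps_ne_one {α : Type*} [Fintype α] [DecidableEq α]
    (l : List (Equiv.Perm α))
    (hlen : l.length = 4) (hnd : l.Nodup) (hsw : ∀ τ ∈ l, τ.IsSwap) :
    l.prod ≠ 1 := by
  match l, hlen with
  | [a, b, c, d], _ =>
    simp only [List.nodup_cons, List.mem_cons, List.mem_singleton, List.not_mem_nil,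
      List.nodup_nil, not_or, List.mem_nil_iff, or_false, and_true] at hnd
    obtain ⟨⟨hab, hac, had⟩, ⟨hbc, hbd⟩, hcd, -⟩ := hnd
    have ha : a.IsSwap := hsw a (by simp)
    have hb : b.IsSwap := hsw b (by simp)
    have hc : c.IsSwap := hsw c (by simp)
    have hd : d.IsSwap := hsw d (by simp)
    intro hprod
    rw [List.prod_cons, List.prod_cons, List.prod_cons, List.prod_singleton] at hprod
    have h1 : (a * b) * (c * d) = 1 := by
      rw [← hprod]; group
    have h2 : a * b = (c * d)⁻¹ := eq_inv_of_mul_eq_one_left h1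
    rw [mul_inv_rev, isSwap_inv_eq' hc, isSwap_inv_eq' hd] at h2
    exact key' ha hb hd hc hab (Ne.symm hcd) had hac hbd hbc h2
end

section
/- For every n ≥ 5, if a list of pairwise distinct transpositions in the symmetric group on {1, ..., n}, none equal to (1 2), has product equal to (1 2)(3 4 5 ... n), then the list has length at least n. Consequently the minimal number of such transpositions needed is exactly n. -/
open Equiv Equiv.Perm Relation List

namespace MinUndo

open scoped Classical

def erel (l : List (Perm ℕ)) (x y : ℕ) : Prop := ∃ τ ∈ l, τ x = y

theorem erel_mono {l l' : List (Perm ℕ)} (h : ∀ τ ∈ l, τ ∈ l') {x y : ℕ}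
    (hxy : EqvGen (erel l) x y) : EqvGen (erel l') x y :=
  Relation.EqvGen.mono (r := erel l) (p := erel l') (fun _ _ ⟨τ, hτ, he⟩ => ⟨τ, h τ hτ, he⟩) x y hxy

theorem prod_erel (l : List (Perm ℕ)) (x : ℕ) : EqvGen (erel l) x (l.prod x) := by
  induction l generalizing x with
  | nil => simpa using EqvGen.refl x
  | cons τ t ih =>
    have h1 : EqvGen (erel (τ :: t)) x (t.prod x) :=
      erel_mono (fun g hg => List.mem_cons_of_mem _ hg) (ih x)
    have h2 : EqvGen (erel (τ :: t)) (t.prod x) (τ (t.prod x)) :=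
      EqvGen.rel _ _ ⟨τ, List.mem_cons_self, rfl⟩
    simpa using EqvGen.trans _ _ _ h1 h2

/-- structure of the equivalence after adding one swap -/
theorem cons_swap_erel {a b : ℕ} {t : List (Perm ℕ)} {x y : ℕ}
    (h : EqvGen (erel (Equiv.swap a b :: t)) x y) :
    EqvGen (erel t) x y ∨
      ((EqvGen (erel t) x a ∨ EqvGen (erel t) x b) ∧
        (EqvGen (erel t) y a ∨ EqvGen (erel t) y b)) := by
  induction h with
  | rel u v huv =>
    obtain ⟨τ, hτ, he⟩ := huv
    rcases List.mem_cons.1 hτ with h1 | h1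
    · subst h1
      rcases eq_or_ne u a with rfl | hua
      · rw [Equiv.swap_apply_left] at he
        subst he
        exact Or.inr ⟨Or.inl (EqvGen.refl u), Or.inr (EqvGen.refl _)⟩
      rcases eq_or_ne u b with rfl | hub
      · rw [Equiv.swap_apply_right] at he
        subst he
        exact Or.inr ⟨Or.inr (EqvGen.refl u), Or.inl (EqvGen.refl _)⟩
      · rw [Equiv.swap_apply_of_ne_of_ne hua hub] at he
        exact Or.inl (he ▸ EqvGen.refl u)
    · exact Or.inl (EqvGen.rel _ _ ⟨τ, h1, he⟩)
  | refl u => exact Or.inl (EqvGen.refl u)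
  | symm u v _ ih =>
    rcases ih with h | ⟨h1, h2⟩
    · exact Or.inl (EqvGen.symm _ _ h)
    · exact Or.inr ⟨h2, h1⟩
  | trans u v w _ _ ih1 ih2 =>
    rcases ih1 with h1 | ⟨h1, h1'⟩
    · rcases ih2 with h2 | ⟨h2, h2'⟩
      · exact Or.inl (EqvGen.trans _ _ _ h1 h2)
      · refine Or.inr ⟨?_, h2'⟩
        rcases h2 with h2 | h2
        · exact Or.inl (EqvGen.trans _ _ _ h1 h2)
        · exact Or.inr (EqvGen.trans _ _ _ h1 h2)
    · rcases ih2 with h2 | ⟨h2, h2'⟩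
      · refine Or.inr ⟨h1, ?_⟩
        rcases h1' with h | h
        · exact Or.inl (EqvGen.trans _ _ _ (EqvGen.symm _ _ h2) h)
        · exact Or.inr (EqvGen.trans _ _ _ (EqvGen.symm _ _ h2) h)
      · exact Or.inr ⟨h1, h2'⟩

theorem card_le_classes (l : List (Perm ℕ)) (hl : ∀ τ ∈ l, IsSwap τ) (U : Finset ℕ) :
    U.card ≤ (U.image (Quot.mk (erel l))).card + l.length := by
  induction l with
  | nil =>
    have hinj : Function.Injective (Quot.mk (erel ([] : List (Perm ℕ)))) := by
      intro x y h
      have h2 := Quot.eqvGen_exact h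
      clear h
      induction h2 with
      | rel a b hab => obtain ⟨τ, hτ, -⟩ := hab; exact absurd hτ List.not_mem_nil
      | refl => rfl
      | symm a b _ ih => exact ih.symm
      | trans a b c _ _ ih1 ih2 => exact ih1.trans ih2
    rw [Finset.card_image_of_injective _ hinj]
    simp
  | cons τ t ih =>
    obtain ⟨a, b, hab, rfl⟩ := hl τ (List.mem_cons_self)
    have ih' := ih fun g hg => hl g (List.mem_cons_of_mem _ hg)
    set g : Quot (erel t) → Quot (erel (Equiv.swap a b :: t)) :=
      Quot.map id (fun x y ⟨τ', h, he⟩ => ⟨τ', List.mem_cons_of_mem _ h, he⟩) with hg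
    set T := U.image (Quot.mk (erel t)) with hT
    have himg : U.image (Quot.mk (erel (Equiv.swap a b :: t))) = T.image g := by
      rw [hT, Finset.image_image]
      rfl
    have hinjOn : Set.InjOn g (T.erase (Quot.mk (erel t) a)) := by
      intro u hu v hv huv
      obtain ⟨x, rfl⟩ := u.exists_rep
      obtain ⟨y, rfl⟩ := v.exists_rep
      have hx : Quot.mk (erel t) x ≠ Quot.mk (erel t) a := (Finset.mem_erase.1 hu).1
      have hy : Quot.mk (erel t) y ≠ Quot.mk (erel t) a := (Finset.mem_erase.1 hv).1
      have huv' : EqvGen (erel (Equiv.swap a b :: t)) x y := Quot.eqvGen_exact huv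
      rcases cons_swap_erel huv' with h | ⟨h1, h2⟩
      · exact Quot.eqvGen_sound h
      · rcases h1 with h1 | h1
        · exact absurd (Quot.eqvGen_sound h1) hx
        rcases h2 with h2 | h2
        · exact absurd (Quot.eqvGen_sound h2) hy
        exact (Quot.eqvGen_sound h1).trans (Quot.eqvGen_sound h2).symm
    have e1 : T.card ≤ (T.erase (Quot.mk (erel t) a)).card + 1 := by
      have hsub : T ⊆ insert (Quot.mk (erel t) a) (T.erase (Quot.mk (erel t) a)) :=
        Finset.subset_insert_iff.mpr (le_refl _)
      exact (Finset.card_le_card hsub).trans (Finset.card_insert_le _ _)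
    have e2 : ((T.erase (Quot.mk (erel t) a)).image g).card
        = (T.erase (Quot.mk (erel t) a)).card := Finset.card_image_of_injOn hinjOn
    have e3 : (T.erase (Quot.mk (erel t) a)).image g ⊆ T.image g :=
      Finset.image_subset_image (Finset.erase_subset _ _)
    have e4 := Finset.card_le_card e3
    rw [himg]
    simp only [List.length_cons]
    omega

theorem connected_card_le (l : List (Perm ℕ)) (hl : ∀ τ ∈ l, IsSwap τ) (S : Finset ℕ)
    (x0 : ℕ) (hS : ∀ x ∈ S, EqvGen (erel l) x x0) : S.card ≤ l.length + 1 := by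
  have himg : S.image (Quot.mk (erel l)) ⊆ {Quot.mk (erel l) x0} := by
    intro u hu
    obtain ⟨x, hx, rfl⟩ := Finset.mem_image.1 hu
    simpa using Quot.eqvGen_sound (hS x hx)
  have h1 := card_le_classes l hl S
  have h2 := Finset.card_le_card himg
  simp only [Finset.card_singleton] at h2
  omega


theorem prod_split {G : Type*} [Group G] (p : G → Bool) :
    ∀ (l : List G), (∀ x ∈ l, ∀ y ∈ l, p x → ¬ p y → Commute x y) →
      l.prod = (l.filter p).prod * (l.filter fun x => ! p x).prod := by
  intro l
  induction l with
  | nil => simp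
  | cons a t ih =>
    intro hc
    have ih' := ih fun x hx y hy => hc x (mem_cons_of_mem _ hx) y (mem_cons_of_mem _ hy)
    by_cases ha : p a
    · rw [List.prod_cons, ih', List.filter_cons_of_pos ha, List.filter_cons_of_neg (by simp [ha]),
        List.prod_cons, mul_assoc]
    · rw [List.prod_cons, ih', List.filter_cons_of_neg (by simpa using ha),
        List.filter_cons_of_pos (by simpa using ha), List.prod_cons]
      have hcomm : Commute a (t.filter p).prod := by
        refine (Commute.list_prod_right _ _ ?_).symm.symm
        intro y hy
        exact (hc y (mem_cons_of_mem _ (List.mem_of_mem_filter hy)) a mem_cons_self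
          (by simpa using List.of_mem_filter hy) ha).symm
      rw [← mul_assoc, hcomm.eq, mul_assoc]

theorem prod_fix (l : List (Equiv.Perm ℕ)) (x : ℕ) (h : ∀ τ ∈ l, τ x = x) : l.prod x = x := by
  induction l with
  | nil => simp
  | cons a t ih =>
    rw [List.prod_cons, Equiv.Perm.mul_apply, ih fun τ hτ => h τ (mem_cons_of_mem _ hτ),
      h a mem_cons_self]



theorem adj_prod_eq_formPerm (m : ℕ) : ∀ (a : ℕ),
    ((List.range' a m).map fun i => Equiv.swap i (i + 1)).prod
      = (List.range' a (m + 1)).formPerm := by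
  induction m with
  | zero => intro a; simp [List.range'_succ]
  | succ m ih =>
    intro a
    rw [List.range'_succ, List.map_cons, List.prod_cons, ih (a + 1)]
    have h1 : List.range' a (m + 1 + 1) = a :: List.range' (a + 1) (m + 1) := List.range'_succ ..
    have h2 : List.range' (a + 1) (m + 1) = (a + 1) :: List.range' (a + 2) m := List.range'_succ ..
    rw [h1, h2, List.formPerm_cons_cons, ← h2]

theorem formPerm_range'_apply_of_lt : ∀ (m : ℕ) {a k : ℕ}, a ≤ k → k + 1 < a + m →
    (List.range' a m).formPerm k = k + 1
  | 0, a, k, h1, h2 => absurd h2 (by omega)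
  | 1, a, k, h1, h2 => absurd h2 (by omega)
  | (m+2), a, k, h1, h2 => by
    have h1' : List.range' a (m + 2) = a :: List.range' (a + 1) (m + 1) := List.range'_succ ..
    have h2' : List.range' (a + 1) (m + 1) = (a + 1) :: List.range' (a + 2) m := List.range'_succ ..
    rw [h1', h2', List.formPerm_cons_cons, ← h2']
    rcases eq_or_ne k a with rfl | hka
    · rw [Equiv.Perm.mul_apply,
        List.formPerm_apply_of_notMem (by simp [List.mem_range'_1]),
        Equiv.swap_apply_left]
    · rw [Equiv.Perm.mul_apply, formPerm_range'_apply_of_lt (m + 1) (by omega) (by omega),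
        Equiv.swap_apply_of_ne_of_ne (by omega) (by omega)]

theorem formPerm_range'_apply_last (m : ℕ) : ∀ (a : ℕ),
    (List.range' a (m + 1)).formPerm (a + m) = a := by
  induction m with
  | zero => intro a; simp
  | succ m ih =>
    intro a
    have h1 : List.range' a (m + 1 + 1) = a :: List.range' (a + 1) (m + 1) := List.range'_succ ..
    have h2 : List.range' (a + 1) (m + 1) = (a + 1) :: List.range' (a + 2) m := List.range'_succ ..
    rw [h1, h2, List.formPerm_cons_cons, ← h2, Equiv.Perm.mul_apply,
      show a + (m + 1) = (a + 1) + m by omega, ih (a + 1), Equiv.swap_apply_right]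



theorem ofSubtype_injective {p : ℕ → Prop} [DecidablePred p]
    {f g : Equiv.Perm (Subtype p)} (h : ofSubtype f = ofSubtype g) : f = g := by
  ext x
  have h2 := congrArg (fun σ : Equiv.Perm ℕ => σ (x : ℕ)) h
  simp only [ofSubtype_apply_coe] at h2
  exact h2

/-- transfer a list of swaps with endpoints in `Icc 1 n` to the subtype -/
noncomputable def subSwaps (n : ℕ) (l : List (Equiv.Perm ℕ))
    (h : ∀ τ ∈ l, ∃ a b : ℕ, a ∈ Finset.Icc 1 n ∧ b ∈ Finset.Icc 1 n ∧ a ≠ b ∧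
      τ = Equiv.swap a b) : List (Equiv.Perm {x : ℕ // x ∈ Finset.Icc 1 n}) :=
  l.pmap (fun τ hτ =>
    Equiv.swap (⟨hτ.choose, hτ.choose_spec.choose_spec.1⟩ : {x : ℕ // x ∈ Finset.Icc 1 n})
      ⟨hτ.choose_spec.choose, hτ.choose_spec.choose_spec.2.1⟩) h

theorem subSwaps_length (n : ℕ) (l : List (Equiv.Perm ℕ)) (h : ∀ τ ∈ l, _) :
    (subSwaps n l h).length = l.length := List.length_pmap

theorem subSwaps_isSwap (n : ℕ) (l : List (Equiv.Perm ℕ)) (h : ∀ τ ∈ l, _) :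
    ∀ g ∈ subSwaps n l h, g.IsSwap := by
  intro g hg
  rw [subSwaps, List.mem_pmap] at hg
  obtain ⟨τ, hτ, rfl⟩ := hg
  refine ⟨_, _, ?_, rfl⟩
  intro hcontra
  exact (h τ hτ).choose_spec.choose_spec.2.2.1 (congrArg Subtype.val hcontra)

theorem subSwaps_map (n : ℕ) (l : List (Equiv.Perm ℕ)) (h : ∀ τ ∈ l, _) :
    (subSwaps n l h).map ofSubtype = l := by
  rw [subSwaps, List.map_pmap]
  have : ∀ τ (hτ : ∃ a b : ℕ, a ∈ Finset.Icc 1 n ∧ b ∈ Finset.Icc 1 n ∧ a ≠ b ∧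
      τ = Equiv.swap a b),
      ofSubtype (Equiv.swap (⟨hτ.choose, hτ.choose_spec.choose_spec.1⟩ :
        {x : ℕ // x ∈ Finset.Icc 1 n}) ⟨hτ.choose_spec.choose, hτ.choose_spec.choose_spec.2.1⟩)
        = τ := by
    intro τ hτ
    rw [ofSubtype_swap_eq]
    exact hτ.choose_spec.choose_spec.2.2.2.symm
  calc l.pmap (fun τ hτ => ofSubtype _) h = l.pmap (fun τ _ => τ) h :=
        List.pmap_congr_left l (fun τ _ hτ _ => this τ hτ)
  _ = l := by rw [List.pmap_eq_map]; exact List.map_id l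

theorem parity_eq (n : ℕ) (l1 l2 : List (Equiv.Perm ℕ))
    (h1 : ∀ τ ∈ l1, ∃ a b : ℕ, a ∈ Finset.Icc 1 n ∧ b ∈ Finset.Icc 1 n ∧ a ≠ b ∧
      τ = Equiv.swap a b)
    (h2 : ∀ τ ∈ l2, ∃ a b : ℕ, a ∈ Finset.Icc 1 n ∧ b ∈ Finset.Icc 1 n ∧ a ≠ b ∧
      τ = Equiv.swap a b)
    (hp : l1.prod = l2.prod) : ((-1 : ℤˣ) ^ l1.length) = (-1 : ℤˣ) ^ l2.length := by
  have key : (subSwaps n l1 h1).prod = (subSwaps n l2 h2).prod := by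
    apply ofSubtype_injective
    calc ofSubtype (subSwaps n l1 h1).prod = ((subSwaps n l1 h1).map ofSubtype).prod :=
          map_list_prod (ofSubtype : Equiv.Perm _ →* Equiv.Perm ℕ) _
    _ = l1.prod := by rw [subSwaps_map]
    _ = l2.prod := hp
    _ = ((subSwaps n l2 h2).map ofSubtype).prod := by rw [subSwaps_map]
    _ = ofSubtype (subSwaps n l2 h2).prod :=
          (map_list_prod (ofSubtype : Equiv.Perm _ →* Equiv.Perm ℕ) _).symm
  have s1 := Equiv.Perm.sign_prod_list_swap (subSwaps_isSwap n l1 h1)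
  have s2 := Equiv.Perm.sign_prod_list_swap (subSwaps_isSwap n l2 h2)
  rw [key, s2] at s1
  rw [← subSwaps_length n l1 h1, ← subSwaps_length n l2 h2, s1]

theorem neg_one_pow_eq_iff {a b : ℕ} (h : ((-1 : ℤˣ) ^ a) = (-1 : ℤˣ) ^ b) :
    a % 2 = b % 2 := by
  rcases Nat.even_or_odd a with ha | ha <;> rcases Nat.even_or_odd b with hb | hb
  · obtain ⟨c, rfl⟩ := ha; obtain ⟨d, rfl⟩ := hb; omega
  · rw [ha.neg_one_pow, hb.neg_one_pow] at h
    exact absurd h (by decide)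
  · rw [ha.neg_one_pow, hb.neg_one_pow] at h
    exact absurd h (by decide)
  · obtain ⟨c, rfl⟩ := ha; obtain ⟨d, rfl⟩ := hb; omega




theorem swap_eq_swap_iff' {a b c d : ℕ} (hab : a ≠ b) (h : Equiv.swap a b = Equiv.swap c d) :
    (c = a ∧ d = b) ∨ (c = b ∧ d = a) := by
  have hcd : c ≠ d := by
    rintro rfl
    rw [Equiv.swap_self] at h
    have h2 := congrArg (fun σ : Equiv.Perm ℕ => σ a) h
    simp at h2
    exact hab h2.symm
  have hc := congrArg (fun σ : Equiv.Perm ℕ => σ c) h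
  simp only [Equiv.swap_apply_left] at hc
  rcases eq_or_ne c a with rfl | hca
  · rw [Equiv.swap_apply_left] at hc
    exact Or.inl ⟨rfl, hc.symm⟩
  rcases eq_or_ne c b with rfl | hcb
  · rw [Equiv.swap_apply_right] at hc
    exact Or.inr ⟨rfl, hc.symm⟩
  · rw [Equiv.swap_apply_of_ne_of_ne hca hcb] at hc
    exact absurd hc hcd

theorem swap_triple : Equiv.swap 1 3 * (Equiv.swap 2 3 * Equiv.swap 1 3) = Equiv.swap 1 2 := by
  have h := Equiv.swap_apply_apply (Equiv.swap 1 3) 2 3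
  rw [Equiv.swap_apply_of_ne_of_ne (by norm_num) (by norm_num), Equiv.swap_apply_right,
    Equiv.swap_inv] at h
  rw [← mul_assoc, ← h, Equiv.swap_comm]

def W (n : ℕ) : List (Equiv.Perm ℕ) :=
  Equiv.swap 1 3 :: Equiv.swap 2 3 ::
    (((List.range' 3 (n - 3)).map fun i => Equiv.swap i (i + 1)) ++ [Equiv.swap 1 n])

theorem W_length (n : ℕ) (hn : 5 ≤ n) : (W n).length = n := by
  simp [W]
  omega

theorem W_prod (n : ℕ) (hn : 5 ≤ n) :
    (W n).prod = Equiv.swap 1 2 * (List.range' 3 (n - 2)).formPerm := by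
  have hA : ((List.range' 3 (n - 3)).map fun i => Equiv.swap i (i + 1)).prod
      = (List.range' 3 (n - 2)).formPerm := by
    have h := adj_prod_eq_formPerm (n - 3) 3
    rwa [show n - 3 + 1 = n - 2 by omega] at h
  set c := (List.range' 3 (n - 2)).formPerm with hc
  have hc1 : c 1 = 1 := List.formPerm_apply_of_notMem (by simp [List.mem_range'_1])
  have hcn : c n = 3 := by
    have h := formPerm_range'_apply_last (n - 3) 3
    rwa [show n - 3 + 1 = n - 2 by omega, show 3 + (n - 3) = n by omega] at h
  have e1 : c * Equiv.swap 1 n = Equiv.swap 1 3 * c := by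
    have h := Equiv.swap_apply_apply c 1 n
    rw [hc1, hcn] at h
    rw [h]
    group
  rw [W]
  simp only [List.prod_cons, List.prod_append, List.prod_cons, List.prod_nil, mul_one, hA, ← hc]
  rw [e1, ← mul_assoc, ← mul_assoc, mul_assoc (Equiv.swap 1 3) (Equiv.swap 2 3) (Equiv.swap 1 3),
    swap_triple]

theorem W_mem (n : ℕ) (hn : 5 ≤ n) : ∀ τ ∈ W n, ∃ a b : ℕ, a ∈ Finset.Icc 1 n ∧
    b ∈ Finset.Icc 1 n ∧ a ≠ b ∧ τ = Equiv.swap a b := by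
  intro τ hτ
  simp only [W, List.mem_cons, List.mem_append, List.mem_map, List.mem_singleton, List.not_mem_nil, or_false] at hτ
  rcases hτ with rfl | rfl | ⟨⟨i, hi, rfl⟩ | rfl⟩
  · exact ⟨1, 3, by simp; omega, by simp; omega, by omega, rfl⟩
  · exact ⟨2, 3, by simp; omega, by simp; omega, by omega, rfl⟩
  · rw [List.mem_range'_1] at hi
    exact ⟨i, i + 1, by simp; omega, by simp; omega, by omega, rfl⟩
  · exact ⟨1, n, by simp; omega, by simp; omega, by omega, rfl⟩

theorem W_ne (n : ℕ) (hn : 5 ≤ n) : ∀ τ ∈ W n, τ ≠ Equiv.swap 1 2 := by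
  intro τ hτ
  simp only [W, List.mem_cons, List.mem_append, List.mem_map, List.mem_singleton, List.not_mem_nil, or_false] at hτ
  rcases hτ with rfl | rfl | ⟨⟨i, hi, rfl⟩ | rfl⟩
  · intro h; rcases swap_eq_swap_iff' (by omega) h with ⟨h1, h2⟩ | ⟨h1, h2⟩ <;> omega
  · intro h; rcases swap_eq_swap_iff' (by omega) h with ⟨h1, h2⟩ | ⟨h1, h2⟩ <;> omega
  · rw [List.mem_range'_1] at hi
    intro h; rcases swap_eq_swap_iff' (by omega) h with ⟨h1, h2⟩ | ⟨h1, h2⟩ <;> omega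
  · intro h; rcases swap_eq_swap_iff' (by omega) h with ⟨h1, h2⟩ | ⟨h1, h2⟩ <;> omega

theorem W_nodup (n : ℕ) (hn : 5 ≤ n) : (W n).Nodup := by
  rw [W]
  refine List.nodup_cons.2 ⟨?_, List.nodup_cons.2 ⟨?_, ?_⟩⟩
  · simp only [List.mem_cons, List.mem_append, List.mem_map, List.mem_singleton,
      List.not_mem_nil, or_false]
    rintro (h | ⟨i, hi, h⟩ | h)
    · rcases swap_eq_swap_iff' (show (1:ℕ) ≠ 3 by omega) h with ⟨h1, h2⟩ | ⟨h1, h2⟩ <;> omega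
    · rw [List.mem_range'_1] at hi
      rcases swap_eq_swap_iff' (show i ≠ i + 1 by omega) h with ⟨h1, h2⟩ | ⟨h1, h2⟩ <;> omega
    · rcases swap_eq_swap_iff' (show (1:ℕ) ≠ 3 by omega) h with ⟨h1, h2⟩ | ⟨h1, h2⟩ <;> omega
  · simp only [List.mem_append, List.mem_map, List.mem_singleton,
      List.not_mem_nil, or_false]
    rintro (⟨i, hi, h⟩ | h)
    · rw [List.mem_range'_1] at hi
      rcases swap_eq_swap_iff' (show i ≠ i + 1 by omega) h with ⟨h1, h2⟩ | ⟨h1, h2⟩ <;> omega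
    · rcases swap_eq_swap_iff' (show (2:ℕ) ≠ 3 by omega) h with ⟨h1, h2⟩ | ⟨h1, h2⟩ <;> omega
  · refine List.Nodup.append ?_ (List.nodup_singleton _) ?_
    · refine List.Nodup.map_on ?_ List.nodup_range'
      intro i hi j hj h
      rw [List.mem_range'_1] at hi hj
      rcases swap_eq_swap_iff' (show i ≠ i + 1 by omega) h with ⟨h1, h2⟩ | ⟨h1, h2⟩ <;> omega
    · intro τ hτ hτ'
      rw [List.mem_singleton] at hτ'
      subst hτ'
      obtain ⟨i, hi, h⟩ := List.mem_map.1 hτ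
      rw [List.mem_range'_1] at hi
      rcases swap_eq_swap_iff' (show i ≠ i + 1 by omega) h with ⟨h1, h2⟩ | ⟨h1, h2⟩ <;> omega


theorem chain_to_three (n : ℕ) (m : List (Equiv.Perm ℕ))
    (hval : ∀ k, 3 ≤ k → k < n → m.prod k = k + 1) (hvaln : m.prod n = 3) :
    ∀ k, 3 ≤ k → k ≤ n → EqvGen (erel m) k 3 := by
  have hn3 : EqvGen (erel m) n 3 := hvaln ▸ prod_erel m n
  have key : ∀ d k, 3 ≤ k → k ≤ n → n - k ≤ d → EqvGen (erel m) k n := by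
    intro d
    induction d with
    | zero =>
      intro k h3 hkn hd
      have hk : k = n := by omega
      subst hk
      exact EqvGen.refl _
    | succ d ih =>
      intro k h3 hkn hd
      rcases eq_or_lt_of_le hkn with rfl | hlt
      · exact EqvGen.refl _
      · have h1 : EqvGen (erel m) k (k + 1) := (hval k h3 hlt) ▸ prod_erel m k
        exact EqvGen.trans _ _ _ h1 (ih (k + 1) (by omega) (by omega) (by omega))
  intro k h3 hkn
  exact EqvGen.trans _ _ _ (key (n - k) k h3 hkn le_rfl) hn3

theorem lower_bound (n : ℕ) (hn : 5 ≤ n) (l : List (Equiv.Perm ℕ))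
    (hmem : ∀ τ ∈ l, ∃ a b : ℕ, a ∈ Finset.Icc 1 n ∧ b ∈ Finset.Icc 1 n ∧ a ≠ b ∧
      τ = Equiv.swap a b)
    (hne : ∀ τ ∈ l, τ ≠ Equiv.swap 1 2)
    (hp : l.prod = Equiv.swap 1 2 * (List.range' 3 (n - 2)).formPerm) :
    n ≤ l.length := by
  classical
  set c := (List.range' 3 (n - 2)).formPerm with hcdef
  have hc1 : c 1 = 1 := List.formPerm_apply_of_notMem (by simp [List.mem_range'_1])
  have hc2 : c 2 = 2 := List.formPerm_apply_of_notMem (by simp [List.mem_range'_1])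
  have hcmid : ∀ k, 3 ≤ k → k < n → c k = k + 1 := fun k h3 hk =>
    formPerm_range'_apply_of_lt (n - 2) h3 (by omega)
  have hcn : c n = 3 := by
    have h := formPerm_range'_apply_last (n - 3) 3
    rwa [show n - 3 + 1 = n - 2 by omega, show 3 + (n - 3) = n by omega] at h
  have hσ1 : l.prod 1 = 2 := by rw [hp, Equiv.Perm.mul_apply, hc1, Equiv.swap_apply_left]
  have hσ2 : l.prod 2 = 1 := by rw [hp, Equiv.Perm.mul_apply, hc2, Equiv.swap_apply_right]
  have hσmid : ∀ k, 3 ≤ k → k < n → l.prod k = k + 1 := by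
    intro k h3 hk
    rw [hp, Equiv.Perm.mul_apply, hcmid k h3 hk,
      Equiv.swap_apply_of_ne_of_ne (by omega) (by omega)]
  have hσn : l.prod n = 3 := by
    rw [hp, Equiv.Perm.mul_apply, hcn, Equiv.swap_apply_of_ne_of_ne (by omega) (by omega)]
  have hσout : ∀ x, x ∉ Finset.Icc 1 n → l.prod x = x := by
    intro x hx
    rw [Finset.mem_Icc] at hx
    rw [hp, Equiv.Perm.mul_apply,
      List.formPerm_apply_of_notMem (by rw [List.mem_range'_1]; omega),
      Equiv.swap_apply_of_ne_of_ne (by omega) (by omega)]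
  have hswap : ∀ τ ∈ l, Equiv.Perm.IsSwap τ := by
    intro τ hτ
    obtain ⟨a, b, _, _, hab, rfl⟩ := hmem τ hτ
    exact ⟨a, b, hab, rfl⟩
  have hσrel : ∀ x, EqvGen (erel l) x (l.prod x) := prod_erel l
  have h21 : EqvGen (erel l) 2 1 := EqvGen.symm _ _ (hσ1 ▸ hσrel 1)
  have hchain : ∀ k, 3 ≤ k → k ≤ n → EqvGen (erel l) k 3 := chain_to_three n l hσmid hσn
  by_cases hC : EqvGen (erel l) 3 1
  · -- Case A : one component containing everything
    have hS : ∀ x ∈ Finset.Icc 1 n, EqvGen (erel l) x 1 := by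
      intro x hx
      rw [Finset.mem_Icc] at hx
      rcases eq_or_ne x 1 with rfl | h1
      · exact EqvGen.refl _
      rcases eq_or_ne x 2 with rfl | h2
      · exact h21
      · exact EqvGen.trans _ _ _ (hchain x (by omega) hx.2) hC
    have hcard := connected_card_le l hswap (Finset.Icc 1 n) 1 hS
    rw [Nat.card_Icc] at hcard
    have hpar := parity_eq n l (W n) hmem (W_mem n hn) (by rw [hp, W_prod n hn])
    have hpar2 := neg_one_pow_eq_iff hpar
    rw [W_length n hn] at hpar2
    omega
  · -- Case B : the component of 1 does not meet {3,...,n}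
    set p : Equiv.Perm ℕ → Bool := fun τ => decide (∀ x, τ x ≠ x → EqvGen (erel l) x 1)
      with hpdef
    have hnotp : ∀ τ ∈ l, p τ = false → ∀ x, EqvGen (erel l) x 1 → τ x = x := by
      intro τ hτ hfalse x hx
      obtain ⟨a, b, -, -, hab, rfl⟩ := hmem τ hτ
      simp only [hpdef, decide_eq_false_iff_not, not_forall] at hfalse
      obtain ⟨z, hz1, hz2⟩ := hfalse
      have hzab : z = a ∨ z = b := by
        by_contra hcon
        push_neg at hcon
        exact hz1 (Equiv.swap_apply_of_ne_of_ne hcon.1 hcon.2)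
      have habrel : EqvGen (erel l) a b :=
        EqvGen.rel _ _ ⟨Equiv.swap a b, hτ, Equiv.swap_apply_left a b⟩
      have hna : ¬ EqvGen (erel l) a 1 := by
        rcases hzab with rfl | rfl
        · exact hz2
        · exact fun h => hz2 (EqvGen.trans _ _ _ (EqvGen.symm _ _ habrel) h)
      have hnb : ¬ EqvGen (erel l) b 1 := by
        rcases hzab with rfl | rfl
        · exact fun h => hz2 (EqvGen.trans _ _ _ habrel h)
        · exact hz2
      apply Equiv.swap_apply_of_ne_of_ne
      · rintro rfl; exact hna hx
      · rintro rfl; exact hnb hx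
    have hyesp : ∀ τ ∈ l, p τ = true → ∀ x, ¬ EqvGen (erel l) x 1 → τ x = x := by
      intro τ hτ htrue x hx
      simp only [hpdef, decide_eq_true_eq] at htrue
      by_contra hcon
      exact hx (htrue x hcon)
    have hcomm : ∀ x ∈ l, ∀ y ∈ l, p x → ¬ p y → Commute x y := by
      intro x hx y hy hpx hpy
      apply Equiv.Perm.Disjoint.commute
      intro z
      by_cases hz : EqvGen (erel l) z 1
      · exact Or.inr (hnotp y hy (by simpa using hpy) z hz)
      · exact Or.inl (hyesp x hx (by simpa using hpx) z hz)
    set l1 := l.filter p with hl1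
    set l2 := l.filter (fun τ => ! p τ) with hl2
    have hsplit : l.prod = l1.prod * l2.prod := prod_split p l hcomm
    have hfix2 : ∀ x, EqvGen (erel l) x 1 → l2.prod x = x := by
      intro x hx
      refine prod_fix l2 x ?_
      intro τ hτ
      rw [hl2, List.mem_filter] at hτ
      exact hnotp τ hτ.1 (by simpa using hτ.2) x hx
    have hfix1 : ∀ x, ¬ EqvGen (erel l) x 1 → l1.prod x = x := by
      intro x hx
      refine prod_fix l1 x ?_
      intro τ hτ
      rw [hl1, List.mem_filter] at hτ
      exact hyesp τ hτ.1 hτ.2 x hx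
    have hl2sub : ∀ τ ∈ l2, τ ∈ l := fun τ hτ => List.mem_of_mem_filter hτ
    have hl1sub : ∀ τ ∈ l1, τ ∈ l := fun τ hτ => List.mem_of_mem_filter hτ
    have hP1 : l1.prod = Equiv.swap 1 2 := by
      apply Equiv.ext
      intro x
      by_cases hx : EqvGen (erel l) x 1
      · have hx2 : l.prod x = l1.prod x := by
          rw [hsplit, Equiv.Perm.mul_apply, hfix2 x hx]
        rcases eq_or_ne x 1 with rfl | h1
        · rw [← hx2, hσ1, Equiv.swap_apply_left]
        rcases eq_or_ne x 2 with rfl | h2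
        · rw [← hx2, hσ2, Equiv.swap_apply_right]
        · have hxout : x ∉ Finset.Icc 1 n := by
            intro hmem3
            rw [Finset.mem_Icc] at hmem3
            have hx3 : 3 ≤ x := by omega
            exact hC (EqvGen.trans _ _ _
              (EqvGen.symm _ _ (hchain x hx3 hmem3.2)) hx)
          rw [← hx2, hσout x hxout, Equiv.swap_apply_of_ne_of_ne h1 h2]
      · rw [hfix1 x hx, Equiv.swap_apply_of_ne_of_ne]
        · rintro rfl; exact hx (EqvGen.refl 1)
        · rintro rfl; exact hx h21
    have hP2 : l2.prod = c := by
      rw [hp, hP1] at hsplit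
      exact (mul_left_cancel hsplit.symm)
    have hchain2 := chain_to_three n l2 (fun k h3 hk => by rw [hP2]; exact hcmid k h3 hk)
      (by rw [hP2]; exact hcn)
    have hswap2 : ∀ τ ∈ l2, Equiv.Perm.IsSwap τ := fun τ hτ => hswap τ (hl2sub τ hτ)
    have hS2 : ∀ x ∈ Finset.Icc 3 n, EqvGen (erel l2) x 3 := by
      intro x hx
      rw [Finset.mem_Icc] at hx
      exact hchain2 x hx.1 hx.2
    have hcard2 := connected_card_le l2 hswap2 (Finset.Icc 3 n) 3 hS2
    rw [Nat.card_Icc] at hcard2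
    have hmem1 : ∀ τ ∈ l1, ∃ a b : ℕ, a ∈ Finset.Icc 1 n ∧ b ∈ Finset.Icc 1 n ∧ a ≠ b ∧
        τ = Equiv.swap a b := fun τ hτ => hmem τ (hl1sub τ hτ)
    have hW3prod : ([Equiv.swap 1 3, Equiv.swap 2 3, Equiv.swap 1 3] :
        List (Equiv.Perm ℕ)).prod = Equiv.swap 1 2 := by
      rw [List.prod_cons, List.prod_cons, List.prod_singleton, swap_triple]
    have hmemW3 : ∀ τ ∈ ([Equiv.swap 1 3, Equiv.swap 2 3, Equiv.swap 1 3] :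
        List (Equiv.Perm ℕ)), ∃ a b : ℕ, a ∈ Finset.Icc 1 n ∧ b ∈ Finset.Icc 1 n ∧ a ≠ b ∧
        τ = Equiv.swap a b := by
      intro τ hτ
      simp only [List.mem_cons, List.not_mem_nil, or_false] at hτ
      rcases hτ with rfl | rfl | rfl
      · exact ⟨1, 3, by simp; omega, by simp; omega, by omega, rfl⟩
      · exact ⟨2, 3, by simp; omega, by simp; omega, by omega, rfl⟩
      · exact ⟨1, 3, by simp; omega, by simp; omega, by omega, rfl⟩
    have hpar1 := parity_eq n l1 _ hmem1 hmemW3 (by rw [hP1, hW3prod])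
    have hpar1' := neg_one_pow_eq_iff hpar1
    simp only [List.length_cons, List.length_nil] at hpar1'
    have hne1 : l1.length ≠ 1 := by
      intro hlen
      obtain ⟨τ, hτ⟩ := List.length_eq_one_iff.1 hlen
      have hτmem : τ ∈ l1 := hτ ▸ List.mem_singleton_self τ
      have heq : τ = Equiv.swap 1 2 := by
        rw [← hP1, hτ, List.prod_singleton]
      exact hne τ (hl1sub τ hτmem) heq
    have hlen_sum : l1.length + l2.length = l.length := by
      have hperm := List.filter_append_perm p l
      have hpl := hperm.length_eq
      rw [List.length_append] at hpl
      exact hpl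
    omega

end MinUndo

/-- For every `n ≥ 5`, any list of pairwise distinct transpositions of the
symmetric group on `{1, ..., n}`, none equal to `(1 2)`, whose product is
`(1 2)(3 4 5 ... n)`, has length at least `n`; and the minimal number of such
transpositions needed is exactly `n`. -/
theorem min_undo_Fn (n : ℕ) (hn : 5 ≤ n) :
    (∀ l : List (Equiv.Perm ℕ),
      (∀ τ ∈ l, ∃ a b : ℕ, a ∈ Finset.Icc 1 n ∧ b ∈ Finset.Icc 1 n ∧
        a ≠ b ∧ τ = Equiv.swap a b) →
      l.Nodup →
      (∀ τ ∈ l, τ ≠ Equiv.swap 1 2) →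
      l.prod = Equiv.swap 1 2 * (List.range' 3 (n - 2)).formPerm →
      n ≤ l.length) ∧
    IsLeast {w : ℕ | ∃ l : List (Equiv.Perm ℕ),
      (∀ τ ∈ l, ∃ a b : ℕ, a ∈ Finset.Icc 1 n ∧ b ∈ Finset.Icc 1 n ∧
        a ≠ b ∧ τ = Equiv.swap a b) ∧
      l.Nodup ∧
      (∀ τ ∈ l, τ ≠ Equiv.swap 1 2) ∧
      l.prod = Equiv.swap 1 2 * (List.range' 3 (n - 2)).formPerm ∧
      l.length = w} n := by
  constructor
  · intro l hmem _ hne hp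
    exact MinUndo.lower_bound n hn l hmem hne hp
  · constructor
    · exact ⟨MinUndo.W n, MinUndo.W_mem n hn, MinUndo.W_nodup n hn, MinUndo.W_ne n hn,
        MinUndo.W_prod n hn, MinUndo.W_length n hn⟩
    · rintro w ⟨l, hmem, -, hne, hp, rfl⟩
      exact MinUndo.lower_bound n hn l hmem hne hp
end

section
/- If a list of pairwise distinct transpositions in the symmetric group on {1, ..., 9}, none equal to (1 2), has product equal to (1 2)(3 4 5 6 7 8 9), then the list has length at least 9. -/
open SimpleGraph

lemma reach_of_reach_del {V : Type} (G : SimpleGraph V) (x y : V)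
    (hxy : (G \ fromEdgeSet {s(x, y)}).Reachable x y) :
    ∀ {a b : V}, G.Reachable a b → (G \ fromEdgeSet {s(x, y)}).Reachable a b := by
  intro a b ⟨p⟩
  induction p with
  | nil => exact Reachable.refl _
  | @cons u v w h p ih =>
    refine Reachable.trans ?_ ih
    by_cases he : s(u, v) = s(x, y)
    · rcases Sym2.eq_iff.mp he with ⟨rfl, rfl⟩ | ⟨rfl, rfl⟩
      · exact hxy
      · exact hxy.symm
    · exact Adj.reachable (by simp [sdiff_adj, fromEdgeSet_adj, he, h, h.ne])

lemma conn_card_le_edges {V : Type} [Fintype V] [DecidableEq V] :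
    ∀ (n : ℕ) (G : SimpleGraph V) [Fintype G.edgeSet],
      G.Connected → G.edgeFinset.card = n → Fintype.card V ≤ n + 1 := by
  intro n
  induction n using Nat.strong_induction_on with
  | _ n ih =>
    intro G _ hG hcard
    by_cases hac : G.IsAcyclic
    · rw [← IsTree.card_edgeFinset ⟨hG, hac⟩, hcard]
    · simp only [IsAcyclic] at hac
      push_neg at hac
      obtain ⟨v, c, hc⟩ := hac
      have hnil : c.edges ≠ [] := by
        cases c with
        | nil => exact absurd hc (by simp [Walk.IsCycle])
        | cons h p => simp
      obtain ⟨e, he⟩ : ∃ e, e ∈ c.edges := List.exists_mem_of_ne_nil _ hnil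
      induction e using Sym2.ind with
      | _ x y =>
      have hre : G.Adj x y ∧ (G \ fromEdgeSet {s(x, y)}).Reachable x y :=
        adj_and_reachable_delete_edges_iff_exists_cycle.2 ⟨v, c, hc, he⟩
      set G' := G \ fromEdgeSet {s(x, y)} with hG'
      haveI : Fintype G'.edgeSet := Fintype.ofFinite _
      haveI : Nonempty V := hG.nonempty
      have hconn' : G'.Connected :=
        Connected.mk fun a b => reach_of_reach_del G x y hre.2 (hG.preconnected a b)
      have hes : G'.edgeSet = G.edgeSet \ {s(x, y)} := by
        simp [hG', edgeSet_sdiff, edgeSet_fromEdgeSet, edgeSet_sdiff_sdiff_isDiag]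
      have hmem : s(x, y) ∈ G.edgeFinset := mem_edgeFinset.2 hre.1
      have hfin : G'.edgeFinset = G.edgeFinset.erase s(x, y) := by
        rw [edgeFinset, Set.toFinset_congr hes, Set.toFinset_diff, Set.toFinset_singleton,
          Finset.sdiff_singleton_eq_erase, edgeFinset]
      have hcard' : G'.edgeFinset.card = n - 1 := by
        rw [hfin, Finset.card_erase_of_mem hmem, hcard]
      have hn : 1 ≤ n := hcard ▸ Finset.card_pos.2 ⟨_, hmem⟩
      have := ih (n - 1) (by omega) G' hconn' hcard'
      omega

lemma fut_swap_eq_cases {a b c d : ℕ} (hab : a ≠ b) (h : Equiv.swap a b = Equiv.swap c d) :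
    (a = c ∧ b = d) ∨ (a = d ∧ b = c) := by
  have h1 : Equiv.swap c d a = b := by rw [← h, Equiv.swap_apply_left]
  rw [Equiv.swap_apply_def] at h1
  split_ifs at h1 with hc hd
  · exact Or.inl ⟨hc, h1.symm⟩
  · exact Or.inr ⟨hd, h1.symm⟩
  · exact absurd h1 hab

lemma fut_prod_pres {α : Type*} (p : α → Prop) :
    ∀ (m : List (Equiv.Perm α)), (∀ τ ∈ m, ∀ x, p x ↔ p (τ x)) →
      ∀ x, p x ↔ p (m.prod x) := by
  intro m
  induction m with
  | nil => intro _ x; simp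
  | cons τ t ih =>
    intro h x
    rw [List.prod_cons, Equiv.Perm.mul_apply]
    exact (ih (fun g hg => h g (List.mem_cons_of_mem _ hg)) x).trans
      (h τ List.mem_cons_self _)

lemma fut_subtypePerm_swap (p : ℕ → Prop) (a b : ℕ) (ha : p a) (hb : p b)
    (hpres : ∀ x, p x ↔ p (Equiv.swap a b x)) :
    (Equiv.swap a b).subtypePerm (fun x => (hpres x).symm) = Equiv.swap ⟨a, ha⟩ ⟨b, hb⟩ := by
  ext ⟨x, hx⟩
  simp only [Equiv.Perm.subtypePerm_apply, Equiv.swap_apply_def, Subtype.ext_iff, Subtype.mk.injEq]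
  split_ifs <;> rfl

lemma fut_subtypePerm_ext (p : ℕ → Prop) (f g : Equiv.Perm ℕ) (hfg : f = g)
    (hf : ∀ x, p x ↔ p (f x)) (hg : ∀ x, p x ↔ p (g x)) :
    f.subtypePerm (fun x => (hf x).symm) = g.subtypePerm (fun x => (hg x).symm) := by subst hfg; rfl

lemma fut_sign_restrict (p : ℕ → Prop) [DecidablePred p] [Fintype {x // p x}] :
    ∀ (m : List (Equiv.Perm ℕ))
      (_ : ∀ τ ∈ m, ∃ a b : ℕ, a ≠ b ∧ p a ∧ p b ∧ τ = Equiv.swap a b)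
      (_ : ∀ τ ∈ m, ∀ x, p x ↔ p (τ x))
      (hp : ∀ x, p x ↔ p (m.prod x)),
      Equiv.Perm.sign ((m.prod).subtypePerm (fun x => (hp x).symm)) = (-1) ^ m.length := by
  intro m
  induction m with
  | nil =>
    intro _ _ hp
    have : (List.prod [] : Equiv.Perm ℕ).subtypePerm (fun x => (hp x).symm) = 1 := by
      ext x; simp
    rw [this]; simp
  | cons τ t ih =>
    intro hsw hpres hp
    have hτ := hpres τ List.mem_cons_self
    have hp' := fut_prod_pres p t (fun g hg => hpres g (List.mem_cons_of_mem _ hg))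
    have hmul : ((τ :: t).prod).subtypePerm (fun x => (hp x).symm)
        = τ.subtypePerm (fun x => (hτ x).symm) * (t.prod).subtypePerm (fun x => (hp' x).symm) := by
      ext x
      simp [List.prod_cons, Equiv.Perm.subtypePerm_apply]; rfl
    rw [hmul, map_mul]
    obtain ⟨a, b, hab, ha, hb, rfl⟩ := hsw τ List.mem_cons_self
    rw [fut_subtypePerm_swap p a b ha hb hτ, Equiv.Perm.sign_swap
      (by simp [Subtype.ext_iff, hab]),
      ih (fun g hg => hsw g (List.mem_cons_of_mem _ hg))
        (fun g hg => hpres g (List.mem_cons_of_mem _ hg)) hp']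
    rw [List.length_cons, pow_succ]
    exact mul_comm _ _

noncomputable def σ₀ : Equiv.Perm ℕ := Equiv.swap 1 2 * ([3,4,5,6,7,8,9] : List ℕ).formPerm

lemma sigma_pres : ∀ x : ℕ, x ∈ Finset.Icc 1 9 ↔ σ₀ x ∈ Finset.Icc 1 9 := by
  intro x
  by_cases hx : x ∈ Finset.Icc 1 9
  · simp only [hx, true_iff]
    revert hx
    exact (by decide : ∀ x ∈ Finset.Icc 1 9, σ₀ x ∈ Finset.Icc 1 9) x
  · have h1 : σ₀ x = x := by
      have hm : x ∉ ([3,4,5,6,7,8,9] : List ℕ) := by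
        intro h; exact hx (by fin_cases h <;> decide)
      simp only [σ₀, Equiv.Perm.mul_apply, List.formPerm_apply_of_notMem hm]
      apply Equiv.swap_apply_of_ne_of_ne <;> rintro rfl <;> exact hx (by decide)
    rw [h1]
lemma sign_sigma : Equiv.Perm.sign (σ₀.subtypePerm (fun x => (sigma_pres x).symm)) = -1 := by decide

abbrev FutV : Type := {x : ℕ // x ∈ Finset.Icc 1 9}

def futG (l : List (Equiv.Perm ℕ)) : SimpleGraph FutV :=
  SimpleGraph.fromRel fun a b => Equiv.swap (a : ℕ) (b : ℕ) ∈ l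

lemma fut_reach_aux (l : List (Equiv.Perm ℕ))
    (hsw : ∀ τ ∈ l, ∃ a b : ℕ, a ∈ Finset.Icc 1 9 ∧ b ∈ Finset.Icc 1 9 ∧
      a ≠ b ∧ τ = Equiv.swap a b) :
    ∀ (m : List (Equiv.Perm ℕ)), (∀ τ ∈ m, τ ∈ l) →
      ∀ (x : ℕ) (hx : x ∈ Finset.Icc 1 9),
        ∃ hy : m.prod x ∈ Finset.Icc 1 9,
          (futG l).Reachable ⟨x, hx⟩ ⟨m.prod x, hy⟩ := by
  intro m
  induction m with
  | nil =>
    intro _ x hx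
    refine ⟨by simpa using hx, ?_⟩
    have : (⟨(List.prod [] : Equiv.Perm ℕ) x, by simpa using hx⟩ : FutV) = ⟨x, hx⟩ :=
      Subtype.ext (by simp)
    rw [this]
  | cons τ t ih =>
    intro hm x hx
    obtain ⟨hy, hr⟩ := ih (fun g hg => hm g (List.mem_cons_of_mem _ hg)) x hx
    set y := t.prod x with hy_def
    have hτl : τ ∈ l := hm τ List.mem_cons_self
    obtain ⟨a, b, ha, hb, hab, rfl⟩ := hsw τ hτl
    simp only [List.prod_cons, Equiv.Perm.mul_apply, ← hy_def]
    have hadj : ∀ (hu : a ∈ Finset.Icc 1 9) (hv : b ∈ Finset.Icc 1 9),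
        (futG l).Adj ⟨a, hu⟩ ⟨b, hv⟩ := by
      intro hu hv
      exact ⟨by simp [Subtype.ext_iff, hab], Or.inl hτl⟩
    by_cases h1 : y = a
    · subst h1
      have e : Equiv.swap y b y = b := Equiv.swap_apply_left _ _
      refine ⟨by rw [e]; exact hb, ?_⟩
      have h2 : (⟨Equiv.swap y b y, by rw [e]; exact hb⟩ : FutV) = ⟨b, hb⟩ := Subtype.ext e
      rw [h2]
      exact hr.trans (hadj hy hb).reachable
    · by_cases h2 : y = b
      · subst h2
        have e : Equiv.swap a y y = a := Equiv.swap_apply_right _ _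
        refine ⟨by rw [e]; exact ha, ?_⟩
        have h3 : (⟨Equiv.swap a y y, by rw [e]; exact ha⟩ : FutV) = ⟨a, ha⟩ := Subtype.ext e
        rw [h3]
        exact hr.trans (hadj ha hy).symm.reachable
      · have e : Equiv.swap a b y = y := Equiv.swap_apply_of_ne_of_ne h1 h2
        refine ⟨by rw [e]; exact hy, ?_⟩
        have h3 : (⟨Equiv.swap a b y, by rw [e]; exact hy⟩ : FutV) = ⟨y, hy⟩ := Subtype.ext e
        rw [h3]
        exact hr

/-- If a list of pairwise distinct transpositions in the symmetric group on
`{1, ..., 9}`, none equal to `(1 2)`, has product `(1 2)(3 4 5 6 7 8 9)`,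
then the list has length at least 9. -/
theorem futurama_lower_bound
    (l : List (Equiv.Perm ℕ))
    (hsw : ∀ τ ∈ l, ∃ a b : ℕ, a ∈ Finset.Icc 1 9 ∧ b ∈ Finset.Icc 1 9 ∧
      a ≠ b ∧ τ = Equiv.swap a b)
    (hnd : l.Nodup)
    (hne : ∀ τ ∈ l, τ ≠ Equiv.swap 1 2)
    (hprod : l.prod = Equiv.swap 1 2 * ([3, 4, 5, 6, 7, 8, 9] : List ℕ).formPerm) :
    9 ≤ l.length := by
  classical
  set G := futG l with hG_def
  -- reachability from the product
  have key : ∀ (x y : ℕ) (hx : x ∈ Finset.Icc 1 9) (hy : y ∈ Finset.Icc 1 9),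
      σ₀ x = y → G.Reachable ⟨x, hx⟩ ⟨y, hy⟩ := by
    intro x y hx hy hxy
    obtain ⟨hy', hr⟩ := fut_reach_aux l hsw l (fun _ h => h) x hx
    have hv : (⟨l.prod x, hy'⟩ : FutV) = ⟨y, hy⟩ :=
      Subtype.ext (show l.prod x = y by rw [hprod]; exact hxy)
    rwa [hv] at hr
  have r12 : G.Reachable ⟨1, by decide⟩ ⟨2, by decide⟩ :=
    key 1 2 (by decide) (by decide) (by decide)
  have r34 : G.Reachable ⟨3, by decide⟩ ⟨4, by decide⟩ :=
    key 3 4 (by decide) (by decide) (by decide)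
  have r45 : G.Reachable ⟨4, by decide⟩ ⟨5, by decide⟩ :=
    key 4 5 (by decide) (by decide) (by decide)
  have r56 : G.Reachable ⟨5, by decide⟩ ⟨6, by decide⟩ :=
    key 5 6 (by decide) (by decide) (by decide)
  have r67 : G.Reachable ⟨6, by decide⟩ ⟨7, by decide⟩ :=
    key 6 7 (by decide) (by decide) (by decide)
  have r78 : G.Reachable ⟨7, by decide⟩ ⟨8, by decide⟩ :=
    key 7 8 (by decide) (by decide) (by decide)
  have r89 : G.Reachable ⟨8, by decide⟩ ⟨9, by decide⟩ :=
    key 8 9 (by decide) (by decide) (by decide)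
  have hentry : ∀ (n : ℕ) (hn : n ∈ Finset.Icc 1 9), n ≠ 1 → n ≠ 2 →
      G.Reachable ⟨n, hn⟩ ⟨3, by decide⟩ := by
    intro n hn h1 h2
    obtain ⟨hn1, hn2⟩ : 1 ≤ n ∧ n ≤ 9 := by simpa [Finset.mem_Icc] using hn
    interval_cases n
    · exact absurd rfl h1
    · exact absurd rfl h2
    · exact SimpleGraph.Reachable.refl _
    · exact r34.symm
    · exact (r34.trans r45).symm
    · exact (r34.trans (r45.trans r56)).symm
    · exact (r34.trans (r45.trans (r56.trans r67))).symm
    · exact (r34.trans (r45.trans (r56.trans (r67.trans r78)))).symm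
    · exact (r34.trans (r45.trans (r56.trans (r67.trans (r78.trans r89))))).symm
  have h13 : G.Reachable ⟨1, by decide⟩ ⟨3, by decide⟩ := by
    by_contra habs
    obtain ⟨p⟩ := r12
    cases p with
    | @cons _ w _ hadj q =>
      obtain ⟨n, hn⟩ := w
      obtain ⟨hn1, hn2⟩ : 1 ≤ n ∧ n ≤ 9 := by simpa [Finset.mem_Icc] using hn
      have hstep : ∀ hh : n ∈ Finset.Icc 1 9, n ≠ 1 → n ≠ 2 → False := by
        intro hh h1 h2
        exact habs (hadj.reachable.trans (hentry n hn h1 h2))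
      interval_cases n
      · exact hadj.ne (Subtype.ext rfl)
      · obtain ⟨-, h | h⟩ := hadj
        · exact hne _ h rfl
        · exact hne _ h (Equiv.swap_comm 2 1)
      all_goals exact hstep hn (by decide) (by decide)
  have hreach3 : ∀ v : FutV, G.Reachable v ⟨3, by decide⟩ := by
    intro ⟨n, hn⟩
    obtain ⟨hn1, hn2⟩ : 1 ≤ n ∧ n ≤ 9 := by simpa [Finset.mem_Icc] using hn
    interval_cases n
    · exact h13
    · exact r12.symm.trans h13
    all_goals exact hentry _ hn (by decide) (by decide)
  haveI : Nonempty FutV := ⟨⟨1, by decide⟩⟩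
  have hconn : G.Connected :=
    SimpleGraph.Connected.mk fun a b => (hreach3 a).trans (hreach3 b).symm
  haveI : Fintype G.edgeSet := Fintype.ofFinite _
  have hcardV : Fintype.card FutV = 9 := by simp [Fintype.card_coe]
  have h9 : 9 ≤ G.edgeFinset.card + 1 := by
    rw [← hcardV]
    exact conn_card_le_edges _ G hconn rfl
  -- edge count bounded by l.length
  have hedge_le : G.edgeFinset.card ≤ l.length := by
    have h1 : G.edgeFinset.card ≤ l.toFinset.card := by
      refine Finset.card_le_card_of_injOn
        (Sym2.lift ⟨fun a b => Equiv.swap (a : ℕ) (b : ℕ), fun a b => Equiv.swap_comm _ _⟩) ?_ ?_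
      · intro e he
        induction e using Sym2.ind with
        | _ a b =>
          rw [Finset.mem_coe, SimpleGraph.mem_edgeFinset, SimpleGraph.mem_edgeSet] at he
          obtain ⟨hne', h | h⟩ := he
          · simpa [List.mem_toFinset] using h
          · simpa [List.mem_toFinset, Equiv.swap_comm] using h
      · intro e1 h1 e2 h2 heq
        induction e1 using Sym2.ind with
        | _ a b =>
        induction e2 using Sym2.ind with
        | _ c d =>
          simp only [Finset.mem_coe, SimpleGraph.mem_edgeFinset, SimpleGraph.mem_edgeSet] at h1 h2
          have hab : (a : ℕ) ≠ (b : ℕ) := Subtype.coe_injective.ne h1.1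
          simp only [Sym2.lift_mk] at heq
          rcases fut_swap_eq_cases hab heq with ⟨hac, hbd⟩ | ⟨had, hbc⟩
          · rw [Subtype.coe_injective hac, Subtype.coe_injective hbd]
          · rw [Subtype.coe_injective had, Subtype.coe_injective hbc, Sym2.eq_swap]
    exact h1.trans l.toFinset_card_le
  -- parity
  have hpres : ∀ τ ∈ l, ∀ x : ℕ, x ∈ Finset.Icc 1 9 ↔ τ x ∈ Finset.Icc 1 9 := by
    intro τ hτ
    obtain ⟨a, b, ha, hb, hab, rfl⟩ := hsw τ hτ
    have fwd : ∀ z : ℕ, z ∈ Finset.Icc 1 9 → Equiv.swap a b z ∈ Finset.Icc 1 9 := by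
      intro z hz
      rcases eq_or_ne z a with rfl | h1
      · rw [Equiv.swap_apply_left]; exact hb
      rcases eq_or_ne z b with rfl | h2
      · rw [Equiv.swap_apply_right]; exact ha
      · rw [Equiv.swap_apply_of_ne_of_ne h1 h2]; exact hz
    intro x
    refine ⟨fwd x, fun hx => ?_⟩
    have := fwd _ hx
    rwa [Equiv.swap_apply_self] at this
  have hp := fut_prod_pres (· ∈ Finset.Icc 1 9) l hpres
  have hsign1 : Equiv.Perm.sign (l.prod.subtypePerm (fun x => (hp x).symm)) = (-1) ^ l.length :=
    fut_sign_restrict _ l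
      (by
        intro τ hτ
        obtain ⟨a, b, ha, hb, hab, rfl⟩ := hsw τ hτ
        exact ⟨a, b, hab, ha, hb, rfl⟩)
      hpres hp
  have heq2 : l.prod.subtypePerm (fun x => (hp x).symm) = σ₀.subtypePerm (fun x => (sigma_pres x).symm) :=
    fut_subtypePerm_ext _ _ _ (by rw [hprod]; rfl) hp sigma_pres
  have hneg : (-1 : ℤˣ) ^ l.length = -1 := by
    rw [← hsign1, heq2, sign_sigma]
  have hodd : l.length % 2 = 1 := by
    rcases Nat.even_or_odd l.length with he | ho
    · rw [he.neg_one_pow] at hneg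
      exact absurd hneg (by decide)
    · exact Nat.odd_iff.mp ho
  omega
end

section
/- The permutation (1 2)(3 4) cannot be written as the product of a list of fewer than 4 pairwise distinct transpositions none of which equals (1 2) or (3 4). -/
/-- The permutation `(1 2)(3 4)` cannot be written as the product of a list of
fewer than 4 pairwise distinct transpositions none of which equals `(1 2)` or
`(3 4)`. -/
theorem four_le_undo_two_swaps {α : Type*} [Fintype α] [DecidableEq α]
    (x₁ x₂ x₃ x₄ : α)
    (h12 : x₁ ≠ x₂) (h13 : x₁ ≠ x₃) (h14 : x₁ ≠ x₄)
    (h23 : x₂ ≠ x₃) (h24 : x₂ ≠ x₄) (h34 : x₃ ≠ x₄)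
    (l : List (Equiv.Perm α))
    (hsw : ∀ τ ∈ l, τ.IsSwap) (hnd : l.Nodup)
    (hne : ∀ τ ∈ l, τ ≠ Equiv.swap x₁ x₂ ∧ τ ≠ Equiv.swap x₃ x₄)
    (hprod : l.prod = Equiv.swap x₁ x₂ * Equiv.swap x₃ x₄) :
    4 ≤ l.length := by
  set σ := Equiv.swap x₁ x₂ * Equiv.swap x₃ x₄ with hσ
  have hσ1 : σ x₁ = x₂ := by
    simp [hσ, Equiv.Perm.mul_apply, Equiv.swap_apply_of_ne_of_ne h13 h14]
  have hσ2 : σ x₂ = x₁ := by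
    simp [hσ, Equiv.Perm.mul_apply, Equiv.swap_apply_of_ne_of_ne h23 h24]
  have hσ3 : σ x₃ = x₄ := by
    simp [hσ, Equiv.Perm.mul_apply, Equiv.swap_apply_of_ne_of_ne h14.symm h24.symm]
  have hσ4 : σ x₄ = x₃ := by
    simp [hσ, Equiv.Perm.mul_apply, Equiv.swap_apply_of_ne_of_ne h13.symm h23.symm]
  have hσfix : ∀ z, z ≠ x₁ → z ≠ x₂ → z ≠ x₃ → z ≠ x₄ → σ z = z := by
    intro z a b c d
    simp [hσ, Equiv.Perm.mul_apply, Equiv.swap_apply_of_ne_of_ne c d,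
      Equiv.swap_apply_of_ne_of_ne a b]
  have hsign : Equiv.Perm.sign l.prod = (-1 : ℤˣ) ^ l.length :=
    Equiv.Perm.sign_prod_list_swap hsw
  rw [hprod, map_mul, Equiv.Perm.sign_swap h12, Equiv.Perm.sign_swap h34] at hsign
  have heven : Even l.length := by
    rw [← neg_one_pow_eq_one_iff_even (R := ℤˣ) (by decide)]
    rw [← hsign]; decide
  by_contra hlt
  push_neg at hlt
  obtain ⟨k, hk⟩ := heven
  interval_cases h : l.length
  · have : l = [] := List.length_eq_zero_iff.mp h
    rw [this] at hprod
    simp at hprod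
    have := congrArg (fun f => f x₃) hprod
    simp [← hσ, hσ3] at this
    exact h34 this
  · omega
  · obtain ⟨a, b, hab⟩ := List.length_eq_two.mp h
    subst hab
    have hprod' : a * b = σ := by simpa using hprod
    obtain ⟨u, v, huv, hau⟩ := hsw a (by simp)
    obtain ⟨s, t, hst, hbs⟩ := hsw b (by simp)
    have hbinv : b * b = 1 := by rw [hbs]; exact Equiv.swap_mul_self s t
    have hainv : a * a = 1 := by rw [hau]; exact Equiv.swap_mul_self u v
    have ha : a = σ * b := by
      have := congrArg (· * b) hprod'
      simp only [mul_assoc, hbinv, mul_one] at this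
      exact this
    have hσσ : σ * σ = 1 := by
      have : (σ * b) * (σ * b) = 1 := by rw [← ha]; exact hainv
      have hcomm : Equiv.swap x₁ x₂ * Equiv.swap x₃ x₄
          = Equiv.swap x₃ x₄ * Equiv.swap x₁ x₂ := by
        ext z
        by_cases hz1 : z = x₁
        · subst hz1
          simp [Equiv.Perm.mul_apply, Equiv.swap_apply_of_ne_of_ne h13 h14,
            Equiv.swap_apply_of_ne_of_ne h23 h24]
        by_cases hz2 : z = x₂
        · subst hz2
          simp [Equiv.Perm.mul_apply, Equiv.swap_apply_of_ne_of_ne h23 h24,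
            Equiv.swap_apply_of_ne_of_ne h13 h14]
        by_cases hz3 : z = x₃
        · subst hz3
          simp [Equiv.Perm.mul_apply, Equiv.swap_apply_of_ne_of_ne h13.symm h23.symm,
            Equiv.swap_apply_of_ne_of_ne h14.symm h24.symm]
        by_cases hz4 : z = x₄
        · subst hz4
          simp [Equiv.Perm.mul_apply, Equiv.swap_apply_of_ne_of_ne h14.symm h24.symm,
            Equiv.swap_apply_of_ne_of_ne h13.symm h23.symm]
        · simp [Equiv.Perm.mul_apply, Equiv.swap_apply_of_ne_of_ne hz1 hz2,
            Equiv.swap_apply_of_ne_of_ne hz3 hz4]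
      calc σ * σ
          = Equiv.swap x₁ x₂ * (Equiv.swap x₃ x₄ * Equiv.swap x₁ x₂) * Equiv.swap x₃ x₄ := by
            rw [hσ]; group
        _ = Equiv.swap x₁ x₂ * (Equiv.swap x₁ x₂ * Equiv.swap x₃ x₄) * Equiv.swap x₃ x₄ := by
            rw [hcomm]
        _ = 1 := by
            rw [← mul_assoc, mul_assoc (Equiv.swap x₁ x₂ * Equiv.swap x₁ x₂)]
            simp [Equiv.swap_mul_self, ← mul_assoc]
    have hσinv : σ⁻¹ = σ := inv_eq_iff_mul_eq_one.mpr hσσ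
    have hkey : Equiv.swap (σ s) (σ t) = Equiv.swap s t := by
      have h1 : σ * b * σ * b = 1 := by
        have : (σ * b) * (σ * b) = 1 := by rw [← ha]; exact hainv
        simpa [mul_assoc] using this
      have h2 : σ * b * σ⁻¹ = b := by
        rw [hσinv]
        have h3 : σ * b * σ = (σ * b * σ * b) * b := by
          rw [mul_assoc (σ * b * σ), hbinv, mul_one]
        rw [h3, h1, one_mul]
      rw [Equiv.swap_apply_apply, ← hbs, h2]
    -- case split on whether σ fixes s and t
    have hcases : (σ s = s ∧ σ t = t) ∨ (σ s = t ∧ σ t = s) := by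
      have happ := congrArg (fun f => f s) hkey
      simp only [Equiv.swap_apply_left] at happ
      by_cases hss : σ s = s
      · left
        refine ⟨hss, ?_⟩
        rw [Equiv.swap_apply_def] at happ
        simp [hss] at happ
        exact happ
      · right
        rw [Equiv.swap_apply_def] at happ
        rw [if_neg (fun hc => hss hc.symm)] at happ
        by_cases hts : σ t = s
        · rw [if_pos hts.symm] at happ
          exact ⟨happ, hts⟩
        · rw [if_neg (fun hc => hts hc.symm)] at happ
          exact absurd happ hst
    obtain ⟨hbne1, hbne2⟩ := hne b (by simp)
    rcases hcases with ⟨hss, htt⟩ | ⟨hst', hts'⟩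
    · -- s, t fixed by σ; then a moves x₁↦x₂ and x₃↦x₄, impossible for a swap
      have hs1 : s ≠ x₁ := by
        intro hc; rw [hc, hσ1] at hss; exact h12 hss.symm
      have hs2 : s ≠ x₂ := by
        intro hc; rw [hc, hσ2] at hss; exact h12 hss
      have hs3 : s ≠ x₃ := by
        intro hc; rw [hc, hσ3] at hss; exact h34 hss.symm
      have hs4 : s ≠ x₄ := by
        intro hc; rw [hc, hσ4] at hss; exact h34 hss
      have ht1 : t ≠ x₁ := by
        intro hc; rw [hc, hσ1] at htt; exact h12 htt.symm
      have ht3 : t ≠ x₃ := by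
        intro hc; rw [hc, hσ3] at htt; exact h34 htt.symm
      have hax1 : a x₁ = x₂ := by
        rw [ha, Equiv.Perm.mul_apply, hbs,
          Equiv.swap_apply_of_ne_of_ne (Ne.symm hs1) (Ne.symm ht1), hσ1]
      have hax3 : a x₃ = x₄ := by
        rw [ha, Equiv.Perm.mul_apply, hbs,
          Equiv.swap_apply_of_ne_of_ne (Ne.symm hs3) (Ne.symm ht3), hσ3]
      rw [hau, Equiv.swap_apply_def] at hax1 hax3
      split_ifs at hax1 hax3 <;> simp_all
    · -- σ s = t : s must be one of x₁..x₄, forcing b ∈ {swap x₁ x₂, swap x₃ x₄}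
      by_cases hs1 : s = x₁
      · have ht : t = x₂ := by rw [← hst', hs1, hσ1]
        exact hbne1 (by rw [hbs, hs1, ht])
      by_cases hs2 : s = x₂
      · have ht : t = x₁ := by rw [← hst', hs2, hσ2]
        exact hbne1 (by rw [hbs, hs2, ht, Equiv.swap_comm])
      by_cases hs3 : s = x₃
      · have ht : t = x₄ := by rw [← hst', hs3, hσ3]
        exact hbne2 (by rw [hbs, hs3, ht])
      by_cases hs4 : s = x₄
      · have ht : t = x₃ := by rw [← hst', hs4, hσ4]
        exact hbne2 (by rw [hbs, hs4, ht, Equiv.swap_comm])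
      · exact hst (by rw [← hst', hσfix s hs1 hs2 hs3 hs4])
  · omega
end

section
/- For every r ≥ 2, the permutation P = (1 2)(3 4)···(2r−1, 2r) of {1, ..., 2r} (the product of r disjoint transpositions) can be written as the product of a list of 2r + ε_r pairwise distinct transpositions, none of which equals any of the factors (2i−1, 2i) of P, where ε_r = 0 if r is even and ε_r = 1 if r is odd. -/
lemma swap_ne_swap' {x y u v : ℕ} (huv : u ≠ v) (hux : u ≠ x) (huy : u ≠ y) :
    Equiv.swap x y ≠ Equiv.swap u v := by
  intro h
  have h1 : Equiv.swap x y u = u := Equiv.swap_apply_of_ne_of_ne hux huy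
  rw [h, Equiv.swap_apply_left] at h1
  exact huv h1.symm

lemma swap_ne_swap {x y u v : ℕ} (huv : u ≠ v)
    (h : (u ≠ x ∧ u ≠ y) ∨ (v ≠ x ∧ v ≠ y)) :
    Equiv.swap x y ≠ Equiv.swap u v := by
  rcases h with ⟨h1, h2⟩ | ⟨h1, h2⟩
  · exact swap_ne_swap' huv h1 h2
  · rw [Equiv.swap_comm u v]
    exact swap_ne_swap' huv.symm h1 h2

lemma swap_inj {x y u v : ℕ} (hxy : x < y) (huv : u < v)
    (h : Equiv.swap x y = Equiv.swap u v) : x = u ∧ y = v := by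
  have h1 : Equiv.swap x y u = v := by rw [h, Equiv.swap_apply_left]
  have h2 : Equiv.swap x y v = u := by rw [h, Equiv.swap_apply_right]
  simp only [Equiv.swap_apply_def] at h1 h2
  split_ifs at h1 h2 <;> omega

lemma swap_pair (a b c d : ℕ) (hab : a ≠ b) (hac : a ≠ c) (had : a ≠ d)
    (hbc : b ≠ c) (hbd : b ≠ d) (hcd : c ≠ d) :
    Equiv.swap a c * Equiv.swap b d * Equiv.swap a d * Equiv.swap b c =
      Equiv.swap a b * Equiv.swap c d := by
  ext x
  by_cases hxa : x = a <;> by_cases hxb : x = b <;> by_cases hxc : x = c <;>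
    by_cases hxd : x = d <;>
    simp_all [Equiv.swap_apply_def] <;>
    first
      | omega
      | (split_ifs <;> omega)

lemma key3_s15 : (Equiv.swap 1 3 * (Equiv.swap 2 5 * (Equiv.swap 2 4 * (Equiv.swap 1 4 *
    (Equiv.swap 1 6 * (Equiv.swap 1 5 * Equiv.swap 2 3)))))) =
    Equiv.swap 1 2 * (Equiv.swap 3 4 * Equiv.swap 5 6) := by
  ext x
  rcases Nat.lt_or_ge x 7 with h | h
  · interval_cases x <;> simp [Equiv.swap_apply_def]
  · have : ∀ u v : ℕ, u < 7 → v < 7 → Equiv.swap u v x = x := fun u v hu hv =>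
      Equiv.swap_apply_of_ne_of_ne (by omega) (by omega)
    simp only [Equiv.Perm.mul_apply]
    rw [this, this, this, this, this, this, this, this, this, this] <;> omega

lemma aux_undo : ∀ r : ℕ, 2 ≤ r → ∃ l : List (Equiv.Perm ℕ),
    (∀ τ ∈ l, ∃ x y, 1 ≤ x ∧ x < y ∧ y ≤ 2 * r ∧ τ = Equiv.swap x y) ∧ l.Nodup ∧
    (∀ τ ∈ l, ∀ i < r, τ ≠ Equiv.swap (2 * i + 1) (2 * i + 2)) ∧
    l.prod = ((List.range r).map fun i => Equiv.swap (2 * i + 1) (2 * i + 2)).prod ∧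
    l.length = 2 * r + (if Even r then 0 else 1) := by
  intro r
  induction r using Nat.strong_induction_on with
  | _ r ih =>
  intro hr
  by_cases hr4 : r < 4
  · interval_cases r
    · -- r = 2
      refine ⟨[(1,3),(2,4),(1,4),(2,3)].map (fun p => Equiv.swap p.1 p.2),
        ?_, ?_, ?_, ?_, ?_⟩
      · intro τ hτ
        simp only [List.mem_map] at hτ
        obtain ⟨p, hp, rfl⟩ := hτ
        fin_cases hp <;> exact ⟨_, _, by norm_num, by norm_num, by norm_num, rfl⟩
      · refine List.Nodup.map_on ?_ (by decide)
        intro p hp q hq h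
        fin_cases hp <;> fin_cases hq <;>
          first
            | rfl
            | (have := swap_inj (by norm_num) (by norm_num) h; omega)
      · intro τ hτ i hi
        simp only [List.mem_map] at hτ
        obtain ⟨p, hp, rfl⟩ := hτ
        interval_cases i <;> fin_cases hp <;> exact swap_ne_swap (by omega) (by omega)
      · simp only [List.range_succ, List.range_zero, List.nil_append, List.cons_append,
          List.map_cons, List.map_nil, List.prod_cons, List.prod_nil, mul_one, List.map_append,
          List.prod_append]
        norm_num
        have := swap_pair 1 2 3 4 (by omega) (by omega) (by omega) (by omega) (by omega) (by omega)
        simpa [mul_assoc] using this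
      · simp
    · -- r = 3
      refine ⟨[(1,3),(2,5),(2,4),(1,4),(1,6),(1,5),(2,3)].map (fun p => Equiv.swap p.1 p.2),
        ?_, ?_, ?_, ?_, ?_⟩
      · intro τ hτ
        simp only [List.mem_map] at hτ
        obtain ⟨p, hp, rfl⟩ := hτ
        fin_cases hp <;> exact ⟨_, _, by norm_num, by norm_num, by norm_num, rfl⟩
      · refine List.Nodup.map_on ?_ (by decide)
        intro p hp q hq h
        fin_cases hp <;> fin_cases hq <;>
          first
            | rfl
            | (have := swap_inj (by norm_num) (by norm_num) h; omega)
      · intro τ hτ i hi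
        simp only [List.mem_map] at hτ
        obtain ⟨p, hp, rfl⟩ := hτ
        interval_cases i <;> fin_cases hp <;> exact swap_ne_swap (by omega) (by omega)
      · simp only [List.range_succ, List.range_zero, List.nil_append, List.cons_append,
          List.map_cons, List.map_nil, List.prod_cons, List.prod_nil, mul_one, List.map_append,
          List.prod_append]
        norm_num
        exact key3_s15
      · simp [Nat.even_iff]
  · -- r ≥ 4
    push_neg at hr4
    set m := r - 2 with hm
    have hrm : r = m + 2 := by omega
    obtain ⟨l, hb, hnd, hav, hp, hl⟩ := ih m (by omega) (by omega)
    set a := 2 * m + 1 with ha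
    set b := 2 * m + 2 with hb'
    set c := 2 * m + 3 with hc
    set d := 2 * m + 4 with hd
    refine ⟨l ++ [Equiv.swap a c, Equiv.swap b d, Equiv.swap a d, Equiv.swap b c],
      ?_, ?_, ?_, ?_, ?_⟩
    · intro τ hτ
      rcases List.mem_append.mp hτ with h | h
      · obtain ⟨x, y, h1, h2, h3, rfl⟩ := hb τ h
        exact ⟨x, y, h1, h2, by omega, rfl⟩
      · simp only [List.mem_cons, List.not_mem_nil, or_false] at h
        rcases h with rfl | rfl | rfl | rfl
        · exact ⟨a, c, by omega, by omega, by omega, rfl⟩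
        · exact ⟨b, d, by omega, by omega, by omega, rfl⟩
        · exact ⟨a, d, by omega, by omega, by omega, rfl⟩
        · exact ⟨b, c, by omega, by omega, by omega, rfl⟩
    · rw [List.nodup_append]
      refine ⟨hnd, ?_, ?_⟩
      · simp only [List.nodup_cons, List.mem_cons, List.not_mem_nil, or_false,
          List.nodup_nil, and_true, not_or]
        repeat' apply And.intro
        all_goals first | trivial | exact swap_ne_swap (by omega) (by omega)
      · intro τ hτ σ hτ' hτσ
        subst hτσ
        obtain ⟨x, y, h1, h2, h3, rfl⟩ := hb τ hτ
        simp only [List.mem_cons, List.not_mem_nil, or_false] at hτ'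
        rcases hτ' with h | h | h | h <;>
          exact swap_ne_swap (by omega) (by omega) h
    · intro τ hτ i hi
      rcases List.mem_append.mp hτ with h | h
      · obtain ⟨x, y, h1, h2, h3, hxy⟩ := hb τ h
        by_cases him : i < m
        · exact hav τ h i him
        · subst hxy
          exact swap_ne_swap (by omega) (by omega)
      · simp only [List.mem_cons, List.not_mem_nil, or_false] at h
        rcases h with rfl | rfl | rfl | rfl <;>
          exact swap_ne_swap (by omega) (by omega)
    · rw [List.prod_append, hp, hrm]
      rw [show m + 2 = (m + 1) + 1 from rfl, List.range_succ, List.range_succ]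
      simp only [List.map_append, List.prod_append, List.map_cons, List.map_nil,
        List.prod_cons, List.prod_nil, mul_one, mul_assoc]
      congr 1
      have h1 : 2 * (m + 1) + 1 = c := by omega
      have h2 : 2 * (m + 1) + 2 = d := by omega
      rw [h1, h2]
      have := swap_pair a b c d (by omega) (by omega) (by omega) (by omega) (by omega) (by omega)
      simpa [mul_assoc] using this
    · have hpar : Even r ↔ Even m := by
        rw [hrm, Nat.even_add]
        simp
      simp only [List.length_append, List.length_cons, List.length_nil, hl, hpar]
      by_cases h : Even m <;> simp [h] <;> omega

/-- For every `r ≥ 2`, the permutation `(1 2)(3 4)⋯(2r-1, 2r)` of `{1, ..., 2r}`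
can be written as the product of a list of `2r + ε_r` pairwise distinct
transpositions, none equal to any of the factors `(2i-1, 2i)`, where `ε_r = 0`
if `r` is even and `ε_r = 1` if `r` is odd. -/
theorem exists_undo_r_disjoint_swaps (r : ℕ) (hr : 2 ≤ r) :
    ∃ l : List (Equiv.Perm ℕ),
      (∀ τ ∈ l, τ.IsSwap) ∧ l.Nodup ∧
      (∀ τ ∈ l, ∀ i < r, τ ≠ Equiv.swap (2 * i + 1) (2 * i + 2)) ∧
      l.prod = ((List.range r).map fun i => Equiv.swap (2 * i + 1) (2 * i + 2)).prod ∧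
      l.length = 2 * r + (if Even r then 0 else 1) := by
  obtain ⟨l, hb, hnd, hav, hp, hl⟩ := aux_undo r hr
  refine ⟨l, ?_, hnd, hav, hp, hl⟩
  intro τ hτ
  obtain ⟨x, y, h1, h2, h3, rfl⟩ := hb τ hτ
  exact ⟨x, y, by omega, rfl⟩
end

section
/- For every r ≥ 2, if a list of pairwise distinct transpositions, none equal to any of the factors (1 2), (3 4), ..., (2r−1, 2r), has product equal to the permutation (1 2)(3 4)···(2r−1, 2r) of {1, ..., 2r}, then the list has length at least 2r + ε_r, where ε_r = 0 if r is even and ε_r = 1 if r is odd. -/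
namespace UndoAux
open Equiv List

def sw (e : ℕ × ℕ) : Equiv.Perm ℕ := Equiv.swap e.1 e.2
def Sw (E : List (ℕ × ℕ)) : List (Equiv.Perm ℕ) := E.map sw
def Pd (F : List (ℕ × ℕ)) : Equiv.Perm ℕ := (Sw F).prod
def Disj (F : List (ℕ × ℕ)) : Prop :=
  F.Pairwise fun p q => p.1 ≠ q.1 ∧ p.1 ≠ q.2 ∧ p.2 ≠ q.1 ∧ p.2 ≠ q.2


lemma isSwap_eq_swap {τ : Equiv.Perm ℕ} (h : τ.IsSwap) {a : ℕ} (ha : τ a ≠ a) :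
    τ = Equiv.swap a (τ a) := by
  obtain ⟨u, v, huv, rfl⟩ := h
  rcases (Equiv.swap_apply_ne_self_iff.mp ha).2 with rfl | rfl
  · rw [Equiv.swap_apply_left]
  · rw [Equiv.swap_apply_right, Equiv.swap_comm]

lemma sw_fix {e : ℕ × ℕ} {x : ℕ} (h1 : x ≠ e.1) (h2 : x ≠ e.2) : sw e x = x :=
  Equiv.swap_apply_of_ne_of_ne h1 h2

lemma sw_fst (e : ℕ × ℕ) : sw e e.1 = e.2 := Equiv.swap_apply_left _ _
lemma sw_snd (e : ℕ × ℕ) : sw e e.2 = e.1 := Equiv.swap_apply_right _ _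

lemma sw_moves {e : ℕ × ℕ} (he : e.1 ≠ e.2) {x : ℕ} (hx : sw e x ≠ x) :
    x = e.1 ∨ x = e.2 := ((Equiv.swap_apply_ne_self_iff.mp hx).2)

/-- Points fixed by every element are fixed by the product. -/
lemma prod_fix_all {M : List (Equiv.Perm ℕ)} {x : ℕ} (h : ∀ τ ∈ M, τ x = x) :
    M.prod x = x := by
  induction M with
  | nil => simp
  | cons τ M ih =>
    rw [List.prod_cons]
    simp only [Equiv.Perm.mul_apply, ih (fun τ' hτ' => h τ' (by simp [hτ']))]
    exact h τ (by simp)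

lemma prod_mapsTo {M : List (Equiv.Perm ℕ)} {S : Finset ℕ}
    (h : ∀ τ ∈ M, ∀ x ∈ S, τ x ∈ S) : ∀ x ∈ S, M.prod x ∈ S := by
  induction M with
  | nil => simp
  | cons τ M ih =>
    intro x hx
    rw [List.prod_cons]
    simp only [Equiv.Perm.mul_apply]
    exact h τ (by simp) _ (ih (fun τ' hτ' => h τ' (by simp [hτ'])) x hx)

lemma pow_mapsTo {π : Equiv.Perm ℕ} {S : Finset ℕ}
    (h : ∀ x ∈ S, π x ∈ S) : ∀ (k : ℕ), ∀ x ∈ S, (π ^ k) x ∈ S := by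
  intro k
  induction k with
  | zero => simp
  | succ k ih =>
    intro x hx
    rw [pow_succ]
    simp only [Equiv.Perm.mul_apply]
    exact ih _ (h x hx)

/-- Splitting a product along a filter, when the two classes elementwise commute. -/
lemma prod_filter_split {α : Type*} (E : List α) (g : α → Equiv.Perm ℕ) (p : α → Bool)
    (h : ∀ a ∈ E, ∀ b ∈ E, p a → ¬ p b → Commute (g a) (g b)) :
    (E.map g).prod =
      ((E.filter p).map g).prod * ((E.filter (fun a => ¬ p a)).map g).prod := by
  induction E with
  | nil => simp
  | cons e E ih =>
    have ih' := ih (fun a ha b hb => h a (by simp [ha]) b (by simp [hb]))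
    by_cases hp : p e
    · rw [List.map_cons, List.prod_cons, List.filter_cons_of_pos hp,
        List.filter_cons_of_neg (by simp [hp]), List.map_cons, List.prod_cons, ih', mul_assoc]
    · rw [List.map_cons, List.prod_cons, List.filter_cons_of_neg hp,
        List.filter_cons_of_pos (by simp [hp]), List.map_cons, List.prod_cons, ih']
      have hc : Commute (g e) ((E.filter p).map g).prod := by
        apply Commute.list_prod_right
        intro x hx
        obtain ⟨a, ha, rfl⟩ := List.mem_map.mp hx
        exact (h a (by simp [(List.mem_filter.mp ha).1]) e (by simp)
          (List.mem_filter.mp ha).2 hp).symm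
      rw [← mul_assoc, hc.eq, mul_assoc]

/-- Evaluation of a product of pairwise disjoint swaps at a non-endpoint. -/
lemma pd_fix {F : List (ℕ × ℕ)} {x : ℕ} (h : ∀ f ∈ F, x ≠ f.1 ∧ x ≠ f.2) :
    Pd F x = x :=
  prod_fix_all (by
    intro τ hτ
    obtain ⟨f, hf, rfl⟩ := List.mem_map.mp hτ
    exact sw_fix (h f hf).1 (h f hf).2)

lemma pd_fst {F : List (ℕ × ℕ)} (hd : Disj F) {f : ℕ × ℕ} (hf : f ∈ F) :
    Pd F f.1 = f.2 := by
  induction F with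
  | nil => simp at hf
  | cons g F ih =>
    have : Pd (g :: F) = sw g * Pd F := by
      simp [Pd, Sw, List.prod_cons]
    rw [this]
    rcases List.mem_cons.mp hf with rfl | hf'
    · have h1 : Pd F f.1 = f.1 := pd_fix (by
        intro q hq
        have := (List.pairwise_cons.mp hd).1 q hq
        exact ⟨this.1, this.2.1⟩)
      simp [Equiv.Perm.mul_apply, h1, sw_fst]
    · have h1 : Pd F f.1 = f.2 := ih (List.pairwise_cons.mp hd).2 hf'
      have h2 := (List.pairwise_cons.mp hd).1 f hf'
      simp only [Equiv.Perm.mul_apply, h1]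
      exact sw_fix (Ne.symm h2.2.1) (Ne.symm h2.2.2.2)

lemma pd_snd {F : List (ℕ × ℕ)} (hd : Disj F) {f : ℕ × ℕ} (hf : f ∈ F) :
    Pd F f.2 = f.1 := by
  induction F with
  | nil => simp at hf
  | cons g F ih =>
    have hrw : Pd (g :: F) = sw g * Pd F := by
      simp [Pd, Sw, List.prod_cons]
    rw [hrw]
    rcases List.mem_cons.mp hf with rfl | hf'
    · have h1 : Pd F f.2 = f.2 := pd_fix (by
        intro q hq
        have := (List.pairwise_cons.mp hd).1 q hq
        exact ⟨this.2.2.1, this.2.2.2⟩)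
      simp [Equiv.Perm.mul_apply, h1, sw_snd]
    · have h1 : Pd F f.2 = f.1 := ih (List.pairwise_cons.mp hd).2 hf'
      have h2 := (List.pairwise_cons.mp hd).1 f hf'
      simp only [Equiv.Perm.mul_apply, h1]
      exact sw_fix (Ne.symm h2.1) (Ne.symm h2.2.2.1)

/-- A product of pairwise disjoint swaps is an involution. -/
lemma pd_invol {F : List (ℕ × ℕ)} (hd : Disj F) (x : ℕ) : Pd F (Pd F x) = x := by
  by_cases hx : ∃ f ∈ F, x = f.1 ∨ x = f.2
  · obtain ⟨f, hf, hx⟩ := hx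
    rcases hx with rfl | rfl
    · rw [pd_fst hd hf, pd_snd hd hf]
    · rw [pd_snd hd hf, pd_fst hd hf]
  · push_neg at hx
    have h1 : Pd F x = x := pd_fix (fun f hf => ⟨(hx f hf).1, (hx f hf).2⟩)
    rw [h1, h1]

lemma invol_pow {σ : Equiv.Perm ℕ} (h : ∀ x, σ (σ x) = x) (k : ℕ) (x : ℕ) :
    (σ ^ k) x = x ∨ (σ ^ k) x = σ x := by
  induction k with
  | zero => simp
  | succ k ih =>
    rw [pow_succ']
    simp only [Equiv.Perm.mul_apply]
    rcases ih with h1 | h1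
    · right; rw [h1]
    · left; rw [h1, h x]



def Step (E : List (ℕ × ℕ)) (x y : ℕ) : Prop :=
  ∃ e ∈ E, (x = e.1 ∧ y = e.2) ∨ (x = e.2 ∧ y = e.1)
def deg (E : List (ℕ × ℕ)) (x : ℕ) : ℕ := E.countP (fun e => decide (x = e.1 ∨ x = e.2))
def Reach (π : Equiv.Perm ℕ) (x y : ℕ) : Prop := ∃ k, (π ^ k) x = y


lemma sw_mapsTo {e : ℕ × ℕ} {S : Finset ℕ} (h1 : e.1 ∈ S) (h2 : e.2 ∈ S)
    {z : ℕ} (hz : z ∈ S) : sw e z ∈ S := by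
  by_cases hz1 : z = e.1
  · subst hz1; rw [sw]; rw [Equiv.swap_apply_left]; exact h2
  · by_cases hz2 : z = e.2
    · subst hz2; rw [sw]; rw [Equiv.swap_apply_right]; exact h1
    · rw [sw_fix hz1 hz2]; exact hz


lemma reach_trans {π : Equiv.Perm ℕ} {x y z : ℕ} (h1 : Reach π x y) (h2 : Reach π y z) :
    Reach π x z := by
  obtain ⟨k, hk⟩ := h1
  obtain ⟨l, hl⟩ := h2
  exact ⟨k + l, by rw [add_comm, pow_add]; simp only [Equiv.Perm.mul_apply, hk, hl]⟩

lemma reach_symm {π : Equiv.Perm ℕ} {O : Finset ℕ} (hm : ∀ z ∈ O, π z ∈ O)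
    {x y : ℕ} (hx : x ∈ O) (h : Reach π x y) : Reach π y x := by
  obtain ⟨k, hk⟩ := h
  -- find a period p ≥ 1 with (π ^ p) x = x
  obtain ⟨i, hi, j, hj, hij, hfij⟩ :=
    Finset.exists_ne_map_eq_of_card_lt_of_maps_to
      (s := Finset.range (O.card + 1)) (t := O)
      (by rw [Finset.card_range]; omega)
      (fun i _ => pow_mapsTo hm i x hx)
  wlog hlt : i < j generalizing i j
  · exact this j hj i hi (Ne.symm hij) hfij.symm (by omega)
  have hp : (π ^ (j - i)) x = x := by
    have : (π ^ i) ((π ^ (j - i)) x) = (π ^ i) x := by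
      rw [← Equiv.Perm.mul_apply, ← pow_add]
      rw [Nat.add_sub_cancel' (le_of_lt hlt)]
      exact hfij.symm
    exact (π ^ i).injective this
  obtain ⟨p', hp'⟩ : ∃ p', j - i = p' + 1 := ⟨j - i - 1, by omega⟩
  rw [hp'] at hp
  -- (π ^ ((p' + 1) * k)) x = x
  have hfix : ∀ n : ℕ, ((π ^ (p' + 1)) ^ n) x = x := by
    intro n
    induction n with
    | zero => rfl
    | succ n ih => rw [pow_succ']; simp only [Equiv.Perm.mul_apply, ih]; exact hp
  refine ⟨p' * k, ?_⟩
  rw [← hk, ← Equiv.Perm.mul_apply, ← pow_add]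
  have : p' * k + k = (p' + 1) * k := by ring
  rw [this, pow_mul]
  exact hfix k

/-- Membership in an "edge-closed" set is invariant along the connectivity relation. -/
lemma eqvgen_mem_iff {E : List (ℕ × ℕ)} {S : Finset ℕ}
    (hinv : ∀ e ∈ E, (e.1 ∈ S ↔ e.2 ∈ S)) {x y : ℕ}
    (h : Relation.EqvGen (Step E) x y) : x ∈ S ↔ y ∈ S := by
  induction h with
  | rel x y hstep =>
    obtain ⟨e, he, hc⟩ := hstep
    rcases hc with ⟨rfl, rfl⟩ | ⟨rfl, rfl⟩
    · exact hinv e he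
    · exact (hinv e he).symm
  | refl x => exact Iff.rfl
  | symm x y _ ih => exact ih.symm
  | trans x y z _ _ ih1 ih2 => exact ih1.trans ih2

/-- Connectivity restricts to the sublist of edges meeting an edge-closed set. -/
lemma eqvgen_restrict {E : List (ℕ × ℕ)} {S : Finset ℕ}
    (hinv : ∀ e ∈ E, (e.1 ∈ S ↔ e.2 ∈ S)) {x y : ℕ}
    (h : Relation.EqvGen (Step E) x y) :
    x ∈ S → Relation.EqvGen (Step (E.filter (fun e => decide (e.1 ∈ S)))) x y := by
  induction h with
  | rel x y hstep =>
    intro hx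
    obtain ⟨e, he, hc⟩ := hstep
    have he1 : e.1 ∈ S := by
      rcases hc with ⟨rfl, rfl⟩ | ⟨rfl, rfl⟩
      · exact hx
      · exact (hinv e he).mpr hx
    exact Relation.EqvGen.rel _ _ ⟨e, List.mem_filter.mpr ⟨he, by simpa using he1⟩, hc⟩
  | refl x => intro _; exact Relation.EqvGen.refl x
  | symm x y hxy ih =>
    intro hy
    have hx : x ∈ S := (eqvgen_mem_iff hinv (Relation.EqvGen.symm _ _ hxy)).mp hy
    exact Relation.EqvGen.symm _ _ (ih hx)
  | trans x y z hxy _ ih1 ih2 =>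
    intro hx
    have hy : y ∈ S := (eqvgen_mem_iff hinv hxy).mp hx
    exact Relation.EqvGen.trans _ _ _ (ih1 hx) (ih2 hy)

/-- Contracting a pendant edge preserves connectivity. -/
lemma eqvgen_contract {E₁ E₂ : List (ℕ × ℕ)} {e₀ : ℕ × ℕ} {a₀ x₀ : ℕ}
    (hnt : ∀ e ∈ E₁ ++ E₂, ¬(a₀ = e.1 ∨ a₀ = e.2))
    (hends : (a₀ = e₀.1 ∧ x₀ = e₀.2) ∨ (a₀ = e₀.2 ∧ x₀ = e₀.1))
    {x y : ℕ} (h : Relation.EqvGen (Step (E₁ ++ e₀ :: E₂)) x y) :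
    Relation.EqvGen (Step (E₁ ++ E₂))
      (if x = a₀ then x₀ else x) (if y = a₀ then x₀ else y) := by
  induction h with
  | rel x y hstep =>
    obtain ⟨e, he, hc⟩ := hstep
    rcases List.mem_append.mp he with he' | he'
    · -- e ∈ E₁
      have hmem : e ∈ E₁ ++ E₂ := List.mem_append.mpr (Or.inl he')
      have hxa : x ≠ a₀ := by
        rintro rfl
        exact hnt e hmem (by rcases hc with ⟨rfl, _⟩ | ⟨rfl, _⟩ <;> simp)
      have hya : y ≠ a₀ := by
        rintro rfl
        exact hnt e hmem (by rcases hc with ⟨_, rfl⟩ | ⟨_, rfl⟩ <;> simp)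
      rw [if_neg hxa, if_neg hya]
      exact Relation.EqvGen.rel _ _ ⟨e, hmem, hc⟩
    · rcases List.mem_cons.mp he' with rfl | he''
      · -- e = e₀ : both endpoints map to x₀
        have hx' : (if x = a₀ then x₀ else x) = x₀ := by
          rcases hc with ⟨rfl, _⟩ | ⟨rfl, _⟩ <;> rcases hends with ⟨h1, h2⟩ | ⟨h1, h2⟩ <;>
            by_cases hxa : x = a₀ <;> simp_all
        have hy' : (if y = a₀ then x₀ else y) = x₀ := by
          rcases hc with ⟨_, rfl⟩ | ⟨_, rfl⟩ <;> rcases hends with ⟨h1, h2⟩ | ⟨h1, h2⟩ <;>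
            by_cases hya : y = a₀ <;> simp_all
        rw [hx', hy']
        exact Relation.EqvGen.refl x₀
      · have hmem : e ∈ E₁ ++ E₂ := List.mem_append.mpr (Or.inr he'')
        have hxa : x ≠ a₀ := by
          rintro rfl
          exact hnt e hmem (by rcases hc with ⟨rfl, _⟩ | ⟨rfl, _⟩ <;> simp)
        have hya : y ≠ a₀ := by
          rintro rfl
          exact hnt e hmem (by rcases hc with ⟨_, rfl⟩ | ⟨_, rfl⟩ <;> simp)
        rw [if_neg hxa, if_neg hya]
        exact Relation.EqvGen.rel _ _ ⟨e, hmem, hc⟩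
  | refl x => exact Relation.EqvGen.refl _
  | symm x y _ ih => exact Relation.EqvGen.symm _ _ ih
  | trans x y z _ _ ih1 ih2 => exact Relation.EqvGen.trans _ _ _ ih1 ih2

/-- Degree sum formula. -/
lemma deg_sum {E : List (ℕ × ℕ)} {O : Finset ℕ} (hp : ∀ e ∈ E, e.1 ≠ e.2)
    (hEO : ∀ e ∈ E, e.1 ∈ O ∧ e.2 ∈ O) :
    ∑ x ∈ O, deg E x = 2 * E.length := by
  induction E with
  | nil => simp [deg]
  | cons e E ih =>
    have hrec : ∀ x, deg (e :: E) x = deg E x + if (x = e.1 ∨ x = e.2) then 1 else 0 := by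
      intro x
      simp [deg, List.countP_cons]
    simp only [hrec]
    rw [Finset.sum_add_distrib]
    have h1 : ∑ x ∈ O, (if (x = e.1 ∨ x = e.2) then 1 else 0) = 2 := by
      rw [← Finset.sum_filter]
      have : O.filter (fun x => x = e.1 ∨ x = e.2) = {e.1, e.2} := by
        ext z
        simp only [Finset.mem_filter, Finset.mem_insert, Finset.mem_singleton]
        constructor
        · rintro ⟨_, h⟩; exact h
        · rintro (rfl | rfl)
          · exact ⟨(hEO e (by simp)).1, Or.inl rfl⟩
          · exact ⟨(hEO e (by simp)).2, Or.inr rfl⟩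
      rw [this, Finset.sum_const, smul_eq_mul, mul_one,
        Finset.card_insert_of_notMem (by simpa using hp e (by simp)),
        Finset.card_singleton]
    rw [ih (fun e' he' => hp e' (by simp [he'])) (fun e' he' => hEO e' (by simp [he'])), h1]
    simp [List.length_cons]
    ring


lemma core (m : ℕ) : ∀ (E : List (ℕ × ℕ)), E.length = m → (∀ e ∈ E, e.1 ≠ e.2) →
    ∀ O : Finset ℕ,
    (∀ e ∈ E, e.1 ∈ O ∧ e.2 ∈ O) →
    (∀ x ∈ O, ∃ e ∈ E, x = e.1 ∨ x = e.2) →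
    (∀ x ∈ O, ∀ y ∈ O, Relation.EqvGen (Step E) x y) →
    O.card ≤ m ∨ (m + 1 = O.card ∧ ∀ x ∈ O, ∀ y ∈ O, Reach (Pd E) x y) := by
  induction m using Nat.strong_induction_on with
  | _ m IH =>
  intro E hlen hproper O hEO htouch hconn
  by_cases hdeg : ∀ x ∈ O, 2 ≤ deg E x
  · left
    have hsum : ∑ x ∈ O, deg E x = 2 * E.length := deg_sum hproper hEO
    have h2 : 2 * O.card ≤ 2 * E.length := by
      rw [← hsum]
      calc 2 * O.card = ∑ _x ∈ O, 2 := by rw [Finset.sum_const, smul_eq_mul, mul_comm]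
      _ ≤ ∑ x ∈ O, deg E x := Finset.sum_le_sum hdeg
    omega
  · push_neg at hdeg
    obtain ⟨a₀, ha₀O, hd1⟩ := hdeg
    obtain ⟨e₀, he₀E, htoucha⟩ : ∃ e ∈ E, a₀ = e.1 ∨ a₀ = e.2 := htouch a₀ ha₀O
    obtain ⟨E₁, E₂, rfl⟩ := List.append_of_mem he₀E
    have hd1' : 0 < deg (E₁ ++ e₀ :: E₂) a₀ := by
      rw [deg]
      exact List.countP_pos_iff.mpr ⟨e₀, he₀E, by simpa using htoucha⟩
    have hdeg_a₀ : deg (E₁ ++ e₀ :: E₂) a₀ = 1 := by omega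
    have hsplit : ∀ u : ℕ, (u = e₀.1 ∨ u = e₀.2) →
        deg (E₁ ++ e₀ :: E₂) u = deg E₁ u + deg E₂ u + 1 := by
      intro u hu
      rw [deg, List.countP_append, List.countP_cons_of_pos (p := fun e => decide (u = e.1 ∨ u = e.2)) (a := e₀) (by simpa using hu)]
      rw [deg, deg]
      omega
    have hza : deg E₁ a₀ = 0 ∧ deg E₂ a₀ = 0 := by
      have := hsplit a₀ htoucha
      omega
    have hnt : ∀ e ∈ E₁ ++ E₂, ¬(a₀ = e.1 ∨ a₀ = e.2) := by
      intro e he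
      rcases List.mem_append.mp he with he' | he'
      · have := List.countP_eq_zero.mp hza.1 e he'
        simpa using this
      · have := List.countP_eq_zero.mp hza.2 e he'
        simpa using this
    -- the other endpoint of the pendant edge
    set x₀ := if a₀ = e₀.1 then e₀.2 else e₀.1 with hx₀def
    have hends : (a₀ = e₀.1 ∧ x₀ = e₀.2) ∨ (a₀ = e₀.2 ∧ x₀ = e₀.1) := by
      by_cases h : a₀ = e₀.1
      · exact Or.inl ⟨h, by rw [hx₀def, if_pos h]⟩
      · rcases htoucha with h' | h'
        · exact absurd h' h
        · exact Or.inr ⟨h', by rw [hx₀def, if_neg h]⟩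
    have hax : a₀ ≠ x₀ := by
      have := hproper e₀ he₀E
      rcases hends with ⟨h1, h2⟩ | ⟨h1, h2⟩ <;> rw [h1, h2]
      · exact this
      · exact this.symm
    have hswap : sw e₀ = Equiv.swap a₀ x₀ := by
      rcases hends with ⟨h1, h2⟩ | ⟨h1, h2⟩ <;> rw [sw, h1, h2]
      exact Equiv.swap_comm _ _
    have hx₀O : x₀ ∈ O := by
      rcases hends with ⟨h1, h2⟩ | ⟨h1, h2⟩ <;> rw [h2]
      · exact (hEO e₀ he₀E).2
      · exact (hEO e₀ he₀E).1
    have hx₀touch : x₀ = e₀.1 ∨ x₀ = e₀.2 := by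
      rcases hends with ⟨h1, h2⟩ | ⟨h1, h2⟩
      · exact Or.inr h2
      · exact Or.inl h2
    by_cases hdx : 2 ≤ deg (E₁ ++ e₀ :: E₂) x₀
    · -- contraction of the pendant edge
      have hEO' : ∀ e ∈ E₁ ++ E₂, e.1 ∈ O.erase a₀ ∧ e.2 ∈ O.erase a₀ := by
        intro e he
        have hO := hEO e (by
          rcases List.mem_append.mp he with h | h
          · exact List.mem_append.mpr (Or.inl h)
          · exact List.mem_append.mpr (Or.inr (List.mem_cons_of_mem _ h)))
        have hne := hnt e he
        push_neg at hne
        exact ⟨Finset.mem_erase.mpr ⟨Ne.symm hne.1, hO.1⟩,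
          Finset.mem_erase.mpr ⟨Ne.symm hne.2, hO.2⟩⟩
      have htouch' : ∀ x ∈ O.erase a₀, ∃ e ∈ E₁ ++ E₂, x = e.1 ∨ x = e.2 := by
        intro x hx
        have hxa : x ≠ a₀ := (Finset.mem_erase.mp hx).1
        have hxO : x ∈ O := (Finset.mem_erase.mp hx).2
        by_cases hxx : x = x₀
        · have h1 := hsplit x₀ hx₀touch
          have h2 : 1 ≤ deg E₁ x₀ + deg E₂ x₀ := by omega
          have h3 : 0 < (E₁ ++ E₂).countP (fun e => decide (x₀ = e.1 ∨ x₀ = e.2)) := by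
            rw [List.countP_append]
            rw [deg, deg] at h2
            omega
          obtain ⟨e, he, hc⟩ := List.countP_pos_iff.mp h3
          exact ⟨e, he, by rw [hxx]; simpa using hc⟩
        · obtain ⟨e, he, hc⟩ := htouch x hxO
          rcases List.mem_append.mp he with h | h
          · exact ⟨e, List.mem_append.mpr (Or.inl h), hc⟩
          · rcases List.mem_cons.mp h with rfl | h'
            · exfalso
              rcases hends with ⟨h1, h2⟩ | ⟨h1, h2⟩ <;> rcases hc with h3 | h3 <;> omega
            · exact ⟨e, List.mem_append.mpr (Or.inr h'), hc⟩
      have hconn' : ∀ x ∈ O.erase a₀, ∀ y ∈ O.erase a₀,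
          Relation.EqvGen (Step (E₁ ++ E₂)) x y := by
        intro x hx y hy
        have h := eqvgen_contract hnt hends
          (hconn x (Finset.mem_erase.mp hx).2 y (Finset.mem_erase.mp hy).2)
        rwa [if_neg (Finset.mem_erase.mp hx).1, if_neg (Finset.mem_erase.mp hy).1] at h
      have hm' : (E₁ ++ E₂).length + 1 = m := by
        rw [List.length_append] at hlen ⊢
        rw [List.length_cons] at hlen
        omega
      have hcard' : (O.erase a₀).card + 1 = O.card := Finset.card_erase_add_one ha₀O
      rcases IH (E₁ ++ E₂).length (by omega) (E₁ ++ E₂) rfl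
        (fun e he => hproper e (by
          rcases List.mem_append.mp he with h | h
          · exact List.mem_append.mpr (Or.inl h)
          · exact List.mem_append.mpr (Or.inr (List.mem_cons_of_mem _ h))))
        (O.erase a₀) hEO' htouch' hconn' with hA | ⟨hB1, hB2⟩
      · left; omega
      · -- tree case: build the transitivity
        right
        refine ⟨by omega, ?_⟩
        set O' := O.erase a₀ with hO'def
        have hx₀O' : x₀ ∈ O' := Finset.mem_erase.mpr ⟨Ne.symm hax, hx₀O⟩
        set P := Pd E₁ with hPdef
        set Q := Pd E₂ with hQdef
        set π' := Pd (E₁ ++ E₂) with hπ'def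
        have hπ'PQ : π' = P * Q := by
          rw [hπ'def, hPdef, hQdef, Pd, Pd, Pd, Sw, Sw, Sw, List.map_append,
            List.prod_append]
        have hπ : Pd (E₁ ++ e₀ :: E₂) = P * (Equiv.swap a₀ x₀ * Q) := by
          rw [Pd, Sw, List.map_append, List.prod_append, List.map_cons, List.prod_cons,
            hswap, hPdef, hQdef, Pd, Pd, Sw, Sw]
        have hPfix : P a₀ = a₀ := by
          apply prod_fix_all
          intro τ hτ
          obtain ⟨e, he, rfl⟩ := List.mem_map.mp hτ
          have := hnt e (List.mem_append.mpr (Or.inl he))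
          push_neg at this
          exact sw_fix this.1 this.2
        have hQfix : Q a₀ = a₀ := by
          apply prod_fix_all
          intro τ hτ
          obtain ⟨e, he, rfl⟩ := List.mem_map.mp hτ
          have := hnt e (List.mem_append.mpr (Or.inr he))
          push_neg at this
          exact sw_fix this.1 this.2
        have hPmap : ∀ z ∈ O', P z ∈ O' := by
          apply prod_mapsTo
          intro τ hτ x hx
          obtain ⟨e, he, rfl⟩ := List.mem_map.mp hτ
          have := hEO' e (List.mem_append.mpr (Or.inl he))
          exact sw_mapsTo this.1 this.2 hx
        have hQmap : ∀ z ∈ O', Q z ∈ O' := by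
          apply prod_mapsTo
          intro τ hτ x hx
          obtain ⟨e, he, rfl⟩ := List.mem_map.mp hτ
          have := hEO' e (List.mem_append.mpr (Or.inr he))
          exact sw_mapsTo this.1 this.2 hx
        have hπ'map : ∀ z ∈ O', π' z ∈ O' := by
          intro z hz
          rw [hπ'PQ]
          exact hPmap _ (hQmap z hz)
        have hπmap : ∀ z ∈ O, Pd (E₁ ++ e₀ :: E₂) z ∈ O := by
          apply prod_mapsTo
          intro τ hτ x hx
          obtain ⟨e, he, rfl⟩ := List.mem_map.mp hτ
          exact sw_mapsTo (hEO e he).1 (hEO e he).2 hx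
        set c := P x₀ with hcdef
        have hcO' : c ∈ O' := hPmap x₀ hx₀O'
        have hkey : ∀ z, Pd (E₁ ++ e₀ :: E₂) z = Equiv.swap a₀ c (π' z) := by
          intro z
          rw [hπ, hπ'PQ]
          simp only [Equiv.Perm.mul_apply]
          by_cases hz : z = a₀
          · subst hz
            rw [hQfix, Equiv.swap_apply_left, hPfix, Equiv.swap_apply_left]
          · have hQz : Q z ≠ a₀ := fun h => hz (Q.injective (h.trans hQfix.symm))
            by_cases hz2 : Q z = x₀
            · rw [hz2, Equiv.swap_apply_right, hPfix, ← hcdef, Equiv.swap_apply_right]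
            · rw [Equiv.swap_apply_of_ne_of_ne hQz hz2]
              have h1 : P (Q z) ≠ a₀ := fun h => hQz (P.injective (h.trans hPfix.symm))
              have h2 : P (Q z) ≠ c := fun h => hz2 (P.injective h)
              rw [Equiv.swap_apply_of_ne_of_ne h1 h2]
        obtain ⟨zs, hzsO', hzsc⟩ : ∃ zs, zs ∈ O' ∧ π' zs = c := by
          have h1 : O'.image π' = O' := by
            apply Finset.eq_of_subset_of_card_le
            · intro w hw
              obtain ⟨z, hz, rfl⟩ := Finset.mem_image.mp hw
              exact hπ'map z hz
            · rw [Finset.card_image_of_injective _ π'.injective]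
          rw [← h1] at hcO'
          obtain ⟨z, hz, hzc⟩ := Finset.mem_image.mp hcO'
          exact ⟨z, hz, hzc⟩
        have hreach : ∀ x ∈ O', Reach (Pd (E₁ ++ e₀ :: E₂)) x a₀ := by
          intro x hx
          have hex : ∃ k, (π' ^ k) x = zs := hB2 x hx zs hzsO'
          set K := Nat.find hex with hKdef
          have hclaim : ∀ j, j ≤ K → (Pd (E₁ ++ e₀ :: E₂) ^ j) x = (π' ^ j) x := by
            intro j
            induction j with
            | zero => intro _; simp
            | succ j ihj =>
              intro hle
              have hj := ihj (by omega)
              rw [pow_succ', pow_succ']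
              simp only [Equiv.Perm.mul_apply]
              rw [hj, hkey ((π' ^ j) x)]
              have hw : π' ((π' ^ j) x) = (π' ^ (j + 1)) x := by
                rw [pow_succ']
                simp only [Equiv.Perm.mul_apply]
              have hwO : π' ((π' ^ j) x) ∈ O' := by
                rw [hw]
                exact pow_mapsTo hπ'map (j + 1) x hx
              apply Equiv.swap_apply_of_ne_of_ne
              · exact (Finset.mem_erase.mp hwO).1
              · intro hwc
                have : (π' ^ j) x = zs := π'.injective (hwc.trans hzsc.symm)
                exact Nat.find_min hex (by omega) this
          have hKspec : (π' ^ K) x = zs := Nat.find_spec hex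
          refine ⟨K + 1, ?_⟩
          rw [pow_succ']
          simp only [Equiv.Perm.mul_apply]
          rw [hclaim K le_rfl, hKspec, hkey zs, hzsc, Equiv.swap_apply_right]
        intro x hx y hy
        have r1 : Reach (Pd (E₁ ++ e₀ :: E₂)) x a₀ := by
          by_cases hxa : x = a₀
          · exact ⟨0, by simp [hxa]⟩
          · exact hreach x (Finset.mem_erase.mpr ⟨hxa, hx⟩)
        have r2 : Reach (Pd (E₁ ++ e₀ :: E₂)) y a₀ := by
          by_cases hya : y = a₀
          · exact ⟨0, by simp [hya]⟩
          · exact hreach y (Finset.mem_erase.mpr ⟨hya, hy⟩)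
        exact reach_trans r1 (reach_symm hπmap hy r2)
    · -- deg x₀ = 1 as well: the component is a single edge
      have hdx1 : 0 < deg (E₁ ++ e₀ :: E₂) x₀ := by
        rw [deg]
        exact List.countP_pos_iff.mpr ⟨e₀, he₀E, by simpa using hx₀touch⟩
      have hzx : deg E₁ x₀ = 0 ∧ deg E₂ x₀ = 0 := by
        have := hsplit x₀ hx₀touch
        omega
      have hntx : ∀ e ∈ E₁ ++ E₂, ¬(x₀ = e.1 ∨ x₀ = e.2) := by
        intro e he
        rcases List.mem_append.mp he with he' | he'
        · simpa using List.countP_eq_zero.mp hzx.1 e he'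
        · simpa using List.countP_eq_zero.mp hzx.2 e he'
      have hSinv : ∀ e ∈ E₁ ++ e₀ :: E₂, (e.1 ∈ ({a₀, x₀} : Finset ℕ) ↔
          e.2 ∈ ({a₀, x₀} : Finset ℕ)) := by
        intro e he
        rcases List.mem_append.mp he with h | h
        · have h1 := hnt e (List.mem_append.mpr (Or.inl h))
          have h2 := hntx e (List.mem_append.mpr (Or.inl h))
          push_neg at h1 h2
          apply iff_of_false
          · simp only [Finset.mem_insert, Finset.mem_singleton]
            push_neg
            exact ⟨Ne.symm h1.1, Ne.symm h2.1⟩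
          · simp only [Finset.mem_insert, Finset.mem_singleton]
            push_neg
            exact ⟨Ne.symm h1.2, Ne.symm h2.2⟩
        · rcases List.mem_cons.mp h with rfl | h'
          · apply iff_of_true <;> simp only [Finset.mem_insert, Finset.mem_singleton]
            · rcases hends with ⟨h1, h2⟩ | ⟨h1, h2⟩
              · exact Or.inl h1.symm
              · exact Or.inr h2.symm
            · rcases hends with ⟨h1, h2⟩ | ⟨h1, h2⟩
              · exact Or.inr h2.symm
              · exact Or.inl h1.symm
          · have h1 := hnt e (List.mem_append.mpr (Or.inr h'))
            have h2 := hntx e (List.mem_append.mpr (Or.inr h'))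
            push_neg at h1 h2
            apply iff_of_false <;> simp only [Finset.mem_insert, Finset.mem_singleton] <;>
              push_neg
            · exact ⟨Ne.symm h1.1, Ne.symm h2.1⟩
            · exact ⟨Ne.symm h1.2, Ne.symm h2.2⟩
      have hOS : O = ({a₀, x₀} : Finset ℕ) := by
        apply Finset.Subset.antisymm
        · intro y hy
          exact (eqvgen_mem_iff hSinv (hconn a₀ ha₀O y hy)).mp (by simp)
        · intro y hy
          rcases Finset.mem_insert.mp hy with rfl | hy'
          · exact ha₀O
          · rw [Finset.mem_singleton.mp hy']; exact hx₀O
      have hOcard : O.card = 2 := by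
        rw [hOS, Finset.card_insert_of_notMem (by simpa using hax), Finset.card_singleton]
      have hE₁nil : E₁ = [] := by
        rw [List.eq_nil_iff_forall_not_mem]
        intro e he
        have h1 := hEO e (List.mem_append.mpr (Or.inl he))
        rw [hOS] at h1
        have := hnt e (List.mem_append.mpr (Or.inl he))
        have h2 := hntx e (List.mem_append.mpr (Or.inl he))
        push_neg at this h2
        rcases Finset.mem_insert.mp h1.1 with hh | hh
        · exact this.1 hh.symm
        · exact h2.1 (Finset.mem_singleton.mp hh).symm
      have hE₂nil : E₂ = [] := by
        rw [List.eq_nil_iff_forall_not_mem]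
        intro e he
        have h1 := hEO e (List.mem_append.mpr (Or.inr (List.mem_cons_of_mem _ he)))
        rw [hOS] at h1
        have := hnt e (List.mem_append.mpr (Or.inr he))
        have h2 := hntx e (List.mem_append.mpr (Or.inr he))
        push_neg at this h2
        rcases Finset.mem_insert.mp h1.1 with hh | hh
        · exact this.1 hh.symm
        · exact h2.1 (Finset.mem_singleton.mp hh).symm
      subst hE₁nil hE₂nil
      right
      have hm1 : m = 1 := by simpa using hlen.symm
      constructor
      · omega
      · have hPdE : Pd ([] ++ e₀ :: []) = Equiv.swap a₀ x₀ := by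
          simp [Pd, Sw, hswap]
        intro x hx y hy
        rw [hOS] at hx hy
        rw [hPdE]
        rcases Finset.mem_insert.mp hx with rfl | hx' <;>
          rcases Finset.mem_insert.mp hy with rfl | hy'
        · exact ⟨0, rfl⟩
        · rw [Finset.mem_singleton.mp hy']
          exact ⟨1, by rw [pow_one]; exact Equiv.swap_apply_left _ _⟩
        · rw [Finset.mem_singleton.mp hx']
          exact ⟨1, by rw [pow_one]; exact Equiv.swap_apply_right _ _⟩
        · rw [Finset.mem_singleton.mp hx', Finset.mem_singleton.mp hy']
          exact ⟨0, rfl⟩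

lemma sw_disjoint {f g : ℕ × ℕ}
    (h : f.1 ≠ g.1 ∧ f.1 ≠ g.2 ∧ f.2 ≠ g.1 ∧ f.2 ≠ g.2) (x : ℕ) :
    sw f x = x ∨ sw g x = x := by
  by_cases h1 : x = f.1
  · subst h1; right; exact sw_fix h.1 h.2.1
  · by_cases h2 : x = f.2
    · subst h2; right; exact sw_fix h.2.2.1 h.2.2.2
    · left; exact sw_fix h1 h2

lemma filter_length_split {α : Type*} (l : List α) (p : α → Bool) :
    (l.filter p).length + (l.filter (fun a => ¬ p a)).length = l.length := by
  induction l with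
  | nil => simp
  | cons a l ih =>
    by_cases hp : p a
    · rw [List.filter_cons_of_pos hp, List.filter_cons_of_neg (by simp [hp])]
      simp only [List.length_cons]
      omega
    · rw [List.filter_cons_of_neg hp, List.filter_cons_of_pos (by simp [hp])]
      simp only [List.length_cons]
      omega

lemma pairs_card {F : List (ℕ × ℕ)} (hd : Disj F) :
    ∀ {O : Finset ℕ}, (∀ f ∈ F, f.1 ≠ f.2) → (∀ f ∈ F, f.1 ∈ O ∧ f.2 ∈ O) →
    2 * F.length ≤ O.card := by
  induction F with
  | nil => intro O _ _; simp
  | cons f F ih =>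
    intro O hp hO
    have hpf : f.1 ≠ f.2 := hp f (by simp)
    have hhead := (List.pairwise_cons.mp hd).1
    have htail := (List.pairwise_cons.mp hd).2
    have h1 : ∀ g ∈ F, g.1 ∈ (O.erase f.1).erase f.2 ∧ g.2 ∈ (O.erase f.1).erase f.2 := by
      intro g hg
      have hR := hhead g hg
      have hgO := hO g (by simp [hg])
      exact ⟨Finset.mem_erase.mpr ⟨Ne.symm hR.2.2.1,
          Finset.mem_erase.mpr ⟨Ne.symm hR.1, hgO.1⟩⟩,
        Finset.mem_erase.mpr ⟨Ne.symm hR.2.2.2,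
          Finset.mem_erase.mpr ⟨Ne.symm hR.2.1, hgO.2⟩⟩⟩
    have h2 := ih htail (fun g hg => hp g (by simp [hg])) h1
    have hc1 : ((O.erase f.1).erase f.2).card + 1 = (O.erase f.1).card :=
      Finset.card_erase_add_one
        (Finset.mem_erase.mpr ⟨Ne.symm hpf, (hO f (by simp)).2⟩)
    have hc2 : (O.erase f.1).card + 1 = O.card :=
      Finset.card_erase_add_one (hO f (by simp)).1
    simp only [List.length_cons]
    omega

lemma outer (m : ℕ) : ∀ (E F : List (ℕ × ℕ)), E.length = m →
    (∀ e ∈ E, e.1 ≠ e.2) → (∀ f ∈ F, f.1 ≠ f.2) → Disj F →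
    (∀ e ∈ E, ∀ f ∈ F, sw e ≠ sw f) → Pd E = Pd F →
    2 * F.length ≤ m := by
  induction m using Nat.strong_induction_on with
  | _ m IH =>
  intro E F hlen hpE hpF hdF hne hprod
  classical
  rcases F with _ | ⟨f₀, F'⟩
  · simp
  have hf₀F : f₀ ∈ f₀ :: F' := by simp
  set F := f₀ :: F' with hFdef
  set a := f₀.1 with hadef
  set b := f₀.2 with hbdef
  have hab : a ≠ b := hpF f₀ hf₀F
  have hσa : Pd E a = b := by rw [hprod]; exact pd_fst hdF hf₀F
  have hσb : Pd E b = a := by rw [hprod]; exact pd_snd hdF hf₀F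
  -- the vertex set and the component of a
  set VS := (E.map Prod.fst ++ E.map Prod.snd).toFinset with hVSdef
  have hVS : ∀ x, x ∈ VS ↔ ∃ e ∈ E, x = e.1 ∨ x = e.2 := by
    intro x
    rw [hVSdef, List.mem_toFinset, List.mem_append]
    constructor
    · rintro (h | h)
      · obtain ⟨e, he, rfl⟩ := List.mem_map.mp h
        exact ⟨e, he, Or.inl rfl⟩
      · obtain ⟨e, he, rfl⟩ := List.mem_map.mp h
        exact ⟨e, he, Or.inr rfl⟩
    · rintro ⟨e, he, rfl | rfl⟩
      · exact Or.inl (List.mem_map.mpr ⟨e, he, rfl⟩)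
      · exact Or.inr (List.mem_map.mpr ⟨e, he, rfl⟩)
  set O := VS.filter (fun x => Relation.EqvGen (Step E) a x) with hOdef
  have hmemO : ∀ x, x ∈ O ↔ (x ∈ VS ∧ Relation.EqvGen (Step E) a x) := by
    intro x; rw [hOdef, Finset.mem_filter]
  have haVS : a ∈ VS := by
    rw [hVS]
    by_contra hno
    push_neg at hno
    have : Pd E a = a := pd_fix (by
      intro e he
      exact hno e he)
    rw [hσa] at this
    exact hab this.symm
  have haO : a ∈ O := (hmemO a).mpr ⟨haVS, Relation.EqvGen.refl a⟩
  have hInv : ∀ e ∈ E, (e.1 ∈ O ↔ e.2 ∈ O) := by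
    intro e he
    by_cases hp : e.1 = e.2
    · rw [hp]
    constructor
    · intro h1
      obtain ⟨hv, hc⟩ := (hmemO e.1).mp h1
      refine (hmemO e.2).mpr ⟨(hVS e.2).mpr ⟨e, he, Or.inr rfl⟩, ?_⟩
      exact Relation.EqvGen.trans _ _ _ hc
        (Relation.EqvGen.rel _ _ ⟨e, he, Or.inl ⟨rfl, rfl⟩⟩)
    · intro h2
      obtain ⟨hv, hc⟩ := (hmemO e.2).mp h2
      refine (hmemO e.1).mpr ⟨(hVS e.1).mpr ⟨e, he, Or.inl rfl⟩, ?_⟩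
      exact Relation.EqvGen.trans _ _ _ hc
        (Relation.EqvGen.rel _ _ ⟨e, he, Or.inr ⟨rfl, rfl⟩⟩)
  have hσmap : ∀ x ∈ O, Pd E x ∈ O := by
    apply prod_mapsTo
    intro τ hτ x hx
    obtain ⟨e, he, rfl⟩ := List.mem_map.mp hτ
    by_cases h1 : x = e.1
    · subst h1
      rw [sw, Equiv.swap_apply_left]
      exact (hInv e he).mp hx
    · by_cases h2 : x = e.2
      · subst h2
        rw [sw, Equiv.swap_apply_right]
        exact (hInv e he).mpr hx
      · rw [sw_fix h1 h2]; exact hx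
  -- split the edge list along the component
  set E₁ := E.filter (fun e => decide (e.1 ∈ O)) with hE₁def
  set E₂ := E.filter (fun e => ¬ (decide (e.1 ∈ O) : Bool)) with hE₂def
  have hE₁mem : ∀ e ∈ E₁, e ∈ E ∧ e.1 ∈ O := by
    intro e he
    have := List.mem_filter.mp he
    exact ⟨this.1, by simpa using this.2⟩
  have hE₂mem : ∀ e ∈ E₂, e ∈ E ∧ e.1 ∉ O := by
    intro e he
    have := List.mem_filter.mp he
    exact ⟨this.1, by simpa using this.2⟩
  have hE₁O : ∀ e ∈ E₁, e.1 ∈ O ∧ e.2 ∈ O := by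
    intro e he
    exact ⟨(hE₁mem e he).2, (hInv e (hE₁mem e he).1).mp (hE₁mem e he).2⟩
  have hE₂O : ∀ e ∈ E₂, e.1 ∉ O ∧ e.2 ∉ O := by
    intro e he
    refine ⟨(hE₂mem e he).2, fun h => (hE₂mem e he).2 ((hInv e (hE₂mem e he).1).mpr h)⟩
  have hcomm : ∀ e ∈ E, ∀ e' ∈ E, (fun e => decide (e.1 ∈ O)) e →
      ¬ (fun e => decide (e.1 ∈ O)) e' → Commute (sw e) (sw e') := by
    intro e he e' he' hp hp'
    simp only [decide_eq_true_eq] at hp hp'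
    apply Equiv.Perm.Disjoint.commute
    intro x
    by_cases hx : x ∈ O
    · right
      apply sw_fix
      · intro h; subst h; exact hp' hx
      · intro h; subst h; exact hp' ((hInv e' he').mpr hx)
    · left
      apply sw_fix
      · intro h; subst h; exact hx hp
      · intro h; subst h; exact hx ((hInv e he).mp hp)
  have hsplitE : Pd E = Pd E₁ * Pd E₂ := by
    rw [Pd, Pd, Pd, Sw, Sw, Sw, hE₁def, hE₂def]
    exact prod_filter_split E sw _ hcomm
  -- the two halves of the factor list
  set F₁ := F.filter (fun f => decide (f.1 ∈ O)) with hF₁def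
  set F₂ := F.filter (fun f => ¬ (decide (f.1 ∈ O) : Bool)) with hF₂def
  have hFinv : ∀ f ∈ F, (f.1 ∈ O ↔ f.2 ∈ O) := by
    intro f hf
    have h1 : Pd E f.1 = f.2 := by rw [hprod]; exact pd_fst hdF hf
    have h2 : Pd E f.2 = f.1 := by rw [hprod]; exact pd_snd hdF hf
    constructor
    · intro h; rw [← h1]; exact hσmap _ h
    · intro h; rw [← h2]; exact hσmap _ h
  have hF₁mem : ∀ f ∈ F₁, f ∈ F ∧ f.1 ∈ O := by
    intro f hf
    have := List.mem_filter.mp hf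
    exact ⟨this.1, by simpa using this.2⟩
  have hF₂mem : ∀ f ∈ F₂, f ∈ F ∧ f.1 ∉ O := by
    intro f hf
    have := List.mem_filter.mp hf
    exact ⟨this.1, by simpa using this.2⟩
  have hF₁O : ∀ f ∈ F₁, f.1 ∈ O ∧ f.2 ∈ O := by
    intro f hf
    exact ⟨(hF₁mem f hf).2, (hFinv f (hF₁mem f hf).1).mp (hF₁mem f hf).2⟩
  have hdF₁ : Disj F₁ := hdF.sublist List.filter_sublist
  have hdF₂ : Disj F₂ := hdF.sublist List.filter_sublist
  have hpF₁ : ∀ f ∈ F₁, f.1 ≠ f.2 := fun f hf => hpF f (hF₁mem f hf).1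
  have hpF₂ : ∀ f ∈ F₂, f.1 ≠ f.2 := fun f hf => hpF f (hF₂mem f hf).1
  -- Pd E₂ fixes O pointwise; Pd E₁ fixes the complement of O pointwise
  have hσ₂fix : ∀ x ∈ O, Pd E₂ x = x := by
    intro x hx
    apply prod_fix_all
    intro τ hτ
    obtain ⟨e, he, rfl⟩ := List.mem_map.mp hτ
    apply sw_fix
    · intro h; subst h; exact (hE₂O e he).1 hx
    · intro h; subst h; exact (hE₂O e he).2 hx
  have hσ₁fixout : ∀ x, x ∉ O → Pd E₁ x = x := by
    intro x hx
    apply pd_fix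
    intro e he
    exact ⟨fun h => hx (by rw [h]; exact (hE₁O e he).1),
      fun h => hx (by rw [h]; exact (hE₁O e he).2)⟩
  have hσ₁ : ∀ x ∈ O, Pd E₁ x = Pd E x := by
    intro x hx
    rw [hsplitE]
    simp only [Equiv.Perm.mul_apply]
    rw [hσ₂fix x hx]
  -- Pd E₁ = Pd F₁
  have hkey₁ : Pd E₁ = Pd F₁ := by
    apply Equiv.ext
    intro x
    by_cases hx : x ∈ O
    · rw [hσ₁ x hx, hprod]
      by_cases hxf : ∃ f ∈ F, x = f.1 ∨ x = f.2
      · obtain ⟨f, hf, hc⟩ := hxf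
        have hfF₁ : f ∈ F₁ := by
          rw [hF₁def]
          refine List.mem_filter.mpr ⟨hf, by
            simp only [decide_eq_true_eq]
            rcases hc with rfl | rfl
            · exact hx
            · exact (hFinv f hf).mpr hx⟩
        rcases hc with rfl | rfl
        · rw [pd_fst hdF hf, pd_fst hdF₁ hfF₁]
        · rw [pd_snd hdF hf, pd_snd hdF₁ hfF₁]
      · push_neg at hxf
        rw [pd_fix (fun f hf => hxf f hf), pd_fix (fun f hf => hxf f (hF₁mem f hf).1)]
    · rw [hσ₁fixout x hx]
      rw [pd_fix (fun f hf => ⟨fun h => hx (by rw [h]; exact (hF₁O f hf).1),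
        fun h => hx (by rw [h]; exact (hF₁O f hf).2)⟩)]
  -- Pd F = Pd F₁ * Pd F₂, hence Pd E₂ = Pd F₂
  have hdFsym : ∀ f ∈ F, ∀ g ∈ F, f ≠ g →
      f.1 ≠ g.1 ∧ f.1 ≠ g.2 ∧ f.2 ≠ g.1 ∧ f.2 ≠ g.2 := by
    have hsymm : Symmetric (fun p q : ℕ × ℕ =>
        p.1 ≠ q.1 ∧ p.1 ≠ q.2 ∧ p.2 ≠ q.1 ∧ p.2 ≠ q.2) := by
      intro p q h
      exact ⟨h.1.symm, h.2.2.1.symm, h.2.1.symm, h.2.2.2.symm⟩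
    intro f hf g hg hfg
    letI : Std.Symm (fun p q : ℕ × ℕ =>
        p.1 ≠ q.1 ∧ p.1 ≠ q.2 ∧ p.2 ≠ q.1 ∧ p.2 ≠ q.2) := ⟨fun a b h => hsymm h⟩
    exact List.Pairwise.forall hdF hf hg hfg
  have hsplitF : Pd F = Pd F₁ * Pd F₂ := by
    rw [Pd, Pd, Pd, Sw, Sw, Sw, hF₁def, hF₂def]
    apply prod_filter_split F sw _
    intro f hf g hg hp hp'
    simp only [decide_eq_true_eq] at hp hp'
    have hfg : f ≠ g := by rintro rfl; exact hp' hp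
    exact Equiv.Perm.Disjoint.commute (sw_disjoint (hdFsym f hf g hg hfg))
  have hkey₂ : Pd E₂ = Pd F₂ := by
    have h1 : Pd E₁ * Pd E₂ = Pd F₁ * Pd F₂ := by
      rw [← hsplitE, ← hsplitF, hprod]
    rw [hkey₁] at h1
    exact mul_left_cancel h1
  -- apply the core lemma to the component
  have htouchO : ∀ x ∈ O, ∃ e ∈ E₁, x = e.1 ∨ x = e.2 := by
    intro x hx
    obtain ⟨e, he, hc⟩ := (hVS x).mp ((hmemO x).mp hx).1
    have he1O : e.1 ∈ O := by
      rcases hc with rfl | rfl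
      · exact hx
      · exact (hInv e he).mpr hx
    exact ⟨e, List.mem_filter.mpr ⟨he, by simpa using he1O⟩, hc⟩
  have hconnO : ∀ x ∈ O, ∀ y ∈ O, Relation.EqvGen (Step E₁) x y := by
    intro x hx y hy
    have hcx := ((hmemO x).mp hx).2
    have hcy := ((hmemO y).mp hy).2
    have hxy : Relation.EqvGen (Step E) x y :=
      Relation.EqvGen.trans _ _ _ (Relation.EqvGen.symm _ _ hcx) hcy
    exact eqvgen_restrict hInv hxy hx
  have hpE₁ : ∀ e ∈ E₁, e.1 ≠ e.2 := fun e he => hpE e (hE₁mem e he).1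
  have hcore := core E₁.length E₁ rfl hpE₁ O hE₁O htouchO hconnO
  have hf₀F₁ : f₀ ∈ F₁ := List.mem_filter.mpr ⟨hf₀F, by simpa using haO⟩
  have hbound₁ : 2 * F₁.length ≤ E₁.length := by
    rcases hcore with hA | ⟨hB1, hB2⟩
    · exact le_trans (pairs_card hdF₁ hpF₁ hF₁O) hA
    · -- tree case is impossible
      exfalso
      have hbO : b ∈ O := by rw [← hσa]; exact hσmap a haO
      have hainv : Pd E₁ a = b := by
        rw [hkey₁]
        exact pd_fst hdF₁ hf₀F₁
      have hOab : O ⊆ {a, b} := by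
        intro y hy
        obtain ⟨k, hk⟩ := hB2 a haO y hy
        have := invol_pow (pd_invol hdF₁) k a
        rw [hkey₁] at hk
        rcases this with h | h
        · rw [hk] at h
          simp [h]
        · rw [hk] at h
          rw [← hkey₁] at h
          rw [hainv] at h
          simp [h]
      have hOeq : O = {a, b} := by
        apply Finset.Subset.antisymm hOab
        intro y hy
        rcases Finset.mem_insert.mp hy with rfl | hy'
        · exact haO
        · rw [Finset.mem_singleton.mp hy']; exact hbO
      have hOcard : O.card = 2 := by
        rw [hOeq, Finset.card_insert_of_notMem (by simpa using hab),
          Finset.card_singleton]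
      have hE₁len : E₁.length = 1 := by omega
      obtain ⟨e, hEe⟩ := List.length_eq_one_iff.mp hE₁len
      have hePd : Pd E₁ = sw e := by rw [hEe]; simp [Pd, Sw]
      have heE : e ∈ E := (hE₁mem e (by rw [hEe]; simp)).1
      have hswe : sw e a = b := by rw [← hePd, hainv]
      have hswe_isswap : (sw e).IsSwap := ⟨e.1, e.2, hpE e heE, rfl⟩
      have : sw e = Equiv.swap a (sw e a) :=
        isSwap_eq_swap hswe_isswap (by rw [hswe]; exact Ne.symm hab)
      rw [hswe] at this
      exact hne e heE f₀ hf₀F (by rw [this, sw, ← hadef, ← hbdef])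
  -- recurse on the rest
  have hlen_split : E₁.length + E₂.length = m := by
    rw [← hlen, hE₁def, hE₂def]
    exact filter_length_split E _
  have hE₁pos : 0 < E₁.length := by
    obtain ⟨e, he, _⟩ := htouchO a haO
    exact List.length_pos_iff.mpr (List.ne_nil_of_mem he)
  have hbound₂ : 2 * F₂.length ≤ E₂.length := by
    apply IH E₂.length (by omega) E₂ F₂ rfl
      (fun e he => hpE e (hE₂mem e he).1) hpF₂ hdF₂
      (fun e he f hf => hne e (hE₂mem e he).1 f (hF₂mem f hf).1) hkey₂
  have hFlen_split : F₁.length + F₂.length = F.length := by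
    rw [hF₁def, hF₂def]
    exact filter_length_split F _
  omega

lemma exists_pairs (l : List (Equiv.Perm ℕ)) (hsw : ∀ τ ∈ l, τ.IsSwap) :
    ∃ E : List (ℕ × ℕ), (∀ e ∈ E, e.1 ≠ e.2) ∧ l = Sw E := by
  induction l with
  | nil => exact ⟨[], by simp, by simp [Sw]⟩
  | cons τ l ih =>
    obtain ⟨E, hp, hE⟩ := ih (fun τ' hτ' => hsw τ' (by simp [hτ']))
    obtain ⟨u, v, huv, hτ⟩ := hsw τ (by simp)
    refine ⟨(u, v) :: E, ?_, ?_⟩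
    · intro e he
      rcases List.mem_cons.mp he with rfl | he'
      · exact huv
      · exact hp e he'
    · rw [Sw, List.map_cons, ← Sw, ← hE, hτ]
      rfl

lemma foldr_max_bound (L : List ℕ) (b : ℕ) :
    b ≤ L.foldr max b ∧ ∀ x ∈ L, x ≤ L.foldr max b := by
  induction L with
  | nil => simp
  | cons a L ih =>
    refine ⟨le_trans ih.1 (by simp [List.foldr_cons]), ?_⟩
    intro x hx
    rcases List.mem_cons.mp hx with rfl | hx'
    · simp
    · exact le_trans (ih.2 x hx') (by simp)

lemma extendDomain_swap_fin {N : ℕ} (i j : Fin N) :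
    (Equiv.swap i j).extendDomain (Fin.equivSubtype (n := N)) =
      Equiv.swap (i : ℕ) (j : ℕ) := by
  apply Equiv.ext
  intro x
  by_cases hx : x < N
  · have hsub := Equiv.Perm.extendDomain_apply_subtype (Equiv.swap i j)
      (Fin.equivSubtype (n := N)) (b := x) hx
    rw [hsub]
    have h1 : ((Fin.equivSubtype (n := N)).symm ⟨x, hx⟩) = ⟨x, hx⟩ := rfl
    rw [h1]
    have h2 : ∀ (z : Fin N), ((Fin.equivSubtype (n := N)) z : ℕ) = (z : ℕ) := fun z => rfl
    rw [h2]
    rcases eq_or_ne (⟨x, hx⟩ : Fin N) i with h | hi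
    · rw [h, Equiv.swap_apply_left]
      have : x = (i : ℕ) := by rw [← h]
      rw [this, Equiv.swap_apply_left]
    · rcases eq_or_ne (⟨x, hx⟩ : Fin N) j with h | hj
      · rw [h, Equiv.swap_apply_right]
        have : x = (j : ℕ) := by rw [← h]
        rw [this, Equiv.swap_apply_right]
      · rw [Equiv.swap_apply_of_ne_of_ne hi hj,
          Equiv.swap_apply_of_ne_of_ne
            (by simpa [Fin.ext_iff] using hi) (by simpa [Fin.ext_iff] using hj)]
  · have hsub := Equiv.Perm.extendDomain_apply_not_subtype (Equiv.swap i j)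
      (Fin.equivSubtype (n := N)) (b := x) hx
    rw [hsub]
    rw [Equiv.swap_apply_of_ne_of_ne]
    · intro h; exact hx (h ▸ i.isLt)
    · intro h; exact hx (h ▸ j.isLt)

lemma parity_eq (E F : List (ℕ × ℕ)) (hpE : ∀ e ∈ E, e.1 ≠ e.2)
    (hpF : ∀ f ∈ F, f.1 ≠ f.2) (h : Pd E = Pd F) :
    Even E.length ↔ Even F.length := by
  set N := ((E ++ F).map (fun e => max e.1 e.2)).foldr max 0 + 1 with hNdef
  have hNpos : 0 < N := by omega
  have hbnd : ∀ e ∈ E ++ F, e.1 < N ∧ e.2 < N := by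
    intro e he
    have := (foldr_max_bound ((E ++ F).map (fun e => max e.1 e.2)) 0).2
      (max e.1 e.2) (List.mem_map.mpr ⟨e, he, rfl⟩)
    constructor <;> omega
  set lift : (ℕ × ℕ) → Equiv.Perm (Fin N) := fun e =>
    Equiv.swap ⟨e.1 % N, Nat.mod_lt _ hNpos⟩ ⟨e.2 % N, Nat.mod_lt _ hNpos⟩ with hliftdef
  set φ := Equiv.Perm.extendDomainHom (Fin.equivSubtype (n := N)) with hφdef
  have hφapp : ∀ (π : Equiv.Perm (Fin N)), φ π = π.extendDomain Fin.equivSubtype :=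
    fun π => rfl
  have hlift_spec : ∀ e ∈ E ++ F, φ (lift e) = sw e := by
    intro e he
    rw [hφapp, hliftdef]
    rw [extendDomain_swap_fin]
    have h1 : e.1 % N = e.1 := Nat.mod_eq_of_lt (hbnd e he).1
    have h2 : e.2 % N = e.2 := Nat.mod_eq_of_lt (hbnd e he).2
    rw [sw]
    congr 1
  have htransfer : ∀ (L : List (ℕ × ℕ)), (∀ e ∈ L, e ∈ E ++ F) →
      φ ((L.map lift).prod) = Pd L := by
    intro L hL
    rw [map_list_prod, List.map_map, Pd, Sw]
    congr 1
    apply List.map_congr_left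
    intro e he
    exact hlift_spec e (hL e he)
  have hEeq : φ ((E.map lift).prod) = Pd E :=
    htransfer E (fun e he => List.mem_append.mpr (Or.inl he))
  have hFeq : φ ((F.map lift).prod) = Pd F :=
    htransfer F (fun e he => List.mem_append.mpr (Or.inr he))
  have hinj := Equiv.Perm.extendDomainHom_injective (Fin.equivSubtype (n := N))
  have hprodeq : (E.map lift).prod = (F.map lift).prod := by
    apply hinj
    rw [hEeq, hFeq, h]
  have hswE : ∀ g ∈ E.map lift, g.IsSwap := by
    intro g hg
    obtain ⟨e, he, rfl⟩ := List.mem_map.mp hg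
    refine ⟨_, _, ?_, rfl⟩
    have h1 : e.1 % N = e.1 := Nat.mod_eq_of_lt (hbnd e (List.mem_append.mpr (Or.inl he))).1
    have h2 : e.2 % N = e.2 := Nat.mod_eq_of_lt (hbnd e (List.mem_append.mpr (Or.inl he))).2
    simp only [ne_eq, Fin.ext_iff]
    rw [h1, h2]
    exact hpE e he
  have hswF : ∀ g ∈ F.map lift, g.IsSwap := by
    intro g hg
    obtain ⟨e, he, rfl⟩ := List.mem_map.mp hg
    refine ⟨_, _, ?_, rfl⟩
    have h1 : e.1 % N = e.1 := Nat.mod_eq_of_lt (hbnd e (List.mem_append.mpr (Or.inr he))).1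
    have h2 : e.2 % N = e.2 := Nat.mod_eq_of_lt (hbnd e (List.mem_append.mpr (Or.inr he))).2
    simp only [ne_eq, Fin.ext_iff]
    rw [h1, h2]
    exact hpF e he
  have hsign : ((-1 : ℤˣ)) ^ E.length = (-1) ^ F.length := by
    have e1 := Equiv.Perm.sign_prod_list_swap hswE
    have e2 := Equiv.Perm.sign_prod_list_swap hswF
    rw [List.length_map] at e1 e2
    rw [hprodeq, e2] at e1
    exact e1.symm
  have hne1 : (-1 : ℤˣ) ≠ 1 := by decide
  constructor
  · intro hE
    have : ((-1 : ℤˣ)) ^ F.length = 1 := by rw [← hsign, hE.neg_one_pow]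
    exact (neg_one_pow_eq_one_iff_even hne1).mp this
  · intro hF
    have : ((-1 : ℤˣ)) ^ E.length = 1 := by rw [hsign, hF.neg_one_pow]
    exact (neg_one_pow_eq_one_iff_even hne1).mp this

end UndoAux

/-- For every `r ≥ 2`, if a list of pairwise distinct transpositions, none equal
to any of the factors `(1 2), (3 4), ..., (2r-1, 2r)`, has product
`(1 2)(3 4)⋯(2r-1, 2r)`, then the list has length at least `2r + ε_r`, where
`ε_r = 0` if `r` is even and `ε_r = 1` if `r` is odd. -/
theorem length_ge_undo_r_disjoint_swaps (r : ℕ) (hr : 2 ≤ r)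
    (l : List (Equiv.Perm ℕ))
    (hsw : ∀ τ ∈ l, τ.IsSwap) (hnd : l.Nodup)
    (hne : ∀ τ ∈ l, ∀ i < r, τ ≠ Equiv.swap (2 * i + 1) (2 * i + 2))
    (hprod : l.prod =
      ((List.range r).map fun i => Equiv.swap (2 * i + 1) (2 * i + 2)).prod) :
    2 * r + (if Even r then 0 else 1) ≤ l.length := by
  obtain ⟨E, hpE, rfl⟩ := UndoAux.exists_pairs l hsw
  set F := (List.range r).map (fun i => (2 * i + 1, 2 * i + 2)) with hFdef
  have hpF : ∀ f ∈ F, f.1 ≠ f.2 := by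
    intro f hf
    obtain ⟨i, _, rfl⟩ := List.mem_map.mp hf
    simp
  have hdF : UndoAux.Disj F := by
    rw [UndoAux.Disj, hFdef, List.pairwise_map]
    apply List.Pairwise.imp ?_ (List.pairwise_lt_range (n := r))
    intro i j hij
    refine ⟨?_, ?_, ?_, ?_⟩ <;> simp <;> omega
  have hprodF : ((List.range r).map fun i => Equiv.swap (2 * i + 1) (2 * i + 2)).prod
      = UndoAux.Pd F := by
    rw [UndoAux.Pd, UndoAux.Sw, hFdef, List.map_map]
    rfl
  have hprod' : UndoAux.Pd E = UndoAux.Pd F := by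
    rw [UndoAux.Pd]
    rw [hprod, hprodF]
  have hneEF : ∀ e ∈ E, ∀ f ∈ F, UndoAux.sw e ≠ UndoAux.sw f := by
    intro e he f hf
    obtain ⟨i, hi, rfl⟩ := List.mem_map.mp hf
    have hmem : UndoAux.sw e ∈ UndoAux.Sw E := List.mem_map.mpr ⟨e, he, rfl⟩
    exact hne (UndoAux.sw e) hmem i (List.mem_range.mp hi)
  have hmain : 2 * F.length ≤ E.length :=
    UndoAux.outer E.length E F rfl hpE hpF hdF hneEF hprod'
  have hFlen : F.length = r := by simp [hFdef]
  have hpar := UndoAux.parity_eq E F hpE hpF hprod'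
  have hllen : (UndoAux.Sw E).length = E.length := List.length_map _
  rw [hllen]
  by_cases hreven : Even r
  · rw [if_pos hreven]
    omega
  · rw [if_neg hreven]
    have h1 : ¬ Even E.length := by
      intro h
      apply hreven
      rw [← hFlen]
      exact hpar.mp h
    rw [Nat.not_even_iff] at h1
    omega
end
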